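/- arXiv:2005.13533 — 13 statements merged into one kernel-verified Lean document; each statement's English description precedes it below -/
import Mathlib

section
/- Let n ≥ 1, let 𝒮 and 𝒯 be ℂ-linear maps from Matrix n n ℂ to itself such that 𝒯 is the adjoint of 𝒮 with respect to the Frobenius inner product ⟨A,B⟩ = tr(Aᴴ·B), let η > 0 and τ ≥ 0 be real, and let V₁, V₂ be positive definite matrices solving the Dyson equation (as in the context). Then tr V₁ = tr V₂. -/
open Matrix ComplexOrder

/-- Proposition 4.1 ("Behaviour of solution"), identity ⟨V₁⟩ = ⟨V₂⟩:
if `𝒯` is the adjoint of `𝒮` with respect to the Frobenius inner product and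
`V₁, V₂` are positive definite solutions of the Dyson equation, then
`tr V₁ = tr V₂`. -/
theorem dyson_trace_eq
    (n : ℕ) (hn : 1 ≤ n)
    (S T : Matrix (Fin n) (Fin n) ℂ →ₗ[ℂ] Matrix (Fin n) (Fin n) ℂ)
    (hadj : ∀ A B : Matrix (Fin n) (Fin n) ℂ,
      Matrix.trace (Aᴴ * S B) = Matrix.trace ((T A)ᴴ * B))
    (η τ : ℝ) (hη : 0 < η) (hτ : 0 ≤ τ)
    (V₁ V₂ : Matrix (Fin n) (Fin n) ℂ)
    (hV₁ : V₁.PosDef) (hV₂ : V₂.PosDef)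
    (hA : ((η : ℂ) • (1 : Matrix (Fin n) (Fin n) ℂ) + S V₂).PosDef)
    (hB : ((η : ℂ) • (1 : Matrix (Fin n) (Fin n) ℂ) + T V₁).PosDef)
    (hD1 : V₁⁻¹ = (η : ℂ) • (1 : Matrix (Fin n) (Fin n) ℂ) + S V₂
        + (τ : ℂ) • ((η : ℂ) • (1 : Matrix (Fin n) (Fin n) ℂ) + T V₁)⁻¹)
    (hD2 : V₂⁻¹ = (η : ℂ) • (1 : Matrix (Fin n) (Fin n) ℂ) + T V₁
        + (τ : ℂ) • ((η : ℂ) • (1 : Matrix (Fin n) (Fin n) ℂ) + S V₂)⁻¹) :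
    Matrix.trace V₁ = Matrix.trace V₂ := by
  set A : Matrix (Fin n) (Fin n) ℂ := (η : ℂ) • 1 + S V₂ with hAdef
  set B : Matrix (Fin n) (Fin n) ℂ := (η : ℂ) • 1 + T V₁ with hBdef
  -- determinants are units
  have hV₁d : IsUnit V₁.det := (Matrix.isUnit_iff_isUnit_det _).1 hV₁.isUnit
  have hV₂d : IsUnit V₂.det := (Matrix.isUnit_iff_isUnit_det _).1 hV₂.isUnit
  have hAd : IsUnit A.det := (Matrix.isUnit_iff_isUnit_det _).1 hA.isUnit
  have hBd : IsUnit B.det := (Matrix.isUnit_iff_isUnit_det _).1 hB.isUnit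
  -- key identities : B * V₁⁻¹ = B*A + τ•1, A * V₂⁻¹ = A*B + τ•1
  have h1 : B * V₁⁻¹ = B * A + (τ : ℂ) • 1 := by
    rw [hD1]
    rw [Matrix.mul_add, Matrix.mul_smul, Matrix.mul_nonsing_inv _ hBd]
  have h2 : A * V₂⁻¹ = A * B + (τ : ℂ) • 1 := by
    rw [hD2]
    rw [Matrix.mul_add, Matrix.mul_smul, Matrix.mul_nonsing_inv _ hAd]
  -- the τ-terms coincide
  have hXd : IsUnit (B * V₁⁻¹).det := by
    rw [Matrix.det_mul]
    exact hBd.mul ((Matrix.isUnit_nonsing_inv_det _ hV₁d))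
  have hBB : B * B⁻¹ = 1 := Matrix.mul_nonsing_inv _ hBd
  have hsim : B * A + (τ : ℂ) • 1 = B * (A * B + (τ : ℂ) • 1) * B⁻¹ := by
    have : B * (A * B + (τ : ℂ) • 1) * B⁻¹
        = B * A * (B * B⁻¹) + (τ : ℂ) • (B * B⁻¹) := by noncomm_ring
    rw [this, hBB, Matrix.mul_one]
  have htau : Matrix.trace (V₁ * B⁻¹) = Matrix.trace (V₂ * A⁻¹) := by
    have e1 : V₁ * B⁻¹ = (B * V₁⁻¹)⁻¹ := by
      rw [Matrix.mul_inv_rev, Matrix.nonsing_inv_nonsing_inv _ hV₁d]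
    have e2 : V₂ * A⁻¹ = (A * V₂⁻¹)⁻¹ := by
      rw [Matrix.mul_inv_rev, Matrix.nonsing_inv_nonsing_inv _ hV₂d]
    rw [e1, e2, h1, h2, hsim]
    rw [Matrix.mul_inv_rev, Matrix.mul_inv_rev]
    rw [Matrix.nonsing_inv_nonsing_inv _ hBd]
    rw [← Matrix.mul_assoc, Matrix.trace_mul_cycle,
      Matrix.nonsing_inv_mul _ hBd, Matrix.one_mul]
  -- the cross terms coincide
  have hV₁h : V₁ᴴ = V₁ := hV₁.isHermitian
  have hTV₁h : (T V₁)ᴴ = T V₁ := by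
    have hBh : Bᴴ = B := hB.isHermitian
    have : ((η : ℂ) • (1 : Matrix (Fin n) (Fin n) ℂ))ᴴ = (η : ℂ) • 1 := by
      rw [Matrix.conjTranspose_smul, Matrix.conjTranspose_one, Complex.star_def,
        Complex.conj_ofReal]
    have hTV : T V₁ = B - (η : ℂ) • 1 := by rw [hBdef]; abel
    rw [hTV, Matrix.conjTranspose_sub, hBh, this]
  have hcross : Matrix.trace (V₁ * S V₂) = Matrix.trace (V₂ * T V₁) := by
    calc Matrix.trace (V₁ * S V₂) = Matrix.trace (V₁ᴴ * S V₂) := by rw [hV₁h]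
      _ = Matrix.trace ((T V₁)ᴴ * V₂) := hadj V₁ V₂
      _ = Matrix.trace (T V₁ * V₂) := by rw [hTV₁h]
      _ = Matrix.trace (V₂ * T V₁) := Matrix.trace_mul_comm _ _
  -- main trace equations
  have main1 : (n : ℂ) = (η : ℂ) * Matrix.trace V₁ + Matrix.trace (V₁ * S V₂)
      + (τ : ℂ) * Matrix.trace (V₁ * B⁻¹) := by
    have : V₁ * V₁⁻¹ = 1 := Matrix.mul_nonsing_inv _ hV₁d
    calc (n : ℂ) = Matrix.trace (1 : Matrix (Fin n) (Fin n) ℂ) := by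
          simp [Matrix.trace_one]
      _ = Matrix.trace (V₁ * V₁⁻¹) := by rw [this]
      _ = _ := by
          rw [hD1, hAdef]
          rw [Matrix.mul_add, Matrix.mul_add, Matrix.mul_smul, Matrix.mul_smul,
            Matrix.mul_one, Matrix.trace_add, Matrix.trace_add, Matrix.trace_smul,
            Matrix.trace_smul]
          simp [smul_eq_mul]
  have main2 : (n : ℂ) = (η : ℂ) * Matrix.trace V₂ + Matrix.trace (V₂ * T V₁)
      + (τ : ℂ) * Matrix.trace (V₂ * A⁻¹) := by
    have : V₂ * V₂⁻¹ = 1 := Matrix.mul_nonsing_inv _ hV₂d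
    calc (n : ℂ) = Matrix.trace (1 : Matrix (Fin n) (Fin n) ℂ) := by
          simp [Matrix.trace_one]
      _ = Matrix.trace (V₂ * V₂⁻¹) := by rw [this]
      _ = _ := by
          rw [hD2, hBdef]
          rw [Matrix.mul_add, Matrix.mul_add, Matrix.mul_smul, Matrix.mul_smul,
            Matrix.mul_one, Matrix.trace_add, Matrix.trace_add, Matrix.trace_smul,
            Matrix.trace_smul]
          simp [smul_eq_mul]
  have hfin : (η : ℂ) * Matrix.trace V₁ = (η : ℂ) * Matrix.trace V₂ := by
    have := main1.symm.trans main2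
    rw [hcross, htau] at this
    exact add_right_cancel (add_right_cancel this)
  exact mul_left_cancel₀ (by exact_mod_cast hη.ne') hfin
end

section
/- Let n ≥ 1, let 𝒮 and 𝒯 be ℂ-linear maps from Matrix n n ℂ to itself, let η > 0 and τ ≥ 0 be real, and let V₁, V₂ be positive definite matrices solving the Dyson equation (as in the context). Then η·1 + 𝒮[V₂] = (η·1 + 𝒮[V₂])·V₁·(η·1 + 𝒮[V₂]) + τ·V₂, and symmetrically η·1 + 𝒯[V₁] = (η·1 + 𝒯[V₁])·V₂·(η·1 + 𝒯[V₁]) + τ·V₁. -/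
open Matrix ComplexOrder

lemma dyson_key {n : ℕ} (A B V₁ V₂ : Matrix (Fin n) (Fin n) ℂ) (τ : ℂ)
    (hA : IsUnit A.det) (hB : IsUnit B.det)
    (hV₁ : IsUnit V₁.det) (hV₂ : IsUnit V₂.det)
    (hD1 : V₁⁻¹ = A + τ • B⁻¹) (hD2 : V₂⁻¹ = B + τ • A⁻¹) :
    A = A * V₁ * A + τ • V₂ := by
  have hAinv : A⁻¹ * A = 1 := nonsing_inv_mul A hA
  have hBinv : B * B⁻¹ = 1 := mul_nonsing_inv B hB
  have hV1l : V₁⁻¹ * V₁ = 1 := nonsing_inv_mul V₁ hV₁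
  have hV1r : V₁ * V₁⁻¹ = 1 := mul_nonsing_inv V₁ hV₁
  have hAinv' : ∀ X, A⁻¹ * (A * X) = X := fun X => by rw [← mul_assoc, hAinv, one_mul]
  have hBinv' : ∀ X, B * (B⁻¹ * X) = X := fun X => by rw [← mul_assoc, hBinv, one_mul]
  have h1 : V₂⁻¹ * (A * (V₁ * B⁻¹)) = 1 := by
    rw [hD2]
    have e : (B + τ • A⁻¹) * (A * (V₁ * B⁻¹)) = B * (((A + τ • B⁻¹) * V₁) * B⁻¹) := by
      simp [add_mul, mul_add, smul_mul_assoc, mul_smul_comm, mul_assoc, hAinv', hBinv']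
    rw [e, ← hD1, hV1l, one_mul, hBinv]
  have h2 : A * (V₁ * B⁻¹) = V₂ := by
    have := inv_eq_right_inv h1
    rw [nonsing_inv_nonsing_inv V₂ hV₂] at this
    exact this.symm
  calc A = A * (V₁ * V₁⁻¹) := by rw [hV1r, mul_one]
    _ = A * (V₁ * (A + τ • B⁻¹)) := by rw [hD1]
    _ = A * V₁ * A + τ • (A * (V₁ * B⁻¹)) := by
        rw [mul_add, mul_smul_comm, mul_add, mul_smul_comm, mul_assoc]
    _ = A * V₁ * A + τ • V₂ := by rw [h2]

/-- The quadratic identity (3.5) derived from the Dyson equation: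
`η·1 + 𝒮[V₂] = (η·1 + 𝒮[V₂])·V₁·(η·1 + 𝒮[V₂]) + τ·V₂` and symmetrically with the
roles of the two equations interchanged. -/
theorem dyson_quadratic_identity
    (n : ℕ) (hn : 1 ≤ n)
    (S T : Matrix (Fin n) (Fin n) ℂ →ₗ[ℂ] Matrix (Fin n) (Fin n) ℂ)
    (η τ : ℝ) (hη : 0 < η) (hτ : 0 ≤ τ)
    (V₁ V₂ : Matrix (Fin n) (Fin n) ℂ)
    (hV₁ : V₁.PosDef) (hV₂ : V₂.PosDef)
    (hA : ((η : ℂ) • (1 : Matrix (Fin n) (Fin n) ℂ) + S V₂).PosDef)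
    (hB : ((η : ℂ) • (1 : Matrix (Fin n) (Fin n) ℂ) + T V₁).PosDef)
    (hD1 : V₁⁻¹ = (η : ℂ) • (1 : Matrix (Fin n) (Fin n) ℂ) + S V₂
        + (τ : ℂ) • ((η : ℂ) • (1 : Matrix (Fin n) (Fin n) ℂ) + T V₁)⁻¹)
    (hD2 : V₂⁻¹ = (η : ℂ) • (1 : Matrix (Fin n) (Fin n) ℂ) + T V₁
        + (τ : ℂ) • ((η : ℂ) • (1 : Matrix (Fin n) (Fin n) ℂ) + S V₂)⁻¹) :
    ((η : ℂ) • (1 : Matrix (Fin n) (Fin n) ℂ) + S V₂)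
        = ((η : ℂ) • (1 : Matrix (Fin n) (Fin n) ℂ) + S V₂) * V₁
            * ((η : ℂ) • (1 : Matrix (Fin n) (Fin n) ℂ) + S V₂) + (τ : ℂ) • V₂
      ∧ ((η : ℂ) • (1 : Matrix (Fin n) (Fin n) ℂ) + T V₁)
        = ((η : ℂ) • (1 : Matrix (Fin n) (Fin n) ℂ) + T V₁) * V₂
            * ((η : ℂ) • (1 : Matrix (Fin n) (Fin n) ℂ) + T V₁) + (τ : ℂ) • V₁ := by
  have hAu : IsUnit ((η : ℂ) • (1 : Matrix (Fin n) (Fin n) ℂ) + S V₂).det :=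
    hA.det_pos.ne'.isUnit
  have hBu : IsUnit ((η : ℂ) • (1 : Matrix (Fin n) (Fin n) ℂ) + T V₁).det :=
    hB.det_pos.ne'.isUnit
  exact ⟨dyson_key _ _ _ _ _ hAu hBu hV₁.det_pos.ne'.isUnit hV₂.det_pos.ne'.isUnit hD1 hD2,
    dyson_key _ _ _ _ _ hBu hAu hV₂.det_pos.ne'.isUnit hV₁.det_pos.ne'.isUnit hD2 hD1⟩
end

section
/- Let n ≥ 1, let 𝒮 and 𝒯 be ℂ-linear maps from Matrix n n ℂ to itself, let η > 0 and τ ≥ 0 be real, and let V₁, V₂ be positive definite matrices solving the Dyson equation (as in the context). Write A := η·1 + 𝒮[V₂] and B := η·1 + 𝒯[V₁]. Then the matrix τ·1 + B·A is invertible, and its inverse U := (τ·1 + B·A)⁻¹ satisfies: U = V₁·B⁻¹ = A⁻¹·V₂; moreover 1 = V₁·A + τ·U = B·V₂ + τ·U; and U = V₁·V₂ + τ·U². -/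
open Matrix ComplexOrder

/-- Identities (4.7), (4.8), (4.9) of the paper for
`U = (τ·1 + (η·1+𝒯V₁)(η·1+𝒮V₂))⁻¹`, the off-diagonal block of the solution of the
matrix Dyson equation. -/
theorem dyson_U_identities
    (n : ℕ) (hn : 1 ≤ n)
    (S T : Matrix (Fin n) (Fin n) ℂ →ₗ[ℂ] Matrix (Fin n) (Fin n) ℂ)
    (η τ : ℝ) (hη : 0 < η) (hτ : 0 ≤ τ)
    (V₁ V₂ : Matrix (Fin n) (Fin n) ℂ)
    (hV₁ : V₁.PosDef) (hV₂ : V₂.PosDef)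
    (hApos : ((η : ℂ) • (1 : Matrix (Fin n) (Fin n) ℂ) + S V₂).PosDef)
    (hBpos : ((η : ℂ) • (1 : Matrix (Fin n) (Fin n) ℂ) + T V₁).PosDef)
    (hD1 : V₁⁻¹ = (η : ℂ) • (1 : Matrix (Fin n) (Fin n) ℂ) + S V₂
        + (τ : ℂ) • ((η : ℂ) • (1 : Matrix (Fin n) (Fin n) ℂ) + T V₁)⁻¹)
    (hD2 : V₂⁻¹ = (η : ℂ) • (1 : Matrix (Fin n) (Fin n) ℂ) + T V₁
        + (τ : ℂ) • ((η : ℂ) • (1 : Matrix (Fin n) (Fin n) ℂ) + S V₂)⁻¹) :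
    ∀ A B U : Matrix (Fin n) (Fin n) ℂ,
      A = (η : ℂ) • (1 : Matrix (Fin n) (Fin n) ℂ) + S V₂ →
      B = (η : ℂ) • (1 : Matrix (Fin n) (Fin n) ℂ) + T V₁ →
      U = ((τ : ℂ) • (1 : Matrix (Fin n) (Fin n) ℂ) + B * A)⁻¹ →
      IsUnit ((τ : ℂ) • (1 : Matrix (Fin n) (Fin n) ℂ) + B * A)
        ∧ U = V₁ * B⁻¹
        ∧ U = A⁻¹ * V₂
        ∧ (1 : Matrix (Fin n) (Fin n) ℂ) = V₁ * A + (τ : ℂ) • U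
        ∧ (1 : Matrix (Fin n) (Fin n) ℂ) = B * V₂ + (τ : ℂ) • U
        ∧ U = V₁ * V₂ + (τ : ℂ) • U ^ 2 := by
  intro A B U hA hB hU
  have hAu : IsUnit A := hA ▸ hApos.isUnit
  have hBu : IsUnit B := hB ▸ hBpos.isUnit
  have hV₁u : IsUnit V₁ := hV₁.isUnit
  have hV₂u : IsUnit V₂ := hV₂.isUnit
  have hAd : IsUnit A.det := (Matrix.isUnit_iff_isUnit_det A).mp hAu
  have hBd : IsUnit B.det := (Matrix.isUnit_iff_isUnit_det B).mp hBu
  have hV₁d : IsUnit V₁.det := (Matrix.isUnit_iff_isUnit_det V₁).mp hV₁u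
  have hV₂d : IsUnit V₂.det := (Matrix.isUnit_iff_isUnit_det V₂).mp hV₂u
  have hD1' : V₁⁻¹ = A + (τ : ℂ) • B⁻¹ := by rw [hA, hB]; exact hD1
  have hD2' : V₂⁻¹ = B + (τ : ℂ) • A⁻¹ := by rw [hA, hB]; exact hD2
  have key : (τ : ℂ) • (1 : Matrix (Fin n) (Fin n) ℂ) + B * A = B * V₁⁻¹ := by
    rw [hD1', Matrix.mul_add, Matrix.mul_smul, Matrix.mul_nonsing_inv B hBd, add_comm]
  have key2 : (τ : ℂ) • (1 : Matrix (Fin n) (Fin n) ℂ) + B * A = V₂⁻¹ * A := by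
    rw [hD2', Matrix.add_mul, Matrix.smul_mul, Matrix.nonsing_inv_mul A hAd, add_comm]
  have hKu : IsUnit ((τ : ℂ) • (1 : Matrix (Fin n) (Fin n) ℂ) + B * A) := by
    rw [key]
    exact hBu.mul (Matrix.isUnit_nonsing_inv_iff.mpr hV₁u)
  have hU1 : U = V₁ * B⁻¹ := by
    rw [hU, key, Matrix.mul_inv_rev, Matrix.nonsing_inv_nonsing_inv V₁ hV₁d]
  have hU2 : U = A⁻¹ * V₂ := by
    rw [hU, key2, Matrix.mul_inv_rev, Matrix.nonsing_inv_nonsing_inv V₂ hV₂d]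
  have h47 : (1 : Matrix (Fin n) (Fin n) ℂ) = V₁ * A + (τ : ℂ) • U := by
    rw [hU1, ← Matrix.mul_smul, ← Matrix.mul_add, ← hD1',
      Matrix.mul_nonsing_inv V₁ hV₁d]
  have h48 : (1 : Matrix (Fin n) (Fin n) ℂ) = B * V₂ + (τ : ℂ) • U := by
    rw [hU2, ← Matrix.smul_mul, ← Matrix.add_mul, ← hD2',
      Matrix.nonsing_inv_mul V₂ hV₂d]
  refine ⟨hKu, hU1, hU2, h47, h48, ?_⟩
  have : V₁ * V₂ + (τ : ℂ) • U ^ 2 = (V₁ * A + (τ : ℂ) • U) * (A⁻¹ * V₂) := by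
    rw [hU2, sq]
    rw [Matrix.add_mul, Matrix.smul_mul, Matrix.mul_assoc V₁ A,
      ← Matrix.mul_assoc A, Matrix.mul_nonsing_inv A hAd, Matrix.one_mul]
  rw [this, ← h47, Matrix.one_mul, hU2]
end

section
/- Let n ≥ 1, let 𝒮 and 𝒯 be ℂ-linear maps from Matrix n n ℂ to itself, let η > 0 and τ ≥ 0 be real, and let V₁, V₂ be positive definite matrices solving the Dyson equation (as in the context). Assume in addition that the linear map τ·id − 𝒮 on Matrix n n ℂ is bijective and that its inverse (τ·id − 𝒮)⁻¹ maps positive semidefinite matrices to positive semidefinite matrices. Then η·(τ·id − 𝒮)⁻¹[1] − V₂ is positive semidefinite, i.e. V₂ ≤ η·(τ·id − 𝒮)⁻¹[1] in the Loewner order. -/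
open Matrix ComplexOrder
open scoped MatrixOrder


section Aux

variable {m : Type*} [Fintype m] [DecidableEq m]

lemma myPosDef_conj {A B : Matrix m m ℂ} (hA : A.PosDef) (hB : IsUnit B) :
    (Bᴴ * A * B).PosDef := by
  refine Matrix.PosDef.of_dotProduct_mulVec_pos (Matrix.isHermitian_conjTranspose_mul_mul B hA.1) fun x hx => ?_
  have hBx : B *ᵥ x ≠ 0 := fun h => hx <|
    (Matrix.mulVec_injective_iff_isUnit.2 hB) (h.trans (Matrix.mulVec_zero B).symm)
  simpa only [star_mulVec, dotProduct_mulVec, vecMul_vecMul] using hA.dotProduct_mulVec_pos hBx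

lemma mySmul_posDef {A : Matrix m m ℂ} (hA : A.PosDef) {r : ℝ} (hr : 0 < r) :
    ((r : ℂ) • A).PosDef := by
  refine Matrix.PosDef.of_dotProduct_mulVec_pos ?_ fun x hx => ?_
  · unfold Matrix.IsHermitian
    rw [conjTranspose_smul, hA.1]
    congr 1
    simp
  · rw [Matrix.smul_mulVec, dotProduct_smul, smul_eq_mul]
    exact mul_pos (by exact_mod_cast hr) (hA.dotProduct_mulVec_pos hx)

lemma mySmul_posSemidef {A : Matrix m m ℂ} (hA : A.PosSemidef) {r : ℝ} (hr : 0 ≤ r) :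
    ((r : ℂ) • A).PosSemidef := by
  refine Matrix.PosSemidef.of_dotProduct_mulVec_nonneg ?_ fun x => ?_
  · unfold Matrix.IsHermitian
    rw [conjTranspose_smul, hA.1]
    congr 1
    simp
  · rw [Matrix.smul_mulVec, dotProduct_smul, smul_eq_mul]
    exact mul_nonneg (by exact_mod_cast hr) (hA.dotProduct_mulVec_nonneg x)

/-- conjugating a posdef matrix by the sqrt of its inverse yields 1. -/
lemma myConj_sqrt_inv {M : Matrix m m ℂ} (hM : M.PosDef) :
    CFC.sqrt M⁻¹ * M * CFC.sqrt M⁻¹ = 1 := by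
  set G := CFC.sqrt M⁻¹ with hGdef
  have hGG : G * G = M⁻¹ := CFC.sqrt_mul_sqrt_self M⁻¹ hM.inv.posSemidef.nonneg
  have hMd : IsUnit M.det := hM.det_pos.ne'.isUnit
  have h1 : G * M⁻¹ = M⁻¹ * G := by rw [← hGG, mul_assoc]
  have hcomm : G * M = M * G := by
    have h2 : M * (G * M⁻¹) * M = M * (M⁻¹ * G) * M := by rw [h1]
    rw [mul_assoc M, mul_assoc G, Matrix.nonsing_inv_mul M hMd, mul_one,
      Matrix.mul_nonsing_inv_cancel_left M G hMd] at h2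
    exact h2.symm
  rw [hcomm, mul_assoc, hGG, Matrix.mul_nonsing_inv M hMd]

lemma myIsUnit_sqrt_inv {M : Matrix m m ℂ} (hM : M.PosDef) :
    IsUnit (CFC.sqrt M⁻¹) := by
  set G := CFC.sqrt M⁻¹ with hGdef
  have hGG : G * G = M⁻¹ := CFC.sqrt_mul_sqrt_self M⁻¹ hM.inv.posSemidef.nonneg
  rw [Matrix.isUnit_iff_isUnit_det]
  have hd : G.det * G.det = M⁻¹.det := by rw [← Matrix.det_mul, hGG]
  have hMinvd : IsUnit (M⁻¹.det) := hM.inv.det_pos.ne'.isUnit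
  exact isUnit_of_mul_isUnit_left (hd ▸ hMinvd)

lemma myOne_sub_inv {C : Matrix m m ℂ} (hC : C.PosDef) (h : (C - 1).PosSemidef) :
    (1 - C⁻¹).PosSemidef := by
  set E := CFC.sqrt C⁻¹ with hEdef
  have hEE : E * E = C⁻¹ := CFC.sqrt_mul_sqrt_self C⁻¹ hC.inv.posSemidef.nonneg
  have key : E * C * E = 1 := myConj_sqrt_inv hC
  have hEh : Eᴴ = E := (CFC.sqrt_nonneg C⁻¹).posSemidef.1
  have hconj := h.conjTranspose_mul_mul_same E
  rw [hEh] at hconj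
  have e : E * (C - 1) * E = 1 - C⁻¹ := by
    rw [Matrix.mul_sub, Matrix.sub_mul, key, mul_one, hEE]
  rwa [e] at hconj

/-- Loewner antitonicity of the inverse. -/
lemma myInv_antitone {M N : Matrix m m ℂ} (hM : M.PosDef) (hN : N.PosDef)
    (h : (N - M).PosSemidef) : (M⁻¹ - N⁻¹).PosSemidef := by
  set G := CFC.sqrt M⁻¹ with hGdef
  have hGG : G * G = M⁻¹ := CFC.sqrt_mul_sqrt_self M⁻¹ hM.inv.posSemidef.nonneg
  have hGh : Gᴴ = G := (CFC.sqrt_nonneg M⁻¹).posSemidef.1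
  have hGu : IsUnit G := myIsUnit_sqrt_inv hM
  have hGd : IsUnit G.det := (Matrix.isUnit_iff_isUnit_det G).mp hGu
  have hGMG : G * M * G = 1 := myConj_sqrt_inv hM
  have hCpd : (G * N * G).PosDef := by
    have := myPosDef_conj hN hGu
    rwa [hGh] at this
  have hC1 : (G * N * G - 1).PosSemidef := by
    have hconj := h.conjTranspose_mul_mul_same G
    rw [hGh] at hconj
    have e : G * (N - M) * G = G * N * G - 1 := by
      rw [Matrix.mul_sub, Matrix.sub_mul, hGMG]
    rwa [e] at hconj
  have hkey := myOne_sub_inv hCpd hC1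
  have hconj₂ := hkey.conjTranspose_mul_mul_same G
  rw [hGh] at hconj₂
  have hNd : IsUnit N.det := hN.det_pos.ne'.isUnit
  have hCinv : (G * N * G)⁻¹ = G⁻¹ * (N⁻¹ * G⁻¹) := by
    rw [Matrix.mul_inv_rev, Matrix.mul_inv_rev]
  have e₂ : G * (1 - (G * N * G)⁻¹) * G = M⁻¹ - N⁻¹ := by
    rw [hCinv, Matrix.mul_sub, Matrix.sub_mul, mul_one, hGG]
    congr 1
    rw [Matrix.mul_nonsing_inv_cancel_left G (N⁻¹ * G⁻¹) hGd,
      Matrix.nonsing_inv_mul_cancel_right G N⁻¹ hGd]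
  rwa [e₂] at hconj₂

end Aux

/-- Key step in the proof of Lemma 3.1: if `τ·id − 𝒮` is bijective with a
positivity-preserving inverse, then the solution `V₂` of the Dyson equation satisfies
`V₂ ≤ η·(τ·id − 𝒮)⁻¹[1]` in the Loewner order. -/
theorem dyson_V_small_outside
    (n : ℕ) (hn : 1 ≤ n)
    (S T : Matrix (Fin n) (Fin n) ℂ →ₗ[ℂ] Matrix (Fin n) (Fin n) ℂ)
    (η τ : ℝ) (hη : 0 < η) (hτ : 0 ≤ τ)
    (V₁ V₂ : Matrix (Fin n) (Fin n) ℂ)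
    (hV₁ : V₁.PosDef) (hV₂ : V₂.PosDef)
    (hApos : ((η : ℂ) • (1 : Matrix (Fin n) (Fin n) ℂ) + S V₂).PosDef)
    (hBpos : ((η : ℂ) • (1 : Matrix (Fin n) (Fin n) ℂ) + T V₁).PosDef)
    (hD1 : V₁⁻¹ = (η : ℂ) • (1 : Matrix (Fin n) (Fin n) ℂ) + S V₂
        + (τ : ℂ) • ((η : ℂ) • (1 : Matrix (Fin n) (Fin n) ℂ) + T V₁)⁻¹)
    (hD2 : V₂⁻¹ = (η : ℂ) • (1 : Matrix (Fin n) (Fin n) ℂ) + T V₁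
        + (τ : ℂ) • ((η : ℂ) • (1 : Matrix (Fin n) (Fin n) ℂ) + S V₂)⁻¹)
    (hbij : Function.Bijective
      (fun B : Matrix (Fin n) (Fin n) ℂ => (τ : ℂ) • B - S B))
    (hposinv : ∀ B : Matrix (Fin n) (Fin n) ℂ,
      ((τ : ℂ) • B - S B).PosSemidef → B.PosSemidef) :
    ∀ W : Matrix (Fin n) (Fin n) ℂ,
      (τ : ℂ) • W - S W = (1 : Matrix (Fin n) (Fin n) ℂ) →
      ((η : ℂ) • W - V₂).PosSemidef := by
  intro W hW
  set A : Matrix (Fin n) (Fin n) ℂ := (η : ℂ) • 1 + S V₂ with hAdef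
  have hSW : S W = (τ : ℂ) • W - 1 := by rw [← hW]; module
  have e : (τ : ℂ) • ((η : ℂ) • W - V₂) - S ((η : ℂ) • W - V₂)
      = A - (τ : ℂ) • V₂ := by
    rw [map_sub, _root_.map_smul, hSW, hAdef]
    module
  have key : (A - (τ : ℂ) • V₂).PosSemidef := by
    rcases eq_or_lt_of_le hτ with h0 | h0
    · have hz : ((τ : ℂ) • V₂) = 0 := by rw [← h0]; simp
      rw [hz, sub_zero]
      exact hApos.posSemidef
    · have hτC : (τ : ℂ) ≠ 0 := by exact_mod_cast h0.ne'
      have hMpd : ((τ : ℂ) • A⁻¹).PosDef := mySmul_posDef hApos.inv h0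
      have hdiff : (V₂⁻¹ - (τ : ℂ) • A⁻¹).PosSemidef := by
        rw [hD2]
        simpa using hBpos.posSemidef
      have hanti := myInv_antitone hMpd hV₂.inv hdiff
      have hV₂d : IsUnit V₂.det := hV₂.det_pos.ne'.isUnit
      have hAd : IsUnit A.det := hApos.det_pos.ne'.isUnit
      have hinv1 : (V₂⁻¹)⁻¹ = V₂ := Matrix.nonsing_inv_nonsing_inv V₂ hV₂d
      have hinv2 : ((τ : ℂ) • A⁻¹)⁻¹ = (τ : ℂ)⁻¹ • A := by
        apply Matrix.inv_eq_right_inv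
        rw [Matrix.smul_mul, Matrix.mul_smul, smul_smul, mul_inv_cancel₀ hτC,
          one_smul, Matrix.nonsing_inv_mul A hAd]
      rw [hinv1, hinv2] at hanti
      have hfin := mySmul_posSemidef hanti hτ
      have e2 : (τ : ℂ) • ((τ : ℂ)⁻¹ • A - V₂) = A - (τ : ℂ) • V₂ := by
        rw [smul_sub, smul_smul, mul_inv_cancel₀ hτC, one_smul]
      rwa [e2] at hfin
  exact hposinv _ (by rw [e]; exact key)
end

section
/- Let d ≥ 1, equip ℂ^d with its standard inner product ⟪·,·⟫ (conjugate-linear in the first argument), and let ‖·‖_# be an arbitrary norm on ℂ^d. Let ε ∈ (0,1), A ∈ Matrix d d ℂ, α ∈ ℂ with |α| ≤ ε, and a, p, b ∈ ℂ^d satisfy: A·a = α·a, ‖a‖_# = 1, ⟪p, a⟫ = 1, |⟪a, b⟫| ≥ 2ε, |⟪b, w⟫| ≤ ‖w‖_# for all w ∈ ℂ^d, and ‖A·w‖_# ≥ ‖w‖_# for all w ∈ ℂ^d with ⟪p, w⟫ = 0. Then for every w ∈ ℂ^d with ⟪b, w⟫ = 0 one has ‖A·w‖_# ≥ (ε/3)·‖w‖_#.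 -/
open Matrix

/-- The Twist Lemma (Lemma C.1 of the paper): if `A` has an isolated small
eigenvalue `α` with eigenvector `a`, spectral projection `w ↦ ⟪p,w⟫·a`, and `A` is
bounded below on `p^⊥`, then `A` is bounded below (with constant `ε/3`) on the
twisted hyperplane `b^⊥`. Here `⟪x,y⟫ = Σᵢ conj(xᵢ)·yᵢ` is the standard inner
product and `N` is an arbitrary norm on `ℂ^d`. -/
theorem twist_lemma
    (d : ℕ) (hd : 1 ≤ d)
    (N : (Fin d → ℂ) → ℝ)
    (hNadd : ∀ x y : Fin d → ℂ, N (x + y) ≤ N x + N y)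
    (hNsmul : ∀ (c : ℂ) (x : Fin d → ℂ), N (c • x) = ‖c‖ * N x)
    (hNdef : ∀ x : Fin d → ℂ, N x = 0 → x = 0)
    (ε : ℝ) (hε : ε ∈ Set.Ioo (0 : ℝ) 1)
    (A : Matrix (Fin d) (Fin d) ℂ) (α : ℂ) (hα : ‖α‖ ≤ ε)
    (a p b : Fin d → ℂ)
    (ha : A.mulVec a = α • a)
    (hNa : N a = 1)
    (hpa : star p ⬝ᵥ a = 1)
    (hab : 2 * ε ≤ ‖star a ⬝ᵥ b‖)
    (hb : ∀ w : Fin d → ℂ, ‖star b ⬝ᵥ w‖ ≤ N w)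
    (hlow : ∀ w : Fin d → ℂ, star p ⬝ᵥ w = 0 → N w ≤ N (A.mulVec w)) :
    ∀ w : Fin d → ℂ, star b ⬝ᵥ w = 0 → (ε / 3) * N w ≤ N (A.mulVec w) := by
  intro w hw
  obtain ⟨hε0, hε1⟩ := hε
  set c : ℂ := star p ⬝ᵥ w with hc
  set u : Fin d → ℂ := w - c • a with hu
  have hN0 : N 0 = 0 := by simpa using hNsmul 0 0
  have hNneg : ∀ x, N (-x) = N x := by
    intro x; simpa using hNsmul (-1) x
  have hNnonneg : ∀ x, 0 ≤ N x := by
    intro x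
    have h := hNadd x (-x)
    rw [hNneg] at h
    simp only [add_neg_cancel, hN0] at h
    linarith
  have hpu : star p ⬝ᵥ u = 0 := by
    simp [hu, dotProduct_sub, dotProduct_smul, hpa, smul_eq_mul, ← hc]
  have hw' : w = u + c • a := by simp [hu]
  have hbu : star b ⬝ᵥ u = - (c * (star b ⬝ᵥ a)) := by
    have h1 : star b ⬝ᵥ w = star b ⬝ᵥ u + c * (star b ⬝ᵥ a) := by
      rw [hw']
      simp [dotProduct_add, dotProduct_smul, smul_eq_mul]
    rw [hw] at h1
    linear_combination -h1
  have hba : ‖star b ⬝ᵥ a‖ = ‖star a ⬝ᵥ b‖ := by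
    have : star a ⬝ᵥ b = star (star b ⬝ᵥ a) := by
      simp [dotProduct, Finset.sum_comm, mul_comm, star_sum]
    rw [this, norm_star]
  have hcb : ‖c‖ * (2 * ε) ≤ N u := by
    have h1 : ‖star b ⬝ᵥ u‖ ≤ N u := hb u
    rw [hbu, norm_neg, norm_mul, hba] at h1
    have h2 : ‖c‖ * (2 * ε) ≤ ‖c‖ * ‖star a ⬝ᵥ b‖ :=
      mul_le_mul_of_nonneg_left hab (norm_nonneg c)
    linarith
  have hNw : N w ≤ N u + ‖c‖ := by
    have := hNadd u (c • a)
    rw [hNsmul, hNa, mul_one] at this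
    rw [hw']; exact this
  have hAu : A.mulVec u = A.mulVec w - c • (α • a) := by
    rw [hu, Matrix.mulVec_sub, Matrix.mulVec_smul, ha]
  have hNAu : N (A.mulVec u) ≤ N (A.mulVec w) + ‖c‖ * ‖α‖ := by
    rw [hAu, sub_eq_add_neg]
    have h1 := hNadd (A.mulVec w) (-(c • (α • a)))
    rw [hNneg, hNsmul, hNsmul, hNa, mul_one] at h1
    exact h1
  have hNu : N u ≤ N (A.mulVec w) + ‖c‖ * ε := by
    have h1 := hlow u hpu
    have h2 : ‖c‖ * ‖α‖ ≤ ‖c‖ * ε := mul_le_mul_of_nonneg_left hα (norm_nonneg c)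
    linarith
  have hc2 : ‖c‖ * ε ≤ N u / 2 := by nlinarith [norm_nonneg c]
  have hhalf : N u / 2 ≤ N (A.mulVec w) := by linarith
  nlinarith [hNnonneg u, norm_nonneg c, mul_le_mul_of_nonneg_left hNw (le_of_lt hε0)]
end

section
/- Let d ≥ 1 and let N_# and N_+ be two norms on ℂ^d; for a matrix A ∈ Matrix d d ℂ let ‖A‖_{α→β} := sup { N_β(A·v) : N_α(v) ≤ 1 } denote the induced operator norms. Let B ∈ Matrix d d ℂ and C > 0 satisfy ‖B‖_{#→#} + ‖B‖_{#→+}·‖B‖_{+→#} ≤ C. Then for every ξ ∈ ℂ with ξ ≠ 0 such that B − ξ·1 is invertible, one has ‖(B − ξ·1)⁻¹‖_{#→#} ≤ 1/|ξ| + (C/|ξ|²)·(1 + ‖(B − ξ·1)⁻¹‖_{+→+}). -/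
open Matrix

/-- The operator norm of a matrix `A : ℂ^d → ℂ^d`, where the domain is equipped with
the norm `N1` and the codomain with the norm `N2`. -/
noncomputable def inducedOpNorm (d : ℕ) (N1 N2 : (Fin d → ℂ) → ℝ)
    (A : Matrix (Fin d) (Fin d) ℂ) : ℝ :=
  sSup {r : ℝ | ∃ v : Fin d → ℂ, N1 v ≤ 1 ∧ r = N2 (A.mulVec v)}


section smoothing_aux
variable {d : ℕ}

variable {d : ℕ}

lemma nz {N : (Fin d → ℂ) → ℝ} (hsmul : ∀ (c : ℂ) x, N (c • x) = ‖c‖ * N x) : N 0 = 0 := by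
  have := hsmul 0 0; simpa using this

lemma nneg {N : (Fin d → ℂ) → ℝ} (hadd : ∀ x y, N (x + y) ≤ N x + N y)
    (hsmul : ∀ (c : ℂ) x, N (c • x) = ‖c‖ * N x) (x : Fin d → ℂ) : 0 ≤ N x := by
  have h2 : N (-x) = N x := by have := hsmul (-1) x; simpa using this
  have h1 : N (x + (-x)) ≤ N x + N (-x) := hadd x (-x)
  have h0 : N 0 = 0 := nz hsmul
  simp only [add_neg_cancel, h0, h2] at h1
  linarith

lemma nsum {N : (Fin d → ℂ) → ℝ} (hadd : ∀ x y, N (x + y) ≤ N x + N y)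
    (hsmul : ∀ (c : ℂ) x, N (c • x) = ‖c‖ * N x) {ι : Type*} (s : Finset ι)
    (f : ι → (Fin d → ℂ)) : N (∑ i ∈ s, f i) ≤ ∑ i ∈ s, N (f i) := by
  classical
  induction s using Finset.cons_induction with
  | empty => simp [nz hsmul]
  | cons a s ha ih =>
    rw [Finset.sum_cons, Finset.sum_cons]
    exact le_trans (hadd _ _) (by linarith)

lemma nupper {N : (Fin d → ℂ) → ℝ} (hadd : ∀ x y, N (x + y) ≤ N x + N y)
    (hsmul : ∀ (c : ℂ) x, N (c • x) = ‖c‖ * N x) :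
    ∃ c : ℝ, 0 ≤ c ∧ ∀ x, N x ≤ c * ‖x‖ := by
  refine ⟨∑ i, N (Pi.single i 1), Finset.sum_nonneg fun i _ => nneg hadd hsmul _, fun x => ?_⟩
  have hx : x = ∑ i, x i • (Pi.single i 1 : Fin d → ℂ) := by
    funext j
    simp [Finset.sum_apply, Pi.single_apply, Finset.sum_ite_eq', mul_comm]
  calc N x ≤ ∑ i, N (x i • (Pi.single i 1 : Fin d → ℂ)) := by
        conv_lhs => rw [hx]
        exact nsum hadd hsmul _ _
    _ ≤ ∑ i, N (Pi.single i 1) * ‖x‖ := by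
        refine Finset.sum_le_sum fun i _ => ?_
        rw [hsmul]
        calc ‖x i‖ * N (Pi.single i 1) ≤ ‖x‖ * N (Pi.single i 1) :=
              mul_le_mul_of_nonneg_right (norm_le_pi_norm x i) (nneg hadd hsmul _)
          _ = N (Pi.single i 1) * ‖x‖ := mul_comm _ _
    _ = (∑ i, N (Pi.single i 1)) * ‖x‖ := by rw [Finset.sum_mul]

lemma ncont {N : (Fin d → ℂ) → ℝ} (hadd : ∀ x y, N (x + y) ≤ N x + N y)
    (hsmul : ∀ (c : ℂ) x, N (c • x) = ‖c‖ * N x) : Continuous N := by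
  obtain ⟨c, hc0, hc⟩ := nupper hadd hsmul
  have hneg : ∀ y : Fin d → ℂ, N (-y) = N y := fun y => by
    have := hsmul (-1) y; simpa using this
  have key : ∀ x y, dist (N x) (N y) ≤ c * dist x y := by
    intro x y
    rw [Real.dist_eq, dist_eq_norm, abs_sub_le_iff]
    have h1 : N x ≤ N y + N (x - y) := by
      have := hadd y (x - y); simpa using this
    have h2 : N y ≤ N x + N (x - y) := by
      have := hadd x (y - x)
      simp only [add_sub_cancel] at this
      have e : N (y - x) = N (x - y) := by rw [← hneg (x - y)]; congr 1; abel
      linarith [e ▸ this]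
    have := hc (x - y)
    constructor <;> linarith
  exact (LipschitzWith.of_dist_le_mul (K := ⟨c, hc0⟩) key).continuous

lemma nlower (hd : 1 ≤ d) {N : (Fin d → ℂ) → ℝ} (hadd : ∀ x y, N (x + y) ≤ N x + N y)
    (hsmul : ∀ (c : ℂ) x, N (c • x) = ‖c‖ * N x) (hdef : ∀ x, N x = 0 → x = 0) :
    ∃ m : ℝ, 0 < m ∧ ∀ x, m * ‖x‖ ≤ N x := by
  have hcont := ncont hadd hsmul
  have hS : IsCompact (Metric.sphere (0 : Fin d → ℂ) 1) := isCompact_sphere 0 1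
  have hne : (Metric.sphere (0 : Fin d → ℂ) 1).Nonempty := by
    refine ⟨(Pi.single ⟨0, hd⟩ 1 : Fin d → ℂ), ?_⟩
    simp [Metric.mem_sphere, dist_zero_right, Pi.norm_single]
  obtain ⟨x0, hx0S, hmin'⟩ := hS.exists_isMinOn hne hcont.continuousOn
  have hmin : ∀ y ∈ Metric.sphere (0 : Fin d → ℂ) 1, N x0 ≤ N y := fun y hy => hmin' hy
  have hx0norm : ‖x0‖ = 1 := by simpa [Metric.mem_sphere, dist_zero_right] using hx0S
  have hx0ne : x0 ≠ 0 := by intro h; rw [h] at hx0norm; simp at hx0norm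
  have hm : 0 < N x0 := by
    rcases lt_or_eq_of_le (nneg hadd hsmul x0) with h | h
    · exact h
    · exact absurd (hdef x0 h.symm) hx0ne
  refine ⟨N x0, hm, fun x => ?_⟩
  rcases eq_or_ne x 0 with rfl | hx
  · simp [nz hsmul, nneg hadd hsmul]
  · have hxn : (0:ℝ) < ‖x‖ := norm_pos_iff.mpr hx
    set u : Fin d → ℂ := ((‖x‖ : ℂ))⁻¹ • x with hu
    have hun : ‖u‖ = 1 := by
      rw [hu, norm_smul]
      simp [norm_inv, hxn.ne', inv_mul_cancel₀ hxn.ne']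
    have huS : u ∈ Metric.sphere (0 : Fin d → ℂ) 1 := by
      simp [Metric.mem_sphere, dist_zero_right, hun]
    have := hmin u huS
    rw [hu, hsmul] at this
    have hnormc : ‖((‖x‖ : ℂ))⁻¹‖ = ‖x‖⁻¹ := by
      simp [norm_inv, Complex.norm_real, abs_of_pos hxn]
    rw [hnormc] at this
    calc N x0 * ‖x‖ ≤ (‖x‖⁻¹ * N x) * ‖x‖ := by nlinarith
      _ = N x := by field_simp

section opnorm

variable {N1 N2 : (Fin d → ℂ) → ℝ} {A : Matrix (Fin d) (Fin d) ℂ}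

lemma opSet_nonempty (hsmul1 : ∀ (c : ℂ) x, N1 (c • x) = ‖c‖ * N1 x)
    (hsmul2 : ∀ (c : ℂ) x, N2 (c • x) = ‖c‖ * N2 x) :
    (0:ℝ) ∈ {r : ℝ | ∃ v : Fin d → ℂ, N1 v ≤ 1 ∧ r = N2 (A.mulVec v)} :=
  ⟨0, by rw [nz hsmul1]; norm_num, by rw [mulVec_zero, nz hsmul2]⟩

lemma opSet_bdd (hd : 1 ≤ d)
    (hadd1 : ∀ x y, N1 (x + y) ≤ N1 x + N1 y)
    (hsmul1 : ∀ (c : ℂ) x, N1 (c • x) = ‖c‖ * N1 x)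
    (hdef1 : ∀ x, N1 x = 0 → x = 0)
    (hadd2 : ∀ x y, N2 (x + y) ≤ N2 x + N2 y)
    (hsmul2 : ∀ (c : ℂ) x, N2 (c • x) = ‖c‖ * N2 x) :
    BddAbove {r : ℝ | ∃ v : Fin d → ℂ, N1 v ≤ 1 ∧ r = N2 (A.mulVec v)} := by
  obtain ⟨m, hm, hml⟩ := nlower hd hadd1 hsmul1 hdef1
  have gadd : ∀ x y, N2 (A.mulVec (x + y)) ≤ N2 (A.mulVec x) + N2 (A.mulVec y) := by
    intro x y; rw [mulVec_add]; exact hadd2 _ _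
  have gsmul : ∀ (c : ℂ) x, N2 (A.mulVec (c • x)) = ‖c‖ * N2 (A.mulVec x) := by
    intro c x; rw [mulVec_smul]; exact hsmul2 _ _
  obtain ⟨cg, hcg, hcgl⟩ := nupper (N := fun v => N2 (A.mulVec v)) gadd gsmul
  refine ⟨cg / m, ?_⟩
  rintro r ⟨v, hv, rfl⟩
  have h1 : ‖v‖ ≤ 1 / m := by
    have := hml v
    rw [le_div_iff₀ hm]
    nlinarith
  calc N2 (A.mulVec v) ≤ cg * ‖v‖ := hcgl v
    _ ≤ cg * (1 / m) := mul_le_mul_of_nonneg_left h1 hcg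
    _ = cg / m := by ring

lemma le_opNorm (hd : 1 ≤ d)
    (hadd1 : ∀ x y, N1 (x + y) ≤ N1 x + N1 y)
    (hsmul1 : ∀ (c : ℂ) x, N1 (c • x) = ‖c‖ * N1 x)
    (hdef1 : ∀ x, N1 x = 0 → x = 0)
    (hadd2 : ∀ x y, N2 (x + y) ≤ N2 x + N2 y)
    (hsmul2 : ∀ (c : ℂ) x, N2 (c • x) = ‖c‖ * N2 x)
    (v : Fin d → ℂ) :
    N2 (A.mulVec v) ≤ inducedOpNorm d N1 N2 A * N1 v := by
  have hbdd := opSet_bdd (A := A) hd hadd1 hsmul1 hdef1 hadd2 hsmul2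
  rcases eq_or_ne v 0 with rfl | hv
  · rw [mulVec_zero, nz hsmul2, nz hsmul1, mul_zero]
  · have hv1 : 0 < N1 v := by
      rcases lt_or_eq_of_le (nneg hadd1 hsmul1 v) with h | h
      · exact h
      · exact absurd (hdef1 v h.symm) hv
    set c : ℂ := ((N1 v : ℝ) : ℂ)⁻¹ with hc
    have hnc : ‖c‖ = (N1 v)⁻¹ := by
      rw [hc, norm_inv, Complex.norm_real, Real.norm_eq_abs, abs_of_pos hv1]
    have hmem : N2 (A.mulVec (c • v)) ∈
        {r : ℝ | ∃ w : Fin d → ℂ, N1 w ≤ 1 ∧ r = N2 (A.mulVec w)} := by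
      refine ⟨c • v, ?_, rfl⟩
      rw [hsmul1, hnc, inv_mul_cancel₀ hv1.ne']
    have hle := le_csSup hbdd hmem
    rw [mulVec_smul, hsmul2, hnc] at hle
    rw [inducedOpNorm] at *
    calc N2 (A.mulVec v) = ((N1 v)⁻¹ * N2 (A.mulVec v)) * N1 v := by field_simp
      _ ≤ _ := mul_le_mul_of_nonneg_right hle hv1.le

lemma opNorm_nonneg (hd : 1 ≤ d)
    (hadd1 : ∀ x y, N1 (x + y) ≤ N1 x + N1 y)
    (hsmul1 : ∀ (c : ℂ) x, N1 (c • x) = ‖c‖ * N1 x)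
    (hdef1 : ∀ x, N1 x = 0 → x = 0)
    (hadd2 : ∀ x y, N2 (x + y) ≤ N2 x + N2 y)
    (hsmul2 : ∀ (c : ℂ) x, N2 (c • x) = ‖c‖ * N2 x) :
    0 ≤ inducedOpNorm d N1 N2 A :=
  le_csSup (opSet_bdd hd hadd1 hsmul1 hdef1 hadd2 hsmul2) (opSet_nonempty hsmul1 hsmul2)

lemma opNorm_le {M : ℝ}
    (hsmul1 : ∀ (c : ℂ) x, N1 (c • x) = ‖c‖ * N1 x)
    (hsmul2 : ∀ (c : ℂ) x, N2 (c • x) = ‖c‖ * N2 x)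
    (hM : ∀ v, N1 v ≤ 1 → N2 (A.mulVec v) ≤ M) :
    inducedOpNorm d N1 N2 A ≤ M := by
  refine csSup_le ⟨0, opSet_nonempty hsmul1 hsmul2⟩ ?_
  rintro r ⟨v, hv, rfl⟩
  exact hM v hv

end opnorm

lemma resolvent_identity (B : Matrix (Fin d) (Fin d) ℂ) (ξ : ℂ) (hξ : ξ ≠ 0)
    (hinv : IsUnit (B - ξ • (1 : Matrix (Fin d) (Fin d) ℂ))) :
    (B - ξ • 1)⁻¹ = (-ξ⁻¹) • (1 : Matrix (Fin d) (Fin d) ℂ) - (ξ⁻¹^2) • B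
      + (ξ⁻¹^2) • (B * (B - ξ • 1)⁻¹ * B) := by
  set M := B - ξ • (1 : Matrix (Fin d) (Fin d) ℂ) with hM
  have hdet : IsUnit M.det := (Matrix.isUnit_iff_isUnit_det M).mp hinv
  have hRM : M⁻¹ * M = 1 := Matrix.nonsing_inv_mul M hdet
  have hcomm : B * M = M * B := by
    rw [hM]; noncomm_ring
  have h3 : B * M⁻¹ * B * M = B * B := by
    calc B * M⁻¹ * B * M = B * M⁻¹ * (B * M) := by rw [mul_assoc]
      _ = B * M⁻¹ * (M * B) := by rw [hcomm]
      _ = B * (M⁻¹ * M) * B := by noncomm_ring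
      _ = B * B := by rw [hRM]; noncomm_ring
  apply Matrix.inv_eq_left_inv
  rw [add_mul, sub_mul, smul_mul_assoc, smul_mul_assoc, smul_mul_assoc, h3, one_mul]
  rw [hM, mul_sub, mul_smul_comm, mul_one]
  rw [smul_sub, smul_sub, smul_smul, smul_smul]
  have e1 : ξ⁻¹ ^ 2 * ξ = ξ⁻¹ := by field_simp
  have e2 : -ξ⁻¹ * ξ = -1 := by field_simp
  rw [e1]
  have e3 : ξ * ξ⁻¹ = 1 := mul_inv_cancel₀ hξ
  match_scalars <;> simp [e3] <;> field_simp

end smoothing_aux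

/-- The Smoothing Lemma (Lemma C.3 of the paper): resolvent control in one norm can be
upgraded to another norm.  Here `Nh` plays the role of `‖·‖_#` and `Np` of `‖·‖_+`. -/
theorem smoothing_lemma
    (d : ℕ) (hd : 1 ≤ d)
    (Nh Np : (Fin d → ℂ) → ℝ)
    (hNhadd : ∀ x y : Fin d → ℂ, Nh (x + y) ≤ Nh x + Nh y)
    (hNhsmul : ∀ (c : ℂ) (x : Fin d → ℂ), Nh (c • x) = ‖c‖ * Nh x)
    (hNhdef : ∀ x : Fin d → ℂ, Nh x = 0 → x = 0)
    (hNpadd : ∀ x y : Fin d → ℂ, Np (x + y) ≤ Np x + Np y)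
    (hNpsmul : ∀ (c : ℂ) (x : Fin d → ℂ), Np (c • x) = ‖c‖ * Np x)
    (hNpdef : ∀ x : Fin d → ℂ, Np x = 0 → x = 0)
    (B : Matrix (Fin d) (Fin d) ℂ) (C : ℝ) (hC : 0 < C)
    (hB : inducedOpNorm d Nh Nh B
        + inducedOpNorm d Nh Np B * inducedOpNorm d Np Nh B ≤ C)
    (ξ : ℂ) (hξ : ξ ≠ 0)
    (hinv : IsUnit (B - ξ • (1 : Matrix (Fin d) (Fin d) ℂ))) :
    inducedOpNorm d Nh Nh (B - ξ • (1 : Matrix (Fin d) (Fin d) ℂ))⁻¹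
      ≤ 1 / ‖ξ‖ + C / ‖ξ‖ ^ 2
          * (1 + inducedOpNorm d Np Np (B - ξ • (1 : Matrix (Fin d) (Fin d) ℂ))⁻¹) := by
  have hid := resolvent_identity B ξ hξ hinv
  set R := (B - ξ • (1 : Matrix (Fin d) (Fin d) ℂ))⁻¹ with hRdef
  have hnξ : (0:ℝ) < ‖ξ‖ := norm_pos_iff.mpr hξ
  set s : ℝ := ‖ξ‖⁻¹ with hs
  have hs0 : 0 < s := inv_pos.mpr hnξ
  set a := inducedOpNorm d Nh Nh B with hadef
  set b1 := inducedOpNorm d Nh Np B with hb1def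
  set b2 := inducedOpNorm d Np Nh B with hb2def
  set r := inducedOpNorm d Np Np R with hrdef
  have ha : 0 ≤ a := opNorm_nonneg hd hNhadd hNhsmul hNhdef hNhadd hNhsmul
  have hb1n : 0 ≤ b1 := opNorm_nonneg hd hNhadd hNhsmul hNhdef hNpadd hNpsmul
  have hb2n : 0 ≤ b2 := opNorm_nonneg hd hNpadd hNpsmul hNpdef hNhadd hNhsmul
  have hrn : 0 ≤ r := opNorm_nonneg hd hNpadd hNpsmul hNpdef hNpadd hNpsmul
  apply opNorm_le hNhsmul hNhsmul
  intro v hv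
  have hv0 : 0 ≤ Nh v := nneg hNhadd hNhsmul v
  have hRv : R.mulVec v = (-ξ⁻¹) • v + (-(ξ⁻¹^2)) • (B.mulVec v)
      + (ξ⁻¹^2) • (B.mulVec (R.mulVec (B.mulVec v))) := by
    conv_lhs => rw [hid]
    rw [add_mulVec, sub_mulVec, smul_mulVec, smul_mulVec, smul_mulVec,
      one_mulVec, ← mulVec_mulVec, ← mulVec_mulVec, neg_smul]
    module
  have hn1 : ‖-ξ⁻¹‖ = s := by rw [hs, norm_neg, norm_inv]
  have hn2 : ‖-(ξ⁻¹^2)‖ = s^2 := by rw [hs, norm_neg, norm_pow, norm_inv, inv_pow]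
  have hn3 : ‖ξ⁻¹^2‖ = s^2 := by rw [hs, norm_pow, norm_inv, inv_pow]
  have t1 : Nh (R.mulVec v) ≤ s * Nh v + s^2 * Nh (B.mulVec v)
      + s^2 * Nh (B.mulVec (R.mulVec (B.mulVec v))) := by
    rw [hRv]
    have h1 := hNhadd ((-ξ⁻¹) • v + (-(ξ⁻¹^2)) • (B.mulVec v))
      ((ξ⁻¹^2) • (B.mulVec (R.mulVec (B.mulVec v))))
    have h2 := hNhadd ((-ξ⁻¹) • v) ((-(ξ⁻¹^2)) • (B.mulVec v))
    simp only [hNhsmul, hn1, hn2, hn3] at h1 h2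
    linarith
  have hb : Nh (B.mulVec v) ≤ a * Nh v :=
    le_opNorm hd hNhadd hNhsmul hNhdef hNhadd hNhsmul v
  have hc1 : Np (B.mulVec v) ≤ b1 * Nh v :=
    le_opNorm hd hNhadd hNhsmul hNhdef hNpadd hNpsmul v
  have hc2 : Np (R.mulVec (B.mulVec v)) ≤ r * Np (B.mulVec v) :=
    le_opNorm hd hNpadd hNpsmul hNpdef hNpadd hNpsmul _
  have hc3 : Nh (B.mulVec (R.mulVec (B.mulVec v))) ≤ b2 * Np (R.mulVec (B.mulVec v)) :=
    le_opNorm hd hNpadd hNpsmul hNpdef hNhadd hNhsmul _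
  have hNpB0 : 0 ≤ Np (B.mulVec v) := nneg hNpadd hNpsmul _
  have hNpR0 : 0 ≤ Np (R.mulVec (B.mulVec v)) := nneg hNpadd hNpsmul _
  have hchain : Nh (B.mulVec (R.mulVec (B.mulVec v))) ≤ b2 * (r * (b1 * Nh v)) := by
    calc Nh (B.mulVec (R.mulVec (B.mulVec v))) ≤ b2 * Np (R.mulVec (B.mulVec v)) := hc3
      _ ≤ b2 * (r * Np (B.mulVec v)) :=
          mul_le_mul_of_nonneg_left hc2 hb2n
      _ ≤ b2 * (r * (b1 * Nh v)) :=
          mul_le_mul_of_nonneg_left (mul_le_mul_of_nonneg_left hc1 hrn) hb2n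
  have hstep : a * Nh v + b2 * (r * (b1 * Nh v)) ≤ C * (1 + r) := by
    nlinarith [mul_nonneg hb1n hb2n, mul_nonneg (mul_nonneg hb1n hb2n) hrn,
      mul_nonneg ha hv0, mul_nonneg (mul_nonneg (mul_nonneg hb1n hb2n) hrn) hv0]
  have hfin : Nh (R.mulVec v) ≤ s + s^2 * (C * (1 + r)) := by
    nlinarith [mul_le_mul_of_nonneg_left hstep (sq_nonneg s),
      mul_le_mul_of_nonneg_left hv hs0.le,
      mul_le_mul_of_nonneg_left hb (sq_nonneg s),
      mul_le_mul_of_nonneg_left hchain (sq_nonneg s), t1]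
  calc Nh (R.mulVec v) ≤ s + s^2 * (C * (1 + r)) := hfin
    _ = 1 / ‖ξ‖ + C / ‖ξ‖ ^ 2 * (1 + r) := by
        rw [hs]
        field_simp
end

section
/- Let d ≥ 1 and ε₁, ε₂, ε₃ ∈ (0,1) with 100·ε₃ ≤ ε₁·ε₂². Let F, T ∈ Matrix d d ℂ be Hermitian with operator norm ‖T‖ ≤ 1. Assume: every eigenvalue λ of F (all eigenvalues of F are real) satisfies λ ∈ {−1} ∪ [−1+ε₁, 1−ε₁] ∪ {1}; the eigenspaces ker(F − 1) and ker(F + 1) are one-dimensional, spanned by unit vectors f₊ and f₋ respectively (F·f₊ = f₊, F·f₋ = −f₋, ‖f₊‖ = ‖f₋‖ = 1); ‖T·f₊‖ ≤ 1 − ε₂; and ‖(1 + T)·f₋‖ ≤ ε₃. Then for every ζ ∈ ℂ with |ζ| ≥ 1 − 6ε₃ and |ζ − 1| ≥ 3ε₃, the matrix T·F − ζ·1 is invertible and ‖(T·F − ζ·1)⁻¹‖ ≤ 4/ε₃. -/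
open Matrix

/-- The Euclidean norm of a vector in `ℂ^d`. -/
noncomputable def evnorm {d : ℕ} (v : Fin d → ℂ) : ℝ :=
  Real.sqrt (∑ i, ‖v i‖ ^ 2)

/-- The operator norm of a matrix induced by the Euclidean norm on `ℂ^d`. -/
noncomputable def matOpNorm {d : ℕ} (A : Matrix (Fin d) (Fin d) ℂ) : ℝ :=
  sSup {r : ℝ | ∃ v : Fin d → ℂ, evnorm v ≤ 1 ∧ r = evnorm (A.mulVec v)}

namespace TFStabilityAux

variable {d : ℕ}

abbrev Ed (d : ℕ) := EuclideanSpace ℂ (Fin d)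

noncomputable def eqv (d : ℕ) : Ed d ≃ (Fin d → ℂ) := WithLp.equiv 2 _

noncomputable def toE (v : Fin d → ℂ) : Ed d := (eqv d).symm v

local notation "⟪" x ", " y "⟫" => @inner ℂ _ _ x y

lemma eqv_toEuclideanLin (A : Matrix (Fin d) (Fin d) ℂ) (y : Ed d) :
    eqv d (Matrix.toEuclideanLin A y) = A.mulVec (eqv d y) :=
  Matrix.ofLp_toEuclideanLin_apply A y

lemma real_smul_fun (r : ℝ) (v : Fin d → ℂ) : r • v = (r : ℂ) • v := by
  funext j; simp [Complex.real_smul]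

lemma eqv_smul (c : ℂ) (y : Ed d) : eqv d (c • y) = c • eqv d y := rfl

lemma eqv_symm_smul (c : ℂ) (v : Fin d → ℂ) : (eqv d).symm (c • v) = c • (eqv d).symm v := rfl

lemma toE_add (v w : Fin d → ℂ) : toE (v + w) = toE v + toE w := rfl

lemma toE_sub (v w : Fin d → ℂ) : toE (v - w) = toE v - toE w := rfl

lemma toE_neg (v : Fin d → ℂ) : toE (-v) = -toE v := rfl

lemma toE_smul (c : ℂ) (v : Fin d → ℂ) : toE (c • v) = c • toE v := rfl

lemma evnorm_eq (v : Fin d → ℂ) : evnorm v = ‖toE v‖ := by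
  rw [EuclideanSpace.norm_eq]; rfl

lemma toE_mulVec (A : Matrix (Fin d) (Fin d) ℂ) (v : Fin d → ℂ) :
    toE (A.mulVec v) = Matrix.toEuclideanLin A (toE v) := by
  apply (eqv d).injective
  rw [eqv_toEuclideanLin]
  simp [toE]

lemma toE_surj : Function.Surjective (toE (d := d)) := (eqv d).symm.surjective

lemma le_matOpNorm (A : Matrix (Fin d) (Fin d) ℂ) (x : Ed d) :
    ‖Matrix.toEuclideanLin A x‖ ≤ matOpNorm A * ‖x‖ := by
  set L := Matrix.toEuclideanLin A
  set f := LinearMap.toContinuousLinearMap L with hf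
  have hfL : ∀ y : Ed d, f y = L y := fun y => rfl
  have hbdd : BddAbove {r : ℝ | ∃ v : Fin d → ℂ, evnorm v ≤ 1 ∧ r = evnorm (A.mulVec v)} := by
    refine ⟨‖f‖, ?_⟩
    rintro r ⟨v, hv, rfl⟩
    rw [evnorm_eq, toE_mulVec, ← hfL]
    calc ‖f (toE v)‖ ≤ ‖f‖ * ‖toE v‖ := f.le_opNorm _
      _ ≤ ‖f‖ * 1 := by
          exact mul_le_mul_of_nonneg_left (by rw [← evnorm_eq]; exact hv) (norm_nonneg _)
      _ = ‖f‖ := mul_one _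
  have hnonneg : 0 ≤ matOpNorm A := by
    refine le_csSup hbdd ?_
    exact ⟨0, by simp [evnorm, toE]⟩
  rcases eq_or_ne x 0 with rfl | hx
  · simp [hnonneg]
  · have hxn : 0 < ‖x‖ := norm_pos_iff.mpr hx
    set y : Ed d := ‖x‖⁻¹ • x with hy
    have hyn : ‖y‖ = 1 := by
      rw [hy, norm_smul]; simp [abs_of_nonneg (inv_nonneg.mpr hxn.le), inv_mul_cancel₀ hxn.ne']
    obtain ⟨v, hv⟩ : ∃ v, toE v = y := toE_surj y
    have hmem : ‖L y‖ ∈ {r : ℝ | ∃ v : Fin d → ℂ, evnorm v ≤ 1 ∧ r = evnorm (A.mulVec v)} := by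
      exact ⟨v, by rw [evnorm_eq, hv, hyn], by rw [evnorm_eq, toE_mulVec, hv]⟩
    have h1 : ‖L y‖ ≤ matOpNorm A := le_csSup hbdd hmem
    have : L x = ‖x‖ • L y := by rw [hy, L.map_smul_of_tower, smul_smul, mul_inv_cancel₀ hxn.ne', one_smul]
    rw [this, norm_smul]
    simp only [norm_norm]
    calc ‖x‖ * ‖L y‖ ≤ ‖x‖ * matOpNorm A := by
          exact mul_le_mul_of_nonneg_left h1 hxn.le
      _ = matOpNorm A * ‖x‖ := mul_comm _ _


lemma contract (F : Matrix (Fin d) (Fin d) ℂ) (hF : F.IsHermitian) (ε₁ : ℝ)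
    (hε₁ : 0 ≤ 1 - ε₁)
    (hspec : ∀ μ : ℝ, (∃ v : Fin d → ℂ, v ≠ 0 ∧ F.mulVec v = (μ : ℂ) • v) →
      μ = -1 ∨ (-1 + ε₁ ≤ μ ∧ μ ≤ 1 - ε₁) ∨ μ = 1)
    (fp fm : Fin d → ℂ)
    (hkerp : ∀ v : Fin d → ℂ, F.mulVec v = v → ∃ c : ℂ, v = c • fp)
    (hkerm : ∀ v : Fin d → ℂ, F.mulVec v = -v → ∃ c : ℂ, v = c • fm)
    (x : Ed d) (hxp : ⟪toE fp, x⟫ = 0) (hxm : ⟪toE fm, x⟫ = 0) :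
    ‖Matrix.toEuclideanLin F x‖ ≤ (1 - ε₁) * ‖x‖ := by
  set L := Matrix.toEuclideanLin F with hL
  have hsym : L.IsSymmetric := Matrix.isHermitian_iff_isSymmetric.mp hF
  have hmv : ∀ i, F.mulVec (eqv d (hF.eigenvectorBasis i)) =
      (hF.eigenvalues i : ℂ) • (eqv d (hF.eigenvectorBasis i)) := by
    intro i
    have h := hF.mulVec_eigenvectorBasis i
    rw [real_smul_fun] at h
    exact h
  have hLb : ∀ i, L (hF.eigenvectorBasis i) =
      (hF.eigenvalues i : ℂ) • hF.eigenvectorBasis i := by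
    intro i
    apply (eqv d).injective
    rw [eqv_toEuclideanLin, hmv i, eqv_smul]
  have hbne : ∀ i, eqv d (hF.eigenvectorBasis i) ≠ 0 := by
    intro i hzero
    have h0 : hF.eigenvectorBasis i = 0 := by
      have := congrArg (eqv d).symm hzero
      simpa [eqv] using this
    have hn := hF.eigenvectorBasis.orthonormal.1 i
    rw [h0] at hn; simp at hn
  have hrepr : ∀ i, hF.eigenvectorBasis.repr (L x) i =
      (hF.eigenvalues i : ℂ) * hF.eigenvectorBasis.repr x i := by
    intro i
    rw [hF.eigenvectorBasis.repr_apply_apply, hF.eigenvectorBasis.repr_apply_apply,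
      ← hsym (hF.eigenvectorBasis i) x, hLb i, inner_smul_left]
    simp [Complex.conj_ofReal]
  have hzero : ∀ i, (hF.eigenvalues i = 1 ∨ hF.eigenvalues i = -1) →
      hF.eigenvectorBasis.repr x i = 0 := by
    intro i hi
    rw [hF.eigenvectorBasis.repr_apply_apply]
    rcases hi with h1 | h1
    · have hmvi := hmv i
      rw [h1] at hmvi
      simp only [Complex.ofReal_one, one_smul] at hmvi
      obtain ⟨c, hc⟩ := hkerp _ hmvi
      have hbi : hF.eigenvectorBasis i = c • toE fp := by
        have := congrArg (eqv d).symm hc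
        rw [eqv_symm_smul] at this
        simpa [toE] using this
      rw [hbi, inner_smul_left, hxp, mul_zero]
    · have hmvi := hmv i
      rw [h1] at hmvi
      simp only [Complex.ofReal_neg, Complex.ofReal_one, neg_smul, one_smul] at hmvi
      obtain ⟨c, hc⟩ := hkerm _ hmvi
      have hbi : hF.eigenvectorBasis i = c • toE fm := by
        have := congrArg (eqv d).symm hc
        rw [eqv_symm_smul] at this
        simpa [toE] using this
      rw [hbi, inner_smul_left, hxm, mul_zero]
  have key : ∀ i, ‖hF.eigenvectorBasis.repr (L x) i‖ ≤
      (1 - ε₁) * ‖hF.eigenvectorBasis.repr x i‖ := by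
    intro i
    rw [hrepr i]
    rcases hspec (hF.eigenvalues i) ⟨eqv d (hF.eigenvectorBasis i), hbne i, hmv i⟩
      with h | h | h
    · rw [hzero i (Or.inr h)]; simp
    · rw [norm_mul]
      have h2 : ‖((hF.eigenvalues i : ℝ) : ℂ)‖ = |hF.eigenvalues i| := by
        simp [Complex.norm_real]
      rw [h2]
      exact mul_le_mul_of_nonneg_right (abs_le.mpr ⟨by linarith [h.1], h.2⟩) (norm_nonneg _)
    · rw [hzero i (Or.inl h)]; simp
  rw [← hF.eigenvectorBasis.repr.norm_map x, ← hF.eigenvectorBasis.repr.norm_map (L x),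
    EuclideanSpace.norm_eq, EuclideanSpace.norm_eq]
  have hsum : ∑ i, ‖hF.eigenvectorBasis.repr (L x) i‖ ^ 2 ≤
      (1 - ε₁) ^ 2 * ∑ i, ‖hF.eigenvectorBasis.repr x i‖ ^ 2 := by
    rw [Finset.mul_sum]
    refine Finset.sum_le_sum fun i _ => ?_
    have := key i
    nlinarith [norm_nonneg (hF.eigenvectorBasis.repr (L x) i),
      norm_nonneg (hF.eigenvectorBasis.repr x i)]
  calc Real.sqrt (∑ i, ‖hF.eigenvectorBasis.repr (L x) i‖ ^ 2)
      ≤ Real.sqrt ((1 - ε₁) ^ 2 * ∑ i, ‖hF.eigenvectorBasis.repr x i‖ ^ 2) :=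
        Real.sqrt_le_sqrt hsum
    _ = (1 - ε₁) * Real.sqrt (∑ i, ‖hF.eigenvectorBasis.repr x i‖ ^ 2) := by
        rw [Real.sqrt_mul (sq_nonneg _), Real.sqrt_sq hε₁]


lemma le_of_sq_le_sq' {a b : ℝ} (ha : 0 ≤ a) (hb : 0 ≤ b) (h : a ^ 2 ≤ b ^ 2) : a ≤ b :=
  le_of_pow_le_pow_left₀ two_ne_zero hb h

lemma pythag {x y : Ed d} (h : ⟪x, y⟫ = 0) : ‖x + y‖ ^ 2 = ‖x‖ ^ 2 + ‖y‖ ^ 2 := by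
  have := norm_add_sq_eq_norm_sq_add_norm_sq_of_inner_eq_zero x y h
  rw [pow_two, pow_two, pow_two]; exact this


lemma normtri3 {a b c : ℂ} : ‖a‖ ≤ ‖a - b + c‖ + ‖b‖ + ‖c‖ := by
  have e : a = ((a - b + c) + b) - c := by ring
  calc ‖a‖ = ‖((a - b + c) + b) - c‖ := by rw [← e]
    _ ≤ ‖(a - b + c) + b‖ + ‖c‖ := norm_sub_le _ _
    _ ≤ ‖a - b + c‖ + ‖b‖ + ‖c‖ := by linarith [norm_add_le (a - b + c) b]

lemma arithsq {a b : ℝ} (ha : 0 ≤ a) (h : a ≤ b) : a ^ 2 ≤ b ^ 2 :=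
  pow_le_pow_left₀ ha h 2

lemma arithA1 {e1 e2 e3 s q mu N Np Nw : ℝ} (h1 : 0 < e1) (h2 : e1 < 1) (h3 : 0 < e2)
    (h4 : e2 < 1) (h5 : 0 < e3) (h20 : 20 * e3 ≤ e2) (hs : 0 ≤ s) (hq : 0 ≤ q)
    (hmu : 0 ≤ mu) (hsmu : s ≤ mu) (hcase : q ≤ e2 / 2 * s) (hN : N ≤ Np + Nw)
    (hNp : Np ≤ s * (1 - e2)) (hNw : Nw ≤ (1 - e1) * q) : N ≤ (1 - 10 * e3) * mu := by
  nlinarith [mul_nonneg h1.le hq,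
    mul_nonneg (by linarith : (0:ℝ) ≤ 1 - 10 * e3) (by linarith : (0:ℝ) ≤ mu - s),
    mul_nonneg hs (by linarith : (0:ℝ) ≤ e2 / 2 - 10 * e3)]

lemma arithA2 {e1 e2 e3 s q : ℝ} (h1 : 0 < e1) (h2 : e1 < 1) (h3 : 0 < e2) (h4 : e2 < 1)
    (h5 : 0 < e3) (hes : 100 * e3 ≤ e1 * e2 ^ 2) (hs2 : e2 ^ 2 * s ^ 2 ≤ 4 * q ^ 2) :
    s ^ 2 + ((1 - e1) * q) ^ 2 ≤ (1 - 10 * e3) ^ 2 * (s ^ 2 + q ^ 2) := by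
  have hsc : e2 ^ 2 * (s ^ 2 + ((1 - e1) * q) ^ 2) ≤
      e2 ^ 2 * ((1 - 10 * e3) ^ 2 * (s ^ 2 + q ^ 2)) := by
    have f1 : 20 * e3 * (e2 ^ 2 * s ^ 2) ≤ 20 * e3 * (4 * q ^ 2) :=
      mul_le_mul_of_nonneg_left hs2 (by positivity)
    have f2 : 100 * e3 * q ^ 2 ≤ e1 * e2 ^ 2 * q ^ 2 :=
      mul_le_mul_of_nonneg_right hes (sq_nonneg q)
    have f3 : e1 ^ 2 * (e2 ^ 2 * q ^ 2) ≤ e1 * (e2 ^ 2 * q ^ 2) :=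
      mul_le_mul_of_nonneg_right (by nlinarith) (by positivity)
    have f4 : 20 * e3 * (e2 ^ 2 * q ^ 2) ≤ 20 * e3 * (1 * q ^ 2) := by
      have he2 : e2 ^ 2 * q ^ 2 ≤ 1 * q ^ 2 := by
        apply mul_le_mul_of_nonneg_right _ (sq_nonneg q)
        nlinarith
      exact mul_le_mul_of_nonneg_left he2 (by positivity)
    have f5 : (0:ℝ) ≤ 100 * e3 ^ 2 * (e2 ^ 2 * s ^ 2) := by positivity
    have f6 : (0:ℝ) ≤ 100 * e3 ^ 2 * (e2 ^ 2 * q ^ 2) := by positivity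
    nlinarith [f1, f2, f3, f4, f5, f6]
  exact (mul_le_mul_iff_right₀ (by positivity : (0:ℝ) < e2 ^ 2)).mp hsc

lemma arithB {e3 be mu N c t1 t2 t3 : ℝ} (h1 : c ≤ N) (h2 : t1 - t2 - t3 ≤ c)
    (h3 : 3 * e3 * be ≤ t1) (h4 : t2 ≤ be * e3) (h5 : t3 ≤ e3 * mu) :
    e3 * (2 * be - mu) ≤ N := by nlinarith

lemma arithC {e3 be mu N nA nB nY nC : ℝ}
    (hYX : nY ≤ N) (hA : nA ≤ (1 - 10 * e3) * mu + e3 * mu) (hB : nB ≤ 2 * e3 * be)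
    (hzu : (1 - 6 * e3) * mu ≤ nC) (htri : nC ≤ nA + nB + nY) :
    e3 * (3 * mu - 2 * be) ≤ N := by nlinarith

lemma arithFinal {e3 be mu rho N : ℝ} (h5 : 0 < e3) (hb : 0 ≤ be) (hm : 0 ≤ mu)
    (hr : 0 ≤ rho) (hN : 0 ≤ N) (hB : e3 * (2 * be - mu) ≤ N)
    (hC : e3 * (3 * mu - 2 * be) ≤ N) (hrho : rho ≤ be + mu) : e3 / 4 * rho ≤ N := by
  nlinarith [mul_le_mul_of_nonneg_left hrho h5.le]

set_option maxHeartbeats 1000000 in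
lemma lower_bound
    (ε₁ ε₂ ε₃ : ℝ)
    (hε₁ : ε₁ ∈ Set.Ioo (0 : ℝ) 1) (hε₂ : ε₂ ∈ Set.Ioo (0 : ℝ) 1)
    (hε₃ : ε₃ ∈ Set.Ioo (0 : ℝ) 1)
    (hεs : 100 * ε₃ ≤ ε₁ * ε₂ ^ 2)
    (L M : Ed d →ₗ[ℂ] Ed d)
    (hsymF : L.IsSymmetric) (hsymT : M.IsSymmetric)
    (hTle : ∀ y : Ed d, ‖M y‖ ≤ ‖y‖)
    (p m : Ed d)
    (hLp : L p = p) (hLm : L m = -m)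
    (hpn : ‖p‖ = 1) (hmn : ‖m‖ = 1)
    (hctr : ∀ y : Ed d, ⟪p, y⟫ = 0 → ⟪m, y⟫ = 0 → ‖L y‖ ≤ (1 - ε₁) * ‖y‖)
    (hTfp : ‖M p‖ ≤ 1 - ε₂)
    (hTfm : ‖m + M m‖ ≤ ε₃)
    (ζ : ℂ) (hζ1 : 1 - 6 * ε₃ ≤ ‖ζ‖) (hζ2 : 3 * ε₃ ≤ ‖ζ - 1‖)
    (x : Ed d) :
    ε₃ / 4 * ‖x‖ ≤ ‖M (L x) - ζ • x‖ := by
  obtain ⟨hε₁0, hε₁1⟩ := hε₁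
  obtain ⟨hε₂0, hε₂1⟩ := hε₂
  obtain ⟨hε₃0, hε₃1⟩ := hε₃
  have hε₃small : ε₃ ≤ 1 / 100 := by nlinarith
  have hε₂20 : 20 * ε₃ ≤ ε₂ := by nlinarith
  have h10 : 0 ≤ 1 - 10 * ε₃ := by linarith
  -- orthogonality of p and m
  have hpm : ⟪p, m⟫ = 0 := by
    have h := hsymF p m
    rw [hLp, hLm, inner_neg_right] at h
    -- h : ⟪p, m⟫ = -⟪p, m⟫
    have h2 : (2 : ℂ) * ⟪p, m⟫ = 0 := by linear_combination h
    simpa using h2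
  have hmp : ⟪m, p⟫ = 0 := by
    rw [← inner_conj_symm, hpm, map_zero]
  have hmm : ⟪m, m⟫ = 1 := by
    rw [inner_self_eq_norm_sq_to_K, hmn]; norm_num
  have hpp : ⟪p, p⟫ = 1 := by
    rw [inner_self_eq_norm_sq_to_K, hpn]; norm_num
  set g : Ed d := m + M m with hg
  have hgn : ‖g‖ ≤ ε₃ := hTfm
  have hMm : M m = g - m := by rw [hg]; abel
  -- decomposition
  set bC : ℂ := ⟪m, x⟫ with hbC
  set u : Ed d := x - bC • m with hu
  have hxdecomp : x = bC • m + u := by rw [hu]; abel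
  have hum : ⟪m, u⟫ = 0 := by
    rw [hu, inner_sub_right, inner_smul_right, hmm, mul_one, hbC, sub_self]
  set aC : ℂ := ⟪p, u⟫ with haC
  set w : Ed d := u - aC • p with hw
  have hudecomp : u = aC • p + w := by rw [hw]; abel
  have hwp : ⟪p, w⟫ = 0 := by
    rw [hw, inner_sub_right, inner_smul_right, hpp, mul_one, haC, sub_self]
  have hwm : ⟪m, w⟫ = 0 := by
    rw [hw, inner_sub_right, inner_smul_right, hmp, mul_zero, hum, sub_zero]
  set β : ℝ := ‖bC‖ with hβ
  set μ : ℝ := ‖u‖ with hμ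
  set s : ℝ := ‖aC‖ with hs
  set q : ℝ := ‖w‖ with hq
  have hβ0 : 0 ≤ β := norm_nonneg _
  have hμ0 : 0 ≤ μ := norm_nonneg _
  have hs0 : 0 ≤ s := norm_nonneg _
  have hq0 : 0 ≤ q := norm_nonneg _
  clear_value g bC u aC w β μ s q
  have hx2 : ‖x‖ ^ 2 = β ^ 2 + μ ^ 2 := by
    rw [hxdecomp, pythag (by rw [inner_smul_left, hum, mul_zero]), norm_smul, hmn, mul_one,
      hβ, hμ]
  have hu2 : μ ^ 2 = s ^ 2 + q ^ 2 := by
    rw [hμ, hudecomp, pythag (by rw [inner_smul_left, hwp, mul_zero]), norm_smul, hpn, mul_one,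
      hs, hq]
  have hsμ : s ≤ μ := le_of_sq_le_sq' hs0 hμ0 (by linarith [sq_nonneg q])
  have hqμ : q ≤ μ := le_of_sq_le_sq' hq0 hμ0 (by linarith [sq_nonneg s])
  -- L on pieces
  have hLw : ‖L w‖ ≤ (1 - ε₁) * q := by rw [hq]; exact hctr w hwp hwm
  have hLwp : ⟪p, L w⟫ = 0 := by rw [← hsymF p w, hLp, hwp]
  have hLwm : ⟪m, L w⟫ = 0 := by
    have h := hsymF m w
    rw [hLm, inner_neg_left, hwm, neg_zero] at h
    exact h.symm
  have hLu : L u = aC • p + L w := by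
    conv_lhs => rw [hudecomp]
    rw [map_add, L.map_smul, hLp]
  have hLum : ⟪m, L u⟫ = 0 := by
    rw [hLu, inner_add_right, inner_smul_right, hmp, mul_zero, hLwm, add_zero]
  have hLu2 : ‖L u‖ ^ 2 = s ^ 2 + ‖L w‖ ^ 2 := by
    rw [hLu, pythag (by rw [inner_smul_left, hLwp, mul_zero]), norm_smul, hpn, mul_one, hs]
  have hLuμ : ‖L u‖ ≤ μ := by
    apply le_of_sq_le_sq' (norm_nonneg _) hμ0
    have h'' : (1 - ε₁) * q ≤ 1 * q := mul_le_mul_of_nonneg_right (by linarith) hq0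
    have h' : ‖L w‖ ≤ q := le_trans hLw (by linarith)
    have h2 : ‖L w‖ ^ 2 ≤ q ^ 2 := arithsq (norm_nonneg _) h'
    linarith
  -- Step A
  have hMLu : ‖M (L u)‖ ≤ (1 - 10 * ε₃) * μ := by
    rcases le_or_gt q (ε₂ / 2 * s) with hcase | hcase
    · have h1 : ‖M (L u)‖ ≤ ‖M (aC • p)‖ + ‖M (L w)‖ := by
        rw [hLu, map_add]; exact norm_add_le _ _
      have h2 : ‖M (aC • p)‖ ≤ s * (1 - ε₂) := by
        rw [M.map_smul, norm_smul, hs]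
        exact mul_le_mul_of_nonneg_left hTfp (hs ▸ hs0)
      have h3 : ‖M (L w)‖ ≤ (1 - ε₁) * q := le_trans (hTle _) hLw
      exact arithA1 hε₁0 hε₁1 hε₂0 hε₂1 hε₃0 hε₂20 hs0 hq0 hμ0 hsμ hcase h1 h2 h3
    · have h1 : ‖M (L u)‖ ≤ ‖L u‖ := hTle _
      have hq2 : (ε₂ / 2 * s) ^ 2 ≤ q ^ 2 :=
        arithsq (mul_nonneg (by positivity) hs0) hcase.le
      have hexp : (ε₂ / 2 * s) ^ 2 = ε₂ ^ 2 * s ^ 2 / 4 := by ring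
      rw [hexp] at hq2
      have hs2 : ε₂ ^ 2 * s ^ 2 ≤ 4 * q ^ 2 := by linarith
      have hmain : ‖L u‖ ^ 2 ≤ ((1 - 10 * ε₃) * μ) ^ 2 := by
        have hLw2 : ‖L w‖ ^ 2 ≤ ((1 - ε₁) * q) ^ 2 := arithsq (norm_nonneg _) hLw
        have hkey := arithA2 hε₁0 hε₁1 hε₂0 hε₂1 hε₃0 hεs hs2
        calc ‖L u‖ ^ 2 = s ^ 2 + ‖L w‖ ^ 2 := hLu2
          _ ≤ s ^ 2 + ((1 - ε₁) * q) ^ 2 := by linarith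
          _ ≤ (1 - 10 * ε₃) ^ 2 * (s ^ 2 + q ^ 2) := hkey
          _ = ((1 - 10 * ε₃) * μ) ^ 2 := by rw [mul_pow, hu2]
      exact le_trans h1 (le_of_sq_le_sq' (norm_nonneg _)
        (mul_nonneg h10 hμ0) hmain)
  -- the vector X
  set X : Ed d := M (L x) - ζ • x with hX
  clear_value X
  have hLx : L x = L u - bC • m := by
    conv_lhs => rw [hxdecomp]
    rw [map_add, L.map_smul, hLm]
    module
  have hXdecomp : X = ((1 - ζ) * bC) • m - bC • g + (M (L u) - ζ • u) := by
    rw [hX, hLx, map_sub, M.map_smul, hMm]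
    conv_lhs => rw [hxdecomp]
    module
  have hmMLu : ⟪m, M (L u)⟫ = ⟪g, L u⟫ := by
    have h := hsymT m (L u)
    rw [hMm, inner_sub_left, hLum, sub_zero] at h
    exact h.symm
  have hc₁ : ⟪m, X⟫ = (1 - ζ) * bC - bC * ⟪m, g⟫ + ⟪g, L u⟫ := by
    rw [hXdecomp, inner_add_right, inner_sub_right, inner_smul_right, inner_smul_right,
      inner_sub_right, inner_smul_right, hmm, mul_one, hmMLu, hum, mul_zero, sub_zero]
  have hmg : ‖⟪m, g⟫‖ ≤ ε₃ := by
    calc ‖⟪m, g⟫‖ ≤ ‖m‖ * ‖g‖ := norm_inner_le_norm _ _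
      _ = ‖g‖ := by rw [hmn, one_mul]
      _ ≤ ε₃ := hgn
  have hgLu : ‖⟪g, L u⟫‖ ≤ ε₃ * μ := by
    calc ‖⟪g, L u⟫‖ ≤ ‖g‖ * ‖L u‖ := norm_inner_le_norm _ _
      _ ≤ ε₃ * μ := mul_le_mul hgn hLuμ (norm_nonneg _) hε₃0.le
  -- Step B: lower bound on |⟪m, X⟫|
  have hB : ε₃ * (2 * β - μ) ≤ ‖X‖ := by
    have h1 : ‖⟪m, X⟫‖ ≤ ‖X‖ := by
      calc ‖⟪m, X⟫‖ ≤ ‖m‖ * ‖X‖ := norm_inner_le_norm _ _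
        _ = ‖X‖ := by rw [hmn, one_mul]
    have h2 : ‖(1 - ζ) * bC‖ - ‖bC * ⟪m, g⟫‖ - ‖⟪g, L u⟫‖ ≤ ‖⟪m, X⟫‖ := by
      rw [hc₁]
      linarith [normtri3 (a := (1 - ζ) * bC) (b := bC * ⟪m, g⟫) (c := ⟪g, L u⟫)]
    have h3 : ‖(1 - ζ) * bC‖ ≥ 3 * ε₃ * β := by
      rw [norm_mul, hβ]
      have : ‖(1 : ℂ) - ζ‖ = ‖ζ - 1‖ := by rw [norm_sub_rev]
      rw [this]
      exact mul_le_mul hζ2 le_rfl (hβ ▸ hβ0) (le_trans (by linarith) hζ2)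
    have h4 : ‖bC * ⟪m, g⟫‖ ≤ β * ε₃ := by
      rw [norm_mul, hβ]
      exact mul_le_mul_of_nonneg_left hmg (hβ ▸ hβ0)
    exact arithB h1 h2 h3 h4 hgLu
  -- Step C: lower bound on the orthogonal part
  have hC : ε₃ * (3 * μ - 2 * β) ≤ ‖X‖ := by
    obtain ⟨c₂, hc₂⟩ : ∃ c : ℂ, ⟪m, X⟫ = c := ⟨⟪m, X⟫, rfl⟩
    obtain ⟨Y, hY⟩ : ∃ y : Ed d, y = X - c₂ • m := ⟨_, rfl⟩
    have hXsplit : X = c₂ • m + Y := by rw [hY]; abel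
    have hYX : ‖Y‖ ≤ ‖X‖ := by
      have horth : ⟪(c₂ • m), Y⟫ = 0 := by
        rw [inner_smul_left, hY, inner_sub_right, inner_smul_right, hmm, mul_one, ← hc₂,
          sub_self, mul_zero]
      have hpy := pythag horth
      rw [← hXsplit] at hpy
      apply le_of_sq_le_sq' (norm_nonneg _) (norm_nonneg _)
      linarith [sq_nonneg ‖c₂ • m‖]
    have hYdecomp : Y = (M (L u) - ⟪g, L u⟫ • m) - (bC • g - (bC * ⟪m, g⟫) • m) - ζ • u := by
      have e : c₂ = (1 - ζ) * bC - bC * ⟪m, g⟫ + ⟪g, L u⟫ := hc₂.symm.trans hc₁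
      rw [hY, hXdecomp, e]
      module
    set A : Ed d := M (L u) - ⟪g, L u⟫ • m with hA
    set B : Ed d := bC • g - (bC * ⟪m, g⟫) • m with hBv
    clear_value A B
    have hAn : ‖A‖ ≤ (1 - 10 * ε₃) * μ + ε₃ * μ := by
      rw [hA]
      refine le_trans (norm_sub_le _ _) ?_
      have : ‖⟪g, L u⟫ • m‖ = ‖⟪g, L u⟫‖ := by rw [norm_smul, hmn, mul_one]
      rw [this]
      exact add_le_add hMLu hgLu
    have hBn : ‖B‖ ≤ 2 * ε₃ * β := by
      rw [hBv]
      refine le_trans (norm_sub_le _ _) ?_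
      have h1 : ‖bC • g‖ ≤ β * ε₃ := by
        rw [norm_smul, hβ]; exact mul_le_mul_of_nonneg_left hgn (hβ ▸ hβ0)
      have h2 : ‖(bC * ⟪m, g⟫) • m‖ ≤ β * ε₃ := by
        rw [norm_smul, hmn, mul_one, norm_mul, hβ]
        exact mul_le_mul_of_nonneg_left hmg (hβ ▸ hβ0)
      linarith
    have hζu : ‖ζ • u‖ ≥ (1 - 6 * ε₃) * μ := by
      rw [norm_smul, hμ]
      exact mul_le_mul_of_nonneg_right hζ1 (hμ ▸ hμ0)
    have htri : ‖ζ • u‖ ≤ ‖A‖ + ‖B‖ + ‖Y‖ := by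
      have : ζ • u = (A - B) - Y := by rw [hYdecomp]; abel
      rw [this]
      refine le_trans (norm_sub_le _ _) ?_
      gcongr
      exact norm_sub_le _ _
    exact arithC hYX hAn hBn hζu htri
  -- combine
  have hρ : ‖x‖ ≤ β + μ := by
    apply le_of_sq_le_sq' (norm_nonneg _) (by linarith)
    have : 0 ≤ 2 * (β * μ) := by positivity
    nlinarith [this]
  exact arithFinal hε₃0 hβ0 hμ0 (norm_nonneg x) (norm_nonneg X) hB hC hρ


end TFStabilityAux

open TFStabilityAux

/-- The resolvent bound (C.10) of the TF-Stability Lemma (Lemma C.4 of the paper). -/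
theorem TF_stability_resolvent_bound
    (d : ℕ) (hd : 1 ≤ d)
    (ε₁ ε₂ ε₃ : ℝ)
    (hε₁ : ε₁ ∈ Set.Ioo (0 : ℝ) 1) (hε₂ : ε₂ ∈ Set.Ioo (0 : ℝ) 1)
    (hε₃ : ε₃ ∈ Set.Ioo (0 : ℝ) 1)
    (hεs : 100 * ε₃ ≤ ε₁ * ε₂ ^ 2)
    (F T : Matrix (Fin d) (Fin d) ℂ)
    (hF : F.IsHermitian) (hT : T.IsHermitian)
    (hTnorm : matOpNorm T ≤ 1)
    (hspec : ∀ μ : ℝ, (∃ v : Fin d → ℂ, v ≠ 0 ∧ F.mulVec v = (μ : ℂ) • v) →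
      μ = -1 ∨ (-1 + ε₁ ≤ μ ∧ μ ≤ 1 - ε₁) ∨ μ = 1)
    (fp fm : Fin d → ℂ)
    (hfp : F.mulVec fp = fp) (hfm : F.mulVec fm = -fm)
    (hfpnorm : evnorm fp = 1) (hfmnorm : evnorm fm = 1)
    (hkerp : ∀ v : Fin d → ℂ, F.mulVec v = v → ∃ c : ℂ, v = c • fp)
    (hkerm : ∀ v : Fin d → ℂ, F.mulVec v = -v → ∃ c : ℂ, v = c • fm)
    (hTfp : evnorm (T.mulVec fp) ≤ 1 - ε₂)
    (hTfm : evnorm (((1 : Matrix (Fin d) (Fin d) ℂ) + T).mulVec fm) ≤ ε₃) :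
    ∀ ζ : ℂ, 1 - 6 * ε₃ ≤ ‖ζ‖ → 3 * ε₃ ≤ ‖ζ - 1‖ →
      IsUnit (T * F - ζ • (1 : Matrix (Fin d) (Fin d) ℂ))
        ∧ matOpNorm (T * F - ζ • (1 : Matrix (Fin d) (Fin d) ℂ))⁻¹ ≤ 4 / ε₃ := by
  intro ζ hζ1 hζ2
  have hε₃0 : 0 < ε₃ := hε₃.1
  set L := Matrix.toEuclideanLin F with hL
  set M := Matrix.toEuclideanLin T with hM
  have hsymF : L.IsSymmetric := Matrix.isHermitian_iff_isSymmetric.mp hF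
  have hsymT : M.IsSymmetric := Matrix.isHermitian_iff_isSymmetric.mp hT
  have hTle : ∀ y : EuclideanSpace ℂ (Fin d), ‖M y‖ ≤ ‖y‖ := by
    intro y
    calc ‖M y‖ ≤ matOpNorm T * ‖y‖ := le_matOpNorm T y
      _ ≤ 1 * ‖y‖ := mul_le_mul_of_nonneg_right hTnorm (norm_nonneg y)
      _ = ‖y‖ := one_mul _
  have hLp : L (toE fp) = toE fp := by rw [hL, ← toE_mulVec, hfp]
  have hLm : L (toE fm) = -(toE fm) := by rw [hL, ← toE_mulVec, hfm, toE_neg]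
  have hpn : ‖toE fp‖ = 1 := by rw [← evnorm_eq]; exact hfpnorm
  have hmn : ‖toE fm‖ = 1 := by rw [← evnorm_eq]; exact hfmnorm
  have hctr : ∀ y : EuclideanSpace ℂ (Fin d),
      @inner ℂ _ _ (toE fp) y = 0 → @inner ℂ _ _ (toE fm) y = 0 →
      ‖L y‖ ≤ (1 - ε₁) * ‖y‖ :=
    fun y h1 h2 => contract F hF ε₁ (by linarith [hε₁.2]) hspec fp fm hkerp hkerm y h1 h2
  have hTfp' : ‖M (toE fp)‖ ≤ 1 - ε₂ := by
    rw [hM, ← toE_mulVec, ← evnorm_eq]; exact hTfp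
  have hTfm' : ‖toE fm + M (toE fm)‖ ≤ ε₃ := by
    have e : ((1 : Matrix (Fin d) (Fin d) ℂ) + T).mulVec fm = fm + T.mulVec fm := by
      rw [Matrix.add_mulVec, Matrix.one_mulVec]
    have e2 : toE fm + M (toE fm) = toE (((1 : Matrix (Fin d) (Fin d) ℂ) + T).mulVec fm) := by
      rw [e, toE_add, hM, ← toE_mulVec]
    rw [e2, ← evnorm_eq]; exact hTfm
  set Mm := T * F - ζ • (1 : Matrix (Fin d) (Fin d) ℂ) with hMme
  have hMv : ∀ v : Fin d → ℂ, toE (Mm.mulVec v) = M (L (toE v)) - ζ • toE v := by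
    intro v
    rw [hMme, Matrix.sub_mulVec, Matrix.smul_mulVec, Matrix.one_mulVec,
      ← Matrix.mulVec_mulVec, toE_sub, toE_smul, toE_mulVec, toE_mulVec, ← hL, ← hM]
  have key2 : ∀ v : Fin d → ℂ, ε₃ / 4 * evnorm v ≤ evnorm (Mm.mulVec v) := by
    intro v
    rw [evnorm_eq, evnorm_eq, hMv]
    exact lower_bound ε₁ ε₂ ε₃ hε₁ hε₂ hε₃ hεs L M hsymF hsymT hTle (toE fp) (toE fm)
      hLp hLm hpn hmn hctr hTfp' hTfm' ζ hζ1 hζ2 (toE v)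
  have hevnonneg : ∀ v : Fin d → ℂ, 0 ≤ evnorm v := by
    intro v; rw [evnorm_eq]; exact norm_nonneg _
  have hinj : Function.Injective (Mm.mulVec) := by
    intro v1 v2 h12
    have h0 : Mm.mulVec (v1 - v2) = 0 := by rw [Matrix.mulVec_sub, h12, sub_self]
    have hkv := key2 (v1 - v2)
    rw [h0] at hkv
    have h00 : evnorm (0 : Fin d → ℂ) = 0 := by simp [evnorm]
    rw [h00] at hkv
    have h01 : evnorm (v1 - v2) = 0 := by
      have := hevnonneg (v1 - v2); nlinarith
    have h02 : toE (v1 - v2) = 0 := by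
      rw [evnorm_eq] at h01; exact norm_eq_zero.mp h01
    have h03 : v1 - v2 = 0 := by
      have := congrArg (eqv d) h02
      simpa [toE, eqv] using this
    exact sub_eq_zero.mp h03
  have hUnit : IsUnit Mm := Matrix.mulVec_injective_iff_isUnit.mp hinj
  refine ⟨hUnit, ?_⟩
  have hdet : IsUnit Mm.det := (Matrix.isUnit_iff_isUnit_det _).mp hUnit
  have hMMinv : Mm * Mm⁻¹ = 1 := Matrix.mul_nonsing_inv _ hdet
  apply Real.sSup_le
  · rintro r ⟨v, hv, rfl⟩
    have hy : Mm.mulVec (Mm⁻¹.mulVec v) = v := by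
      rw [Matrix.mulVec_mulVec, hMMinv, Matrix.one_mulVec]
    have h1 := key2 (Mm⁻¹.mulVec v)
    rw [hy] at h1
    have h2 := hevnonneg (Mm⁻¹.mulVec v)
    rw [le_div_iff₀ hε₃0]
    nlinarith
  · positivity
end

section
/- Let d ≥ 1 and ε₁, ε₂ ∈ (0,1). Let F, T ∈ Matrix d d ℂ be Hermitian with operator norm ‖T‖ ≤ 1. Assume: every eigenvalue λ of F satisfies λ ∈ {−1} ∪ [−1+ε₁, 1−ε₁] ∪ {1}; the eigenspaces ker(F − 1) and ker(F + 1) are one-dimensional, spanned by unit vectors f₊ and f₋ respectively; and ‖T·f₊‖ ≤ 1 − ε₂. Then for every a ∈ ℂ^d with ⟪f₋, a⟫ = 0 one has ‖T·(F·a)‖ ≤ (1 − ε₁·ε₂²/8)·‖a‖. -/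
open Matrix

open ComplexInnerProductSpace

namespace TFAux

variable {d : ℕ}

/-- View a plain vector as an element of Euclidean space. -/
noncomputable def toE (v : Fin d → ℂ) : EuclideanSpace ℂ (Fin d) :=
  (WithLp.equiv 2 (Fin d → ℂ)).symm v

lemma evnorm_eq (v : Fin d → ℂ) : evnorm v = ‖toE v‖ := by
  rw [EuclideanSpace.norm_eq]
  rfl

lemma toE_mulVec (A : Matrix (Fin d) (Fin d) ℂ) (v : Fin d → ℂ) :
    toE (A.mulVec v) = Matrix.toEuclideanLin A (toE v) := rfl

lemma inner_toE (u v : Fin d → ℂ) : ⟪toE u, toE v⟫ = star u ⬝ᵥ v := by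
  simp [toE, EuclideanSpace.inner_eq_star_dotProduct, dotProduct, mul_comm]

lemma toE_smul (c : ℂ) (v : Fin d → ℂ) : toE (c • v) = c • toE v := rfl

lemma opnorm_bound (T : Matrix (Fin d) (Fin d) ℂ) (hTnorm : matOpNorm T ≤ 1)
    (v : Fin d → ℂ) : ‖toE (T.mulVec v)‖ ≤ ‖toE v‖ := by
  set L := LinearMap.toContinuousLinearMap (Matrix.toEuclideanLin T) with hL
  have hLapp : ∀ w : Fin d → ℂ, toE (T.mulVec w) = L (toE w) := by
    intro w
    rw [toE_mulVec]
    simp [hL]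
  have hbdd : BddAbove {r : ℝ | ∃ w : Fin d → ℂ, evnorm w ≤ 1 ∧ r = evnorm (T.mulVec w)} := by
    refine ⟨‖L‖, ?_⟩
    rintro r ⟨w, hw, rfl⟩
    rw [evnorm_eq, hLapp]
    calc ‖L (toE w)‖ ≤ ‖L‖ * ‖toE w‖ := L.le_opNorm _
      _ ≤ ‖L‖ * 1 := by
          have := norm_nonneg L
          have h1 : ‖toE w‖ ≤ 1 := by rw [← evnorm_eq]; exact hw
          nlinarith [norm_nonneg (toE w)]
      _ = ‖L‖ := mul_one _
  rcases eq_or_ne v 0 with rfl | hv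
  · simp [Matrix.mulVec_zero, toE]
  · have hvn : (0 : ℝ) < ‖toE v‖ := by
      have : toE v ≠ 0 := by
        simp only [toE, ne_eq]
        intro h
        exact hv ((WithLp.equiv 2 (Fin d → ℂ)).symm.injective (by simpa using h))
      exact norm_pos_iff.mpr this
    set c : ℂ := (‖toE v‖ : ℂ)⁻¹ with hc
    have hcn : ‖c‖ = ‖toE v‖⁻¹ := by
      rw [hc, norm_inv, Complex.norm_real, Real.norm_of_nonneg hvn.le]
    have hmem : evnorm (T.mulVec (c • v)) ∈
        {r : ℝ | ∃ w : Fin d → ℂ, evnorm w ≤ 1 ∧ r = evnorm (T.mulVec w)} := by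
      refine ⟨c • v, ?_, rfl⟩
      rw [evnorm_eq, toE_smul, norm_smul, hcn, inv_mul_cancel₀ hvn.ne']
    have hle : evnorm (T.mulVec (c • v)) ≤ 1 :=
      le_trans (le_csSup hbdd hmem) hTnorm
    have : ‖toE (T.mulVec (c • v))‖ = ‖toE v‖⁻¹ * ‖toE (T.mulVec v)‖ := by
      rw [Matrix.mulVec_smul, toE_smul, norm_smul, hcn]
    rw [evnorm_eq, this] at hle
    calc ‖toE (T.mulVec v)‖ = ‖toE v‖ * (‖toE v‖⁻¹ * ‖toE (T.mulVec v)‖) := by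
          field_simp
      _ ≤ ‖toE v‖ * 1 := by nlinarith [norm_nonneg (toE (T.mulVec v))]
      _ = ‖toE v‖ := mul_one _

lemma Fb_bound (ε₁ : ℝ) (hε₁ : ε₁ ∈ Set.Ioo (0:ℝ) 1)
    (F : Matrix (Fin d) (Fin d) ℂ) (hF : F.IsHermitian)
    (hspec : ∀ μ : ℝ, (∃ v : Fin d → ℂ, v ≠ 0 ∧ F.mulVec v = (μ : ℂ) • v) →
      μ = -1 ∨ (-1 + ε₁ ≤ μ ∧ μ ≤ 1 - ε₁) ∨ μ = 1)
    (fp fm : Fin d → ℂ)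
    (hkerp : ∀ v : Fin d → ℂ, F.mulVec v = v → ∃ c : ℂ, v = c • fp)
    (hkerm : ∀ v : Fin d → ℂ, F.mulVec v = -v → ∃ c : ℂ, v = c • fm)
    (x : EuclideanSpace ℂ (Fin d))
    (hxp : ⟪toE fp, x⟫ = 0) (hxm : ⟪toE fm, x⟫ = 0) :
    ‖Matrix.toEuclideanLin F x‖ ≤ (1 - ε₁) * ‖x‖ := by
  classical
  set B := hF.eigenvectorBasis with hB
  set μ := hF.eigenvalues with hμ
  have hε₁' : (0:ℝ) ≤ 1 - ε₁ := by linarith [hε₁.2]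
  -- the linear map applied to an eigenvector
  have hLB : ∀ i, Matrix.toEuclideanLin F (B i) = (μ i : ℂ) • B i := by
    intro i
    have h := hF.mulVec_eigenvectorBasis i
    have h2 : (μ i : ℝ) • (⇑(B i) : Fin d → ℂ) = (μ i : ℂ) • (⇑(B i) : Fin d → ℂ) := by
      funext j
      simp [Pi.smul_apply, Complex.real_smul]
    calc Matrix.toEuclideanLin F (B i) = toE (F *ᵥ ⇑(B i)) := rfl
      _ = toE ((μ i : ℂ) • ⇑(B i)) := by rw [h, h2]
      _ = (μ i : ℂ) • B i := rfl
  -- the symmetric structure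
  have hsym := (Matrix.isHermitian_iff_isSymmetric.mp hF)
  -- per-coordinate bound
  have key : ∀ i, ‖B.repr (Matrix.toEuclideanLin F x) i‖ ≤ (1 - ε₁) * ‖B.repr x i‖ := by
    intro i
    have hrepr : B.repr (Matrix.toEuclideanLin F x) i = (μ i : ℂ) * B.repr x i := by
      rw [B.repr_apply_apply, B.repr_apply_apply]
      rw [← hsym (B i) x, hLB i, inner_smul_left]
      simp [Complex.conj_ofReal]
    rw [hrepr]
    have hnz : (⇑(B i) : Fin d → ℂ) ≠ 0 := by
      intro h0
      have : (B i : EuclideanSpace ℂ (Fin d)) = 0 := WithLp.ofLp_injective 2 (by rw [h0]; rfl)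
      exact B.orthonormal.ne_zero i this
    have hev : F.mulVec (⇑(B i)) = (μ i : ℂ) • (⇑(B i) : Fin d → ℂ) := by
      have h := hF.mulVec_eigenvectorBasis i
      rw [h]; funext j; simp [Pi.smul_apply, Complex.real_smul]; rfl
    rcases hspec (μ i) ⟨⇑(B i), hnz, hev⟩ with h1 | h2 | h3
    · -- μ i = -1 : B i is multiple of fm, coefficient vanishes
      have : F.mulVec (⇑(B i)) = -(⇑(B i)) := by
        rw [hev, h1]; funext j; simp
      obtain ⟨c, hc⟩ := hkerm _ this
      have hrx : B.repr x i = 0 := by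
        rw [B.repr_apply_apply]
        have : (B i : EuclideanSpace ℂ (Fin d)) = c • toE fm := by
          have : (⇑(B i) : Fin d → ℂ) = c • fm := hc
          calc (B i : EuclideanSpace ℂ (Fin d)) = toE (⇑(B i)) := rfl
            _ = toE (c • fm) := by rw [this]
            _ = c • toE fm := rfl
        rw [this, inner_smul_left, hxm, mul_zero]
      rw [hrx]
      simp
    · -- middle band
      have habs : |μ i| ≤ 1 - ε₁ := abs_le.mpr ⟨by linarith [h2.1], h2.2⟩
      rw [norm_mul]
      have : ‖(μ i : ℂ)‖ = |μ i| := by simp [Complex.norm_real]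
      rw [this]
      exact mul_le_mul_of_nonneg_right habs (norm_nonneg _)
    · -- μ i = 1 : B i is multiple of fp
      have : F.mulVec (⇑(B i)) = ⇑(B i) := by
        rw [hev, h3]; funext j; simp
      obtain ⟨c, hc⟩ := hkerp _ this
      have hrx : B.repr x i = 0 := by
        rw [B.repr_apply_apply]
        have : (B i : EuclideanSpace ℂ (Fin d)) = c • toE fp := by
          calc (B i : EuclideanSpace ℂ (Fin d)) = toE (⇑(B i)) := rfl
            _ = toE (c • fp) := by rw [hc]
            _ = c • toE fp := rfl
        rw [this, inner_smul_left, hxp, mul_zero]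
      rw [hrx]
      simp
  -- assemble via the isometry B.repr
  have hnorm : ∀ y : EuclideanSpace ℂ (Fin d),
      ‖y‖ = Real.sqrt (∑ i, ‖B.repr y i‖ ^ 2) := by
    intro y
    rw [← B.repr.norm_map y, EuclideanSpace.norm_eq]
  rw [hnorm (Matrix.toEuclideanLin F x), hnorm x]
  rw [← Real.sqrt_sq hε₁', ← Real.sqrt_mul (sq_nonneg _)]
  apply Real.sqrt_le_sqrt
  rw [Finset.mul_sum]
  apply Finset.sum_le_sum
  intro i _
  have := key i
  have h0 : (0:ℝ) ≤ ‖B.repr x i‖ := norm_nonneg _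
  nlinarith [norm_nonneg (B.repr (Matrix.toEuclideanLin F x) i)]

end TFAux


lemma num1 (e1 e2 A B X Fb Fx : ℝ)
    (he10 : 0 < e1) (he11 : e1 < 1) (he20 : 0 < e2) (he21 : e2 < 1)
    (hA : 0 ≤ A) (hB : 0 ≤ B) (hX : 0 ≤ X) (hFb0 : 0 ≤ Fb) (hFx0 : 0 ≤ Fx)
    (hPx : X * X = A * A + B * B) (hPF : Fx * Fx = A * A + Fb * Fb)
    (hFb : Fb ≤ (1 - e1) * B) (hcase : e2 / 2 * X ≤ B) :
    Fx ≤ (1 - e1 * e2 ^ 2 / 8) * X := by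
  have hs1 : e1 * e2 ^ 2 ≤ 1 := by nlinarith
  have hc : 0 ≤ (1 - e1 * e2 ^ 2 / 8) * X := by nlinarith
  have hFb2 : Fb * Fb ≤ (1 - e1) * B * ((1 - e1) * B) :=
    mul_self_le_mul_self hFb0 hFb
  have hc2 : e2 / 2 * X * (e2 / 2 * X) ≤ B * B :=
    mul_self_le_mul_self (by positivity) hcase
  have hsq : Fx * Fx ≤ ((1 - e1 * e2 ^ 2 / 8) * X) * ((1 - e1 * e2 ^ 2 / 8) * X) := by
    nlinarith [sq_nonneg (e1 * B), sq_nonneg (e1 * e2 ^ 2 * X), sq_nonneg (e2 * X)]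
  nlinarith [sq_nonneg (Fx - (1 - e1 * e2 ^ 2 / 8) * X), sq_nonneg (Fx + (1 - e1 * e2 ^ 2 / 8) * X)]

lemma num2 (e1 e2 A B X : ℝ)
    (he10 : 0 < e1) (he11 : e1 < 1) (he20 : 0 < e2) (he21 : e2 < 1)
    (hA : 0 ≤ A) (hB : 0 ≤ B) (hX : 0 ≤ X)
    (hAX : A ≤ X) (hBX : B ≤ e2 / 2 * X) :
    A * (1 - e2) + B ≤ (1 - e1 * e2 ^ 2 / 8) * X := by
  have h1 : e1 * e2 ≤ 1 := by nlinarith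
  have h2 : 0 ≤ (e2 / 2 - e1 * e2 ^ 2 / 8) * X := by
    apply mul_nonneg _ hX
    nlinarith
  nlinarith [mul_le_mul_of_nonneg_right hAX (by linarith : (0:ℝ) ≤ 1 - e2)]


set_option maxHeartbeats 1000000 in
open TFAux ComplexInnerProductSpace in
/-- The contraction estimate (C.13) in the proof of the TF-Stability Lemma:
`T·F` is a strict contraction on the orthogonal complement of `f₋`. -/
theorem TF_contraction_on_fm_perp
    (d : ℕ) (hd : 1 ≤ d)
    (ε₁ ε₂ : ℝ)
    (hε₁ : ε₁ ∈ Set.Ioo (0 : ℝ) 1) (hε₂ : ε₂ ∈ Set.Ioo (0 : ℝ) 1)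
    (F T : Matrix (Fin d) (Fin d) ℂ)
    (hF : F.IsHermitian) (hT : T.IsHermitian)
    (hTnorm : matOpNorm T ≤ 1)
    (hspec : ∀ μ : ℝ, (∃ v : Fin d → ℂ, v ≠ 0 ∧ F.mulVec v = (μ : ℂ) • v) →
      μ = -1 ∨ (-1 + ε₁ ≤ μ ∧ μ ≤ 1 - ε₁) ∨ μ = 1)
    (fp fm : Fin d → ℂ)
    (hfp : F.mulVec fp = fp) (hfm : F.mulVec fm = -fm)
    (hfpnorm : evnorm fp = 1) (hfmnorm : evnorm fm = 1)
    (hkerp : ∀ v : Fin d → ℂ, F.mulVec v = v → ∃ c : ℂ, v = c • fp)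
    (hkerm : ∀ v : Fin d → ℂ, F.mulVec v = -v → ∃ c : ℂ, v = c • fm)
    (hTfp : evnorm (T.mulVec fp) ≤ 1 - ε₂) :
    ∀ a : Fin d → ℂ, star fm ⬝ᵥ a = 0 →
      evnorm (T.mulVec (F.mulVec a)) ≤ (1 - ε₁ * ε₂ ^ 2 / 8) * evnorm a := by
  intro a ha
  obtain ⟨hε₁0, hε₁1⟩ := hε₁
  obtain ⟨hε₂0, hε₂1⟩ := hε₂
  set u : EuclideanSpace ℂ (Fin d) := toE fp with hu
  set w : EuclideanSpace ℂ (Fin d) := toE fm with hw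
  set x : EuclideanSpace ℂ (Fin d) := toE a with hx
  set LF := Matrix.toEuclideanLin F with hLF
  set LT := Matrix.toEuclideanLin T with hLT
  have hsym := (Matrix.isHermitian_iff_isSymmetric.mp hF)
  have hu1 : ‖u‖ = 1 := by rw [hu, ← evnorm_eq]; exact hfpnorm
  have hfpE : LF u = u := by
    rw [hu, hLF, ← toE_mulVec, hfp]
  have hfmE : LF w = -w := by
    rw [hw, hLF, ← toE_mulVec, hfm]; rfl
  have hwx : ⟪w, x⟫ = 0 := by rw [hw, hx, inner_toE]; exact ha
  have hT1 : ∀ y : EuclideanSpace ℂ (Fin d), ‖LT y‖ ≤ ‖y‖ := fun y =>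
    opnorm_bound T hTnorm (WithLp.equiv 2 (Fin d → ℂ) y)
  have hTu : ‖LT u‖ ≤ 1 - ε₂ := by
    have : LT u = toE (T.mulVec fp) := rfl
    rw [this, ← evnorm_eq]; exact hTfp
  set α : ℂ := ⟪u, x⟫ with hα
  set b : EuclideanSpace ℂ (Fin d) := x - α • u with hb
  have huu : ⟪u, u⟫ = 1 := by
    rw [inner_self_eq_norm_sq_to_K, hu1]; norm_num
  have hub : ⟪u, b⟫ = 0 := by
    rw [hb, inner_sub_right, inner_smul_right, huu, mul_one, ← hα, sub_self]
  have hwu : ⟪w, u⟫ = 0 := by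
    have h := hsym w u
    rw [hfmE, hfpE, inner_neg_left] at h
    have : (2 : ℂ) * ⟪w, u⟫ = 0 := by ring_nf; linear_combination -h
    simpa using this
  have hwb : ⟪w, b⟫ = 0 := by
    rw [hb, inner_sub_right, inner_smul_right, hwu, hwx, mul_zero, sub_zero]
  have hxdec : x = α • u + b := by rw [hb]; abel
  have hαub : ⟪α • u, b⟫ = 0 := by rw [inner_smul_left, hub, mul_zero]
  have hPx : ‖x‖ * ‖x‖ = ‖α‖ * ‖α‖ + ‖b‖ * ‖b‖ := by
    have h := norm_add_sq_eq_norm_sq_add_norm_sq_of_inner_eq_zero (α • u) b hαub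
    rw [← hxdec] at h
    rw [h, norm_smul, hu1, mul_one]
  have hxn : (0:ℝ) ≤ ‖x‖ := norm_nonneg _
  have hαn : (0:ℝ) ≤ ‖α‖ := norm_nonneg _
  have hbn : (0:ℝ) ≤ ‖b‖ := norm_nonneg _
  have hαx : ‖α‖ ≤ ‖x‖ := by nlinarith
  have hbx : ‖b‖ ≤ ‖x‖ := by nlinarith
  have hFb : ‖LF b‖ ≤ (1 - ε₁) * ‖b‖ :=
    Fb_bound ε₁ ⟨hε₁0, hε₁1⟩ F hF hspec fp fm hkerp hkerm b hub hwb
  have hLFx : LF x = α • u + LF b := by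
    rw [hxdec, map_add, LinearMap.map_smul, hfpE]
  -- goal in Euclidean form
  rw [evnorm_eq, evnorm_eq]
  have hgoal : toE (T.mulVec (F.mulVec a)) = LT (LF x) := rfl
  rw [hgoal, ← hx]
  by_cases hcase : (ε₂ / 2) * ‖x‖ ≤ ‖b‖
  · -- b is large: F itself contracts
    have huLFb : ⟪u, LF b⟫ = 0 := by
      rw [← hsym u b, hfpE, hub]
    have hαuLFb : ⟪α • u, LF b⟫ = 0 := by rw [inner_smul_left, huLFb, mul_zero]
    have hPFx : ‖LF x‖ * ‖LF x‖ = ‖α‖ * ‖α‖ + ‖LF b‖ * ‖LF b‖ := by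
      have h := norm_add_sq_eq_norm_sq_add_norm_sq_of_inner_eq_zero (α • u) (LF b) hαuLFb
      rw [← hLFx] at h
      rw [h, norm_smul, hu1, mul_one]
    have hLFxle : ‖LF x‖ ≤ (1 - ε₁ * ε₂ ^ 2 / 8) * ‖x‖ :=
      num1 ε₁ ε₂ ‖α‖ ‖b‖ ‖x‖ ‖LF b‖ ‖LF x‖ hε₁0 hε₁1 hε₂0 hε₂1
        hαn hbn hxn (norm_nonneg _) (norm_nonneg _) hPx hPFx hFb hcase
    exact le_trans (hT1 (LF x)) hLFxle
  · -- α is dominant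
    push_neg at hcase
    have h1 : ‖LT (LF x)‖ ≤ ‖LT (α • u)‖ + ‖LT (LF b)‖ := by
      rw [hLFx, map_add]; exact norm_add_le _ _
    have h2 : ‖LT (α • u)‖ ≤ ‖α‖ * (1 - ε₂) := by
      rw [LinearMap.map_smul, norm_smul]
      exact mul_le_mul_of_nonneg_left hTu hαn
    have h3 : ‖LT (LF b)‖ ≤ ‖b‖ := by
      refine le_trans (hT1 _) (le_trans hFb ?_)
      nlinarith
    calc ‖LT (LF x)‖ ≤ ‖α‖ * (1 - ε₂) + ‖b‖ := by linarith
      _ ≤ (1 - ε₁ * ε₂ ^ 2 / 8) * ‖x‖ :=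
        num2 ε₁ ε₂ ‖α‖ ‖b‖ ‖x‖ hε₁0 hε₁1 hε₂0 hε₂1 hαn hbn hxn hαx hcase.le
end

section
/- For all real δ, C₁, C₂ > 0 there exists ε > 0 (depending only on δ, C₁, C₂) with the following property. Let p, q ≥ 1, let ‖·‖_A be a norm on ℂ^p and ‖·‖_D a norm on ℂ^q, and let T : ℂ^p × ℂ^q → ℂ^p be continuously differentiable with T(0,0) = 0. Denote by D₁T(a,d) and D₂T(a,d) the partial Fréchet derivatives of T at (a,d) in the first and second variable, and equip linear maps with the operator norms induced by ‖·‖_A and ‖·‖_D. Assume D₁T(0,0) is invertible and: (i) ‖Id − (D₁T(0,0))⁻¹ ∘ D₁T(a,d)‖ ≤ 1/2 for all (a,d) with ‖a‖_A < δ and ‖d‖_D < δ; (ii) ‖(D₁T(0,0))⁻¹‖ ≤ C₁; (iii) ‖D₂T(a,d)‖ ≤ C₂ for all (a,d) with ‖a‖_A < δ and ‖d‖_D < δ. Then there is a unique function f from {d : ‖d‖_D < ε} to {a : ‖a‖_A < δ} such that T(f(d), d) = 0 for all d with ‖d‖_D < ε; moreover f is continuously differentiable, and if T is analytic then f is analytic.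 -/
open Matrix

/-- Operator norm of a map `ℂ^p → ℂ^q` induced by the norms `N1` (domain)
and `N2` (codomain). -/
noncomputable def opN {p q : ℕ} (N1 : (Fin p → ℂ) → ℝ) (N2 : (Fin q → ℂ) → ℝ)
    (f : (Fin p → ℂ) → (Fin q → ℂ)) : ℝ :=
  sSup {r : ℝ | ∃ v : Fin p → ℂ, N1 v ≤ 1 ∧ r = N2 (f v)}

/-- Partial Fréchet derivative of `T : ℂ^p × ℂ^q → ℂ^p` in the first variable. -/
noncomputable def pderiv1 {p q : ℕ} (T : (Fin p → ℂ) × (Fin q → ℂ) → (Fin p → ℂ))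
    (a : Fin p → ℂ) (d : Fin q → ℂ) : (Fin p → ℂ) →L[ℝ] (Fin p → ℂ) :=
  fderiv ℝ (fun x => T (x, d)) a

/-- Partial Fréchet derivative of `T : ℂ^p × ℂ^q → ℂ^p` in the second variable. -/
noncomputable def pderiv2 {p q : ℕ} (T : (Fin p → ℂ) × (Fin q → ℂ) → (Fin p → ℂ))
    (a : Fin p → ℂ) (d : Fin q → ℂ) : (Fin q → ℂ) →L[ℝ] (Fin p → ℂ) :=
  fderiv ℝ (fun y => T (a, y)) d


open Metric ContinuousLinearMap

theorem qift_core {E F : Type*} [NormedAddCommGroup E] [NormedSpace ℝ E] [CompleteSpace E]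
    [NormedAddCommGroup F] [NormedSpace ℝ F] [CompleteSpace F]
    (δ C₁ C₂ ε : ℝ) (hδ : 0 < δ) (hC₁ : 0 < C₁) (hC₂ : 0 < C₂)
    (hε : 0 < ε) (hεδ : ε ≤ δ) (hεC : C₁ * (C₂ * ε) ≤ δ / 4)
    (T : E × F → E) (hT : ContDiff ℝ 1 T) (hT0 : T (0, 0) = 0)
    (J : E →L[ℝ] E)
    (hJ1 : J.comp (fderiv ℝ (fun x => T (x, (0:F))) 0) = ContinuousLinearMap.id ℝ E)
    (hJ2 : (fderiv ℝ (fun x => T (x, (0:F))) 0).comp J = ContinuousLinearMap.id ℝ E)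
    (hb1 : ∀ (a : E) (d : F), ‖a‖ < δ → ‖d‖ < δ →
      ‖ContinuousLinearMap.id ℝ E - J.comp (fderiv ℝ (fun x => T (x, d)) a)‖ ≤ 1 / 2)
    (hJle : ‖J‖ ≤ C₁)
    (hb2 : ∀ (a : E) (d : F), ‖a‖ < δ → ‖d‖ < δ →
      ‖fderiv ℝ (fun y => T (a, y)) d‖ ≤ C₂) :
    ∃ f : F → E,
      (∀ d, ‖d‖ < ε → ‖f d‖ ≤ δ / 2 ∧ T (f d, d) = 0)
      ∧ (∀ (d : F) (a : E), ‖d‖ < ε → ‖a‖ < δ → T (a, d) = 0 → a = f d)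
      ∧ ContDiffOn ℝ 1 f {d | ‖d‖ < ε}
      ∧ (AnalyticOnNhd ℝ T Set.univ → AnalyticOnNhd ℝ f {d | ‖d‖ < ε}) := by
  have hTdiff : Differentiable ℝ T := hT.differentiable one_ne_zero
  -- partial derivatives exist
  have hD1 : ∀ (a : E) (d : F),
      HasFDerivAt (fun x => T (x, d)) (fderiv ℝ (fun x => T (x, d)) a) a := by
    intro a d
    exact (((hTdiff (a, d)).comp a
      ((differentiableAt_fun_id).prodMk (differentiableAt_const d)))).hasFDerivAt
  have hD2 : ∀ (a : E) (d : F),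
      HasFDerivAt (fun y => T (a, y)) (fderiv ℝ (fun y => T (a, y)) d) d := by
    intro a d
    exact (((hTdiff (a, d)).comp d
      ((differentiableAt_const a).prodMk (differentiableAt_fun_id)))).hasFDerivAt
  -- the contraction map and its derivative
  have hΦdiff : ∀ (d : F) (a : E),
      HasFDerivAt (fun x => x - J (T (x, d)))
        (ContinuousLinearMap.id ℝ E - J.comp (fderiv ℝ (fun x => T (x, d)) a)) a := by
    intro d a
    exact (hasFDerivAt_id a).sub ((J.hasFDerivAt).comp a (hD1 a d))
  have contraction : ∀ (d : F), ‖d‖ < δ → ∀ a ∈ ball (0:E) δ, ∀ b ∈ ball (0:E) δ,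
      ‖(a - J (T (a, d))) - (b - J (T (b, d)))‖ ≤ 1 / 2 * ‖a - b‖ := by
    intro d hd a ha b hb
    exact Convex.norm_image_sub_le_of_norm_hasFDerivWithin_le
      (fun x _ => (hΦdiff d x).hasFDerivWithinAt)
      (fun x hx => hb1 x d (mem_ball_zero_iff.1 hx) hd) (convex_ball 0 δ) hb ha
  have hT0d : ∀ d : F, ‖d‖ < δ → ‖T (0, d)‖ ≤ C₂ * ‖d‖ := by
    intro d hd
    have := Convex.norm_image_sub_le_of_norm_hasFDerivWithin_le
      (f := fun y => T ((0:E), y))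
      (fun y _ => (hD2 0 y).hasFDerivWithinAt)
      (fun y hy => hb2 0 y (by simpa using hδ) (mem_ball_zero_iff.1 hy)) (convex_ball 0 δ)
      (mem_ball_self hδ) (mem_ball_zero_iff.2 hd)
    have h0 : T (0 : E × F) = 0 := by
      rw [show (0 : E × F) = ((0:E), (0:F)) from rfl]; exact hT0
    simpa [h0, hT0] using this
  -- inverse of J kills zero
  have hJinj : ∀ x : E, J x = 0 → x = 0 := by
    intro x hx
    have := congrArg (fun (M : E →L[ℝ] E) => M x) hJ2
    simp only [ContinuousLinearMap.comp_apply, ContinuousLinearMap.id_apply] at this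
    rw [hx] at this
    simpa using this.symm
  -- fixed points and zeros coincide
  have fixzero : ∀ (d : F) (x : E), x - J (T (x, d)) = x ↔ T (x, d) = 0 := by
    intro d x
    constructor
    · intro h
      exact hJinj _ (by have := sub_eq_self.mp h; exact this)
    · intro h; simp [h]
  -- existence of fixed point
  have exuniq : ∀ d : F, ‖d‖ < ε → ∃ a : E, ‖a‖ ≤ δ / 2 ∧ T (a, d) = 0 := by
    intro d hd
    have hdδ : ‖d‖ < δ := lt_of_lt_of_le hd hεδ
    set Φ : E → E := fun x => x - J (T (x, d)) with hΦ
    have hΦ0 : ‖Φ 0‖ ≤ δ / 4 := by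
      have h1 : ‖J (T (0, d))‖ ≤ ‖J‖ * ‖T (0, d)‖ := J.le_opNorm _
      have h2 := hT0d d hdδ
      have h3 : ‖Φ 0‖ = ‖J (T (0, d))‖ := by simp [hΦ]
      rw [h3]
      have h4 : ‖T (0, d)‖ ≤ C₂ * ε :=
        le_trans h2 (mul_le_mul_of_nonneg_left hd.le hC₂.le)
      have h5 : ‖J‖ * ‖T (0, d)‖ ≤ C₁ * (C₂ * ε) :=
        mul_le_mul hJle h4 (norm_nonneg _) hC₁.le
      linarith
    have hmaps : ∀ x : E, ‖x‖ ≤ δ / 2 → ‖Φ x‖ ≤ δ / 2 := by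
      intro x hx
      have hxδ : x ∈ ball (0:E) δ := mem_ball_zero_iff.2 (by linarith)
      have h0δ : (0:E) ∈ ball (0:E) δ := mem_ball_self hδ
      have hc := contraction d hdδ x hxδ 0 h0δ
      calc ‖Φ x‖ ≤ ‖Φ x - Φ 0‖ + ‖Φ 0‖ := by
            simpa using norm_add_le (Φ x - Φ 0) (Φ 0)
        _ ≤ 1 / 2 * ‖x - 0‖ + δ / 4 := add_le_add hc hΦ0
        _ ≤ δ / 2 := by rw [sub_zero]; linarith
    haveI : CompleteSpace (closedBall (0:E) (δ / 2)) := isClosed_closedBall.completeSpace_coe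
    haveI : Nonempty (closedBall (0:E) (δ / 2)) := ⟨⟨0, mem_closedBall_self (by linarith)⟩⟩
    have hmem : ∀ x : closedBall (0:E) (δ / 2), Φ x.1 ∈ closedBall (0:E) (δ / 2) :=
      fun x => mem_closedBall_zero_iff.2 (hmaps x.1 (mem_closedBall_zero_iff.1 x.2))
    set φ : closedBall (0:E) (δ / 2) → closedBall (0:E) (δ / 2) :=
      fun x => ⟨Φ x.1, hmem x⟩ with hφ
    have hcontr : ContractingWith (1/2 : NNReal) φ := by
      constructor
      · rw [← NNReal.coe_lt_coe]; norm_num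
      · apply LipschitzWith.of_dist_le_mul
        intro x y
        have hx : (x:E) ∈ ball (0:E) δ := by
          have hx2 := mem_closedBall_zero_iff.1 x.2
          exact mem_ball_zero_iff.2 (by linarith)
        have hy : (y:E) ∈ ball (0:E) δ := by
          have hy2 := mem_closedBall_zero_iff.1 y.2
          exact mem_ball_zero_iff.2 (by linarith)
        have hc := contraction d hdδ x hx y hy
        have h12 : ((1/2 : NNReal) : ℝ) = 1/2 := by norm_num
        rw [Subtype.dist_eq, Subtype.dist_eq, dist_eq_norm, dist_eq_norm, h12]
        exact hc
    set a : closedBall (0:E) (δ / 2) := ContractingWith.fixedPoint φ hcontr with ha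
    have hfix : φ a = a := hcontr.fixedPoint_isFixedPt
    have hfix' : Φ a.1 = a.1 := congrArg Subtype.val hfix
    exact ⟨a.1, mem_closedBall_zero_iff.1 a.2, (fixzero d a.1).mp hfix'⟩
  -- uniqueness
  have uniq : ∀ (d : F), ‖d‖ < δ → ∀ (a b : E), ‖a‖ < δ → ‖b‖ < δ →
      T (a, d) = 0 → T (b, d) = 0 → a = b := by
    intro d hd a b haδ hbδ haT hbT
    have h1 := contraction d hd a (mem_ball_zero_iff.2 haδ) b (mem_ball_zero_iff.2 hbδ)
    rw [(fixzero d a).mpr haT, (fixzero d b).mpr hbT] at h1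
    have : ‖a - b‖ = 0 := by linarith [norm_nonneg (a - b)]
    exact sub_eq_zero.mp (norm_eq_zero.mp this)
  classical
  set f : F → E := fun d => if h : ‖d‖ < ε then (exuniq d h).choose else 0 with hf
  have hfd : ∀ d : F, ‖d‖ < ε → ‖f d‖ ≤ δ / 2 ∧ T (f d, d) = 0 := by
    intro d hd
    rw [hf]; simp only [dif_pos hd]
    exact (exuniq d hd).choose_spec
  have hfu : ∀ (d : F) (a : E), ‖d‖ < ε → ‖a‖ < δ → T (a, d) = 0 → a = f d := by
    intro d a hd ha hT'
    exact uniq d (lt_of_lt_of_le hd hεδ) a (f d) ha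
      (lt_of_le_of_lt (hfd d hd).1 (by linarith)) hT' (hfd d hd).2
  -- smoothness via the inverse function theorem
  have key : ∀ (n : WithTop ℕ∞), 1 ≤ n → (∀ x : E × F, ContDiffAt ℝ n T x) →
      ∀ d₀ : F, ‖d₀‖ < ε → ContDiffAt ℝ n f d₀ := by
    intro n hn hTn d₀ hd₀
    have hd₀δ : ‖d₀‖ < δ := lt_of_lt_of_le hd₀ hεδ
    set a₀ : E := f d₀ with ha₀
    have ha₀le : ‖a₀‖ ≤ δ / 2 := (hfd d₀ hd₀).1
    have ha₀δ : ‖a₀‖ < δ := lt_of_le_of_lt ha₀le (by linarith)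
    set x₀ : E × F := (a₀, d₀) with hx₀
    set G : E × F → E × F := fun x => (T x, x.2) with hG
    set D : E × F →L[ℝ] E := fderiv ℝ T x₀ with hD
    have hTd : HasFDerivAt T D x₀ := (hTdiff x₀).hasFDerivAt
    set D₁ : E →L[ℝ] E := D.comp (inl ℝ E F) with hD₁
    set D₂ : F →L[ℝ] E := D.comp (inr ℝ E F) with hD₂
    have h1 : HasFDerivAt (fun a => T (a, d₀)) D₁ a₀ :=
      hTd.comp a₀ (hasFDerivAt_prodMk_left a₀ d₀)
    have hfd1 : fderiv ℝ (fun x => T (x, d₀)) a₀ = D₁ := h1.fderiv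
    -- invertibility of D₁
    have hcontr : ‖1 - J * D₁‖ ≤ 1 / 2 := by
      have := hb1 a₀ d₀ ha₀δ hd₀δ
      rw [hfd1] at this
      simpa [ContinuousLinearMap.mul_def, ContinuousLinearMap.one_def] using this
    set B : E →L[ℝ] E := fderiv ℝ (fun x => T (x, (0:F))) 0 with hB
    have hJB : J * B = 1 := by
      rw [ContinuousLinearMap.mul_def, ContinuousLinearMap.one_def]; exact hJ1
    have hBJ : B * J = 1 := by
      rw [ContinuousLinearMap.mul_def, ContinuousLinearMap.one_def]; exact hJ2
    set u1 : (E →L[ℝ] E)ˣ := Units.oneSub (1 - J * D₁)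
      (lt_of_le_of_lt hcontr (by norm_num)) with hu1
    have hu1val : (u1 : E →L[ℝ] E) = J * D₁ := sub_sub_cancel 1 (J * D₁)
    set Dinv : E →L[ℝ] E := (↑u1⁻¹ : E →L[ℝ] E) * J with hDinv
    have hDinvD : Dinv * D₁ = 1 := by
      rw [hDinv, mul_assoc, ← hu1val]
      exact u1.inv_mul
    have hBD : B * ↑u1 = D₁ := by
      rw [hu1val, ← mul_assoc, hBJ, one_mul]
    have hDDinv : D₁ * Dinv = 1 := by
      rw [← hBD, hDinv, mul_assoc, Units.mul_inv_cancel_left, hBJ]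
    have hDinvD' : ∀ x : E, Dinv (D₁ x) = x := by
      intro x
      have := congrArg (fun (M : E →L[ℝ] E) => M x) hDinvD
      simpa [ContinuousLinearMap.mul_def] using this
    have hDDinv' : ∀ x : E, D₁ (Dinv x) = x := by
      intro x
      have := congrArg (fun (M : E →L[ℝ] E) => M x) hDDinv
      simpa [ContinuousLinearMap.mul_def] using this
    -- decomposition of D
    have hDsplit : ∀ u : E, ∀ v : F, D (u, v) = D₁ u + D₂ v := by
      intro u v
      have : (u, v) = ((u, (0:F)) : E × F) + ((0:E), v) := by simp
      rw [this, map_add]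
      rfl
    -- the full derivative of G as an equivalence
    set M : E × F →L[ℝ] E × F := D.prod (snd ℝ E F) with hM
    set Minv : E × F →L[ℝ] E × F :=
      (Dinv.comp ((fst ℝ E F) - D₂.comp (snd ℝ E F))).prod (snd ℝ E F) with hMinv
    have hMl : Function.LeftInverse Minv M := by
      intro x
      have h2 : D x - D₂ x.2 = D₁ x.1 := by
        rw [show x = (x.1, x.2) from rfl, hDsplit x.1 x.2]
        abel
      simp only [hM, hMinv, ContinuousLinearMap.prod_apply, ContinuousLinearMap.comp_apply,
        ContinuousLinearMap.coe_sub', Pi.sub_apply, ContinuousLinearMap.coe_fst',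
        ContinuousLinearMap.coe_snd']
      rw [h2, hDinvD' x.1]
    have hMr : Function.RightInverse Minv M := by
      intro y
      simp only [hM, hMinv, ContinuousLinearMap.prod_apply, ContinuousLinearMap.comp_apply,
        ContinuousLinearMap.coe_sub', Pi.sub_apply, ContinuousLinearMap.coe_fst',
        ContinuousLinearMap.coe_snd']
      rw [hDsplit _ y.2, hDDinv' (y.1 - D₂ y.2)]
      simp
    set e : (E × F) ≃L[ℝ] (E × F) := ContinuousLinearEquiv.equivOfInverse M Minv hMl hMr
      with he
    have hecoe : (e : (E × F) →L[ℝ] (E × F)) = M := rfl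
    have hGder : HasFDerivAt G (e : (E × F) →L[ℝ] (E × F)) x₀ := by
      rw [hecoe, hM]
      exact hTd.prodMk hasFDerivAt_snd
    have hGc : ContDiffAt ℝ n G x₀ := (hTn x₀).prodMk contDiffAt_snd
    set inv : E × F → E × F := hGc.localInverse hGder (zero_lt_one.trans_le hn).ne' with hinv
    have hinv_cd : ContDiffAt ℝ n inv (G x₀) := hGc.to_localInverse hGder (zero_lt_one.trans_le hn).ne'
    have hGx₀ : G x₀ = ((0:E), d₀) := by
      simp only [hG]
      rw [show x₀ = (a₀, d₀) from rfl, (hfd d₀ hd₀).2]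
    have hinvx₀ : inv (G x₀) = x₀ := hGc.localInverse_apply_image hGder (zero_lt_one.trans_le hn).ne'
    have hri : ∀ᶠ y in nhds (G x₀), G (inv y) = y :=
      (hGc.hasStrictFDerivAt' hGder (zero_lt_one.trans_le hn).ne').eventually_right_inverse
    -- pull back along d ↦ (0, d)
    have hmapd : ContinuousAt (fun d : F => ((0:E), d)) d₀ :=
      (continuous_const.prodMk continuous_id).continuousAt
    have hmapd0 : ((0:E), d₀) = G x₀ := hGx₀.symm
    have ev1 : ∀ᶠ d in nhds d₀, G (inv ((0:E), d)) = ((0:E), d) := by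
      rw [← hmapd0] at hri
      exact Filter.Tendsto.eventually (p := fun y => G (inv y) = y) hmapd.tendsto hri
    have hinvcont : ContinuousAt inv (G x₀) := hinv_cd.continuousAt
    have htend : Filter.Tendsto (fun d : F => (inv ((0:E), d)).1) (nhds d₀) (nhds a₀) := by
      have h1 : Filter.Tendsto (fun d : F => inv ((0:E), d)) (nhds d₀) (nhds (inv (G x₀))) := by
        apply hinvcont.tendsto.comp
        rw [← hmapd0]
        exact hmapd.tendsto
      rw [hinvx₀] at h1
      exact (continuous_fst.tendsto x₀).comp h1
    have ev2 : ∀ᶠ d in nhds d₀, ‖(inv ((0:E), d)).1‖ < δ := by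
      have : {x : E | ‖x‖ < δ} ∈ nhds a₀ := by
        have : IsOpen {x : E | ‖x‖ < δ} := by
          rw [← ball_zero_eq]; exact isOpen_ball
        exact this.mem_nhds ha₀δ
      exact htend this
    have ev3 : ∀ᶠ d in nhds d₀, ‖d‖ < ε := by
      have : IsOpen {d : F | ‖d‖ < ε} := by
        rw [← ball_zero_eq]; exact isOpen_ball
      exact this.mem_nhds hd₀
    have evf : ∀ᶠ d in nhds d₀, f d = (inv ((0:E), d)).1 := by
      filter_upwards [ev1, ev2, ev3] with d h1 h2 h3
      have hsnd : (inv ((0:E), d)).2 = d := congrArg Prod.snd h1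
      have hfst : T (inv ((0:E), d)) = 0 := congrArg Prod.fst h1
      have heq : inv ((0:E), d) = ((inv ((0:E), d)).1, d) := Prod.ext rfl hsnd
      rw [heq] at hfst
      exact ((hfu d _ h3 h2 hfst)).symm
    have hg_cd : ContDiffAt ℝ n (fun d : F => (inv ((0:E), d)).1) d₀ := by
      have h0 : ContDiffAt ℝ n (fun d : F => (((0:E), d) : E × F)) d₀ :=
        contDiffAt_const.prodMk contDiffAt_id
      have hinv_at : ContDiffAt ℝ n inv ((0:E), d₀) := by
        rw [hmapd0]; exact hinv_cd
      exact contDiffAt_fst.comp d₀ (hinv_at.comp d₀ h0)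
    exact hg_cd.congr_of_eventuallyEq evf
  refine ⟨f, hfd, hfu, ?_, ?_⟩
  · intro d hd
    exact (key 1 le_rfl (fun x => hT.contDiffAt) d hd).contDiffWithinAt
  · intro hTa d hd
    have h1 : ContDiffAt ℝ ⊤ f d := by
      refine key ⊤ le_top (fun x => ?_) d hd
      exact (hTa x (Set.mem_univ x)).contDiffAt
    exact h1.analyticAt

/-- Type synonym for `Fin p → ℂ` on which we will install a custom norm. -/
def Syn (p : ℕ) : Type := Fin p → ℂ

section Main

open Metric ContinuousLinearMap

/-- Quantitative implicit function theorem (Lemma C.2 of the paper):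
the size `ε` of the ball on which the implicit function exists depends only on
`δ`, `C₁` and `C₂`.  Here `J` denotes the inverse of the partial derivative
`D₁T(0,0)`. -/
theorem quantitative_implicit_function_theorem
    (δ C₁ C₂ : ℝ) (hδ : 0 < δ) (hC₁ : 0 < C₁) (hC₂ : 0 < C₂) :
    ∃ ε : ℝ, 0 < ε ∧
      ∀ (p q : ℕ), 1 ≤ p → 1 ≤ q →
      ∀ (NA : (Fin p → ℂ) → ℝ) (ND : (Fin q → ℂ) → ℝ),
      (∀ x y : Fin p → ℂ, NA (x + y) ≤ NA x + NA y) →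
      (∀ (c : ℂ) (x : Fin p → ℂ), NA (c • x) = ‖c‖ * NA x) →
      (∀ x : Fin p → ℂ, NA x = 0 → x = 0) →
      (∀ x y : Fin q → ℂ, ND (x + y) ≤ ND x + ND y) →
      (∀ (c : ℂ) (x : Fin q → ℂ), ND (c • x) = ‖c‖ * ND x) →
      (∀ x : Fin q → ℂ, ND x = 0 → x = 0) →
      ∀ T : (Fin p → ℂ) × (Fin q → ℂ) → (Fin p → ℂ),
      ContDiff ℝ 1 T → T (0, 0) = 0 →
      ∀ J : (Fin p → ℂ) →L[ℝ] (Fin p → ℂ),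
      J.comp (pderiv1 T 0 0) = ContinuousLinearMap.id ℝ (Fin p → ℂ) →
      (pderiv1 T 0 0).comp J = ContinuousLinearMap.id ℝ (Fin p → ℂ) →
      (∀ (a : Fin p → ℂ) (d : Fin q → ℂ), NA a < δ → ND d < δ →
        opN NA NA
          (⇑(ContinuousLinearMap.id ℝ (Fin p → ℂ) - J.comp (pderiv1 T a d))) ≤ 1 / 2) →
      opN NA NA (⇑J) ≤ C₁ →
      (∀ (a : Fin p → ℂ) (d : Fin q → ℂ), NA a < δ → ND d < δ →
        opN ND NA (⇑(pderiv2 T a d)) ≤ C₂) →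
      ∃ f : (Fin q → ℂ) → (Fin p → ℂ),
        (∀ d : Fin q → ℂ, ND d < ε → NA (f d) < δ ∧ T (f d, d) = 0)
        ∧ (∀ g : (Fin q → ℂ) → (Fin p → ℂ),
            (∀ d : Fin q → ℂ, ND d < ε → NA (g d) < δ ∧ T (g d, d) = 0) →
            ∀ d : Fin q → ℂ, ND d < ε → g d = f d)
        ∧ ContDiffOn ℝ 1 f {d : Fin q → ℂ | ND d < ε}
        ∧ (AnalyticOnNhd ℝ T Set.univ → AnalyticOnNhd ℝ f {d : Fin q → ℂ | ND d < ε}) := by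
  refine ⟨min δ (δ / (4 * C₁ * C₂)), lt_min hδ (div_pos hδ (by positivity)), ?_⟩
  set ε : ℝ := min δ (δ / (4 * C₁ * C₂)) with hεdef
  have hε : 0 < ε := lt_min hδ (div_pos hδ (by positivity))
  have hεδ : ε ≤ δ := min_le_left _ _
  have hεC : C₁ * (C₂ * ε) ≤ δ / 4 := by
    have h1 : ε ≤ δ / (4 * C₁ * C₂) := min_le_right _ _
    have h2 : C₁ * (C₂ * (δ / (4 * C₁ * C₂))) = δ / 4 := by
      field_simp
    calc C₁ * (C₂ * ε) ≤ C₁ * (C₂ * (δ / (4 * C₁ * C₂))) := by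
          apply mul_le_mul_of_nonneg_left (mul_le_mul_of_nonneg_left h1 hC₂.le) hC₁.le
      _ = δ / 4 := h2
  intro p q hp hq NA ND hNAadd hNAsmul hNA0 hNDadd hNDsmul hND0 T hT hT00 J hJ1 hJ2 hb1 hbJ hb2
  -- instances on the synonym types
  letI : AddCommGroup (Syn p) := inferInstanceAs (AddCommGroup (Fin p → ℂ))
  letI : AddCommGroup (Syn q) := inferInstanceAs (AddCommGroup (Fin q → ℂ))
  letI : NormedAddCommGroup (Syn p) := AddGroupNorm.toNormedAddCommGroup
    { toFun := NA
      map_zero' := by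
        have := hNAsmul 0 0
        simp at this; exact this
      add_le' := hNAadd
      neg' := by
        intro x
        have := hNAsmul (-1) x
        have h : NA (-x) = NA (@HSMul.hSMul ℂ (Fin p → ℂ) (Fin p → ℂ) _ (-1) x) :=
          congrArg NA (neg_one_smul ℂ (M := Fin p → ℂ) x).symm
        rw [h.trans this]; simp
      eq_zero_of_map_eq_zero' := hNA0 }
  letI : NormedAddCommGroup (Syn q) := AddGroupNorm.toNormedAddCommGroup
    { toFun := ND
      map_zero' := by
        have := hNDsmul 0 0
        simp at this; exact this
      add_le' := hNDadd
      neg' := by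
        intro x
        have := hNDsmul (-1) x
        have h : ND (-x) = ND (@HSMul.hSMul ℂ (Fin q → ℂ) (Fin q → ℂ) _ (-1) x) :=
          congrArg ND (neg_one_smul ℂ (M := Fin q → ℂ) x).symm
        rw [h.trans this]; simp
      eq_zero_of_map_eq_zero' := hND0 }
  letI : Module ℝ (Syn p) := (inferInstance : Module ℝ (Fin p → ℂ))
  letI : Module ℝ (Syn q) := (inferInstance : Module ℝ (Fin q → ℂ))
  letI : NormedSpace ℝ (Syn p) :=
    { norm_smul_le := by
        intro r x
        have key : ∀ y : Fin p → ℂ, NA (r • y) = ‖r‖ * NA y := by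
          intro y
          have h1 : r • y = (r : ℂ) • y := by
            funext i
            simp [Pi.smul_apply, Complex.real_smul, smul_eq_mul]
          rw [h1, hNAsmul, Complex.norm_real]
        exact le_of_eq (key x) }
  letI : NormedSpace ℝ (Syn q) :=
    { norm_smul_le := by
        intro r x
        have key : ∀ y : Fin q → ℂ, ND (r • y) = ‖r‖ * ND y := by
          intro y
          have h1 : r • y = (r : ℂ) • y := by
            funext i
            simp [Pi.smul_apply, Complex.real_smul, smul_eq_mul]
          rw [h1, hNDsmul, Complex.norm_real]
        exact le_of_eq (key x) }
  letI : FiniteDimensional ℝ (Syn p) := inferInstanceAs (FiniteDimensional ℝ (Fin p → ℂ))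
  letI : FiniteDimensional ℝ (Syn q) := inferInstanceAs (FiniteDimensional ℝ (Fin q → ℂ))
  letI : CompleteSpace (Syn p) := FiniteDimensional.complete ℝ (Syn p)
  letI : CompleteSpace (Syn q) := FiniteDimensional.complete ℝ (Syn q)
  -- identity continuous linear equivalences
  let eAl : (Fin p → ℂ) ≃ₗ[ℝ] Syn p :=
    { toFun := fun x => x, invFun := fun x => x, map_add' := fun _ _ => rfl,
      map_smul' := fun _ _ => rfl, left_inv := fun _ => rfl, right_inv := fun _ => rfl }
  let eA : (Fin p → ℂ) ≃L[ℝ] Syn p :=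
    { eAl with
      continuous_toFun := eAl.toLinearMap.continuous_of_finiteDimensional
      continuous_invFun := eAl.symm.toLinearMap.continuous_of_finiteDimensional }
  let eDl : (Fin q → ℂ) ≃ₗ[ℝ] Syn q :=
    { toFun := fun x => x, invFun := fun x => x, map_add' := fun _ _ => rfl,
      map_smul' := fun _ _ => rfl, left_inv := fun _ => rfl, right_inv := fun _ => rfl }
  let eD : (Fin q → ℂ) ≃L[ℝ] Syn q :=
    { eDl with
      continuous_toFun := eDl.toLinearMap.continuous_of_finiteDimensional
      continuous_invFun := eDl.symm.toLinearMap.continuous_of_finiteDimensional }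
  -- T in the synonym world
  let T' : Syn p × Syn q → Syn p := fun x => T (x.1, x.2)
  let P : (Syn p × Syn q) →L[ℝ] (Fin p → ℂ) × (Fin q → ℂ) :=
    ((eA.symm : Syn p →L[ℝ] (Fin p → ℂ))).prodMap ((eD.symm : Syn q →L[ℝ] (Fin q → ℂ)))
  have hT' : ContDiff ℝ 1 T' := by
    exact ((eA : (Fin p → ℂ) →L[ℝ] Syn p).contDiff).comp (hT.comp P.contDiff)
  have hT0' : T' (0, 0) = 0 := hT00
  -- J in the synonym world
  let Jl : (Syn p) →ₗ[ℝ] (Syn p) :=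
    { toFun := fun x => J x, map_add' := J.map_add, map_smul' := J.map_smul }
  let J' : Syn p →L[ℝ] Syn p :=
    { toLinearMap := Jl, cont := Jl.continuous_of_finiteDimensional }
  -- derivative transfers
  have hTdiff : Differentiable ℝ T := hT.differentiable one_ne_zero
  have hpd1 : ∀ (a : Syn p) (d : Syn q),
      HasFDerivAt (fun x : Syn p => T' (x, d))
        (((eA : (Fin p → ℂ) →L[ℝ] Syn p)).comp
          ((pderiv1 T a d).comp ((eA.symm : Syn p →L[ℝ] (Fin p → ℂ))))) a := by
    intro a d
    have hstd : HasFDerivAt (fun x : Fin p → ℂ => T (x, eD.symm d))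
        (pderiv1 T (eA.symm a) (eD.symm d)) (eA.symm a) := by
      apply DifferentiableAt.hasFDerivAt
      exact (hTdiff (eA.symm a, eD.symm d)).comp (eA.symm a)
        (differentiableAt_fun_id.prodMk (differentiableAt_const _))
    have h1 : HasFDerivAt (fun x : Syn p => T (eA.symm x, eD.symm d))
        ((pderiv1 T (eA.symm a) (eD.symm d)).comp
          ((eA.symm : Syn p →L[ℝ] (Fin p → ℂ)))) a :=
      HasFDerivAt.comp a hstd ((eA.symm : Syn p →L[ℝ] (Fin p → ℂ)).hasFDerivAt)
    exact HasFDerivAt.comp a ((eA : (Fin p → ℂ) →L[ℝ] Syn p).hasFDerivAt) h1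
  have hpd2 : ∀ (a : Syn p) (d : Syn q),
      HasFDerivAt (fun y : Syn q => T' (a, y))
        (((eA : (Fin p → ℂ) →L[ℝ] Syn p)).comp
          ((pderiv2 T a d).comp ((eD.symm : Syn q →L[ℝ] (Fin q → ℂ))))) d := by
    intro a d
    have hstd : HasFDerivAt (fun y : Fin q → ℂ => T (eA.symm a, y))
        (pderiv2 T (eA.symm a) (eD.symm d)) (eD.symm d) := by
      apply DifferentiableAt.hasFDerivAt
      exact (hTdiff (eA.symm a, eD.symm d)).comp (eD.symm d)
        ((differentiableAt_const _).prodMk differentiableAt_fun_id)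
    have h1 : HasFDerivAt (fun y : Syn q => T (eA.symm a, eD.symm y))
        ((pderiv2 T (eA.symm a) (eD.symm d)).comp
          ((eD.symm : Syn q →L[ℝ] (Fin q → ℂ)))) d :=
      HasFDerivAt.comp d hstd ((eD.symm : Syn q →L[ℝ] (Fin q → ℂ)).hasFDerivAt)
    exact HasFDerivAt.comp d ((eA : (Fin p → ℂ) →L[ℝ] Syn p).hasFDerivAt) h1
  -- operator norm bounds from opN bounds
  have opN_le1 : ∀ (g : Syn p →L[ℝ] Syn p) (gstd : (Fin p → ℂ) → (Fin p → ℂ)),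
      (∀ v : Fin p → ℂ, g v = gstd v) → ∀ c : ℝ, 0 ≤ c → opN NA NA gstd ≤ c → ‖g‖ ≤ c := by
    intro g gstd hg c hc h
    apply ContinuousLinearMap.opNorm_le_of_unit_norm hc
    intro x hx
    have hbdd : BddAbove {r : ℝ | ∃ v : Fin p → ℂ, NA v ≤ 1 ∧ r = NA (gstd v)} := by
      refine ⟨‖g‖, ?_⟩
      rintro r ⟨v, hv, rfl⟩
      have h1 : NA (gstd v) = ‖g v‖ := by rw [← hg v]; rfl
      rw [h1]
      have hv1 : @norm (Syn p) _ v ≤ 1 := hv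
      refine le_trans (g.le_opNorm v) ?_
      exact le_trans (mul_le_mul_of_nonneg_left hv1 (norm_nonneg g)) (le_of_eq (mul_one _))
    have hmem : ‖g x‖ ∈ {r : ℝ | ∃ v : Fin p → ℂ, NA v ≤ 1 ∧ r = NA (gstd v)} := by
      refine ⟨x, le_of_eq hx, ?_⟩
      rw [← hg x]; rfl
    exact le_trans (le_csSup hbdd hmem) h
  have opN_le2 : ∀ (g : Syn q →L[ℝ] Syn p) (gstd : (Fin q → ℂ) → (Fin p → ℂ)),
      (∀ v : Fin q → ℂ, g v = gstd v) → ∀ c : ℝ, 0 ≤ c → opN ND NA gstd ≤ c → ‖g‖ ≤ c := by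
    intro g gstd hg c hc h
    apply ContinuousLinearMap.opNorm_le_of_unit_norm hc
    intro x hx
    have hbdd : BddAbove {r : ℝ | ∃ v : Fin q → ℂ, ND v ≤ 1 ∧ r = NA (gstd v)} := by
      refine ⟨‖g‖, ?_⟩
      rintro r ⟨v, hv, rfl⟩
      have h1 : NA (gstd v) = ‖g v‖ := by rw [← hg v]; rfl
      rw [h1]
      have hv1 : @norm (Syn q) _ v ≤ 1 := hv
      refine le_trans (g.le_opNorm v) ?_
      exact le_trans (mul_le_mul_of_nonneg_left hv1 (norm_nonneg g)) (le_of_eq (mul_one _))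
    have hmem : ‖g x‖ ∈ {r : ℝ | ∃ v : Fin q → ℂ, ND v ≤ 1 ∧ r = NA (gstd v)} := by
      refine ⟨x, le_of_eq hx, ?_⟩
      rw [← hg x]; rfl
    exact le_trans (le_csSup hbdd hmem) h
  -- hypotheses of the core theorem
  have hJ1' : J'.comp (fderiv ℝ (fun x : Syn p => T' (x, (0 : Syn q))) 0) =
      ContinuousLinearMap.id ℝ (Syn p) := by
    rw [(hpd1 0 0).fderiv]
    apply ContinuousLinearMap.ext
    intro v
    exact congrArg (fun (M : (Fin p → ℂ) →L[ℝ] (Fin p → ℂ)) => M v) hJ1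
  have hJ2' : (fderiv ℝ (fun x : Syn p => T' (x, (0 : Syn q))) 0).comp J' =
      ContinuousLinearMap.id ℝ (Syn p) := by
    rw [(hpd1 0 0).fderiv]
    apply ContinuousLinearMap.ext
    intro v
    exact congrArg (fun (M : (Fin p → ℂ) →L[ℝ] (Fin p → ℂ)) => M v) hJ2
  have hb1' : ∀ (a : Syn p) (d : Syn q), ‖a‖ < δ → ‖d‖ < δ →
      ‖ContinuousLinearMap.id ℝ (Syn p) - J'.comp (fderiv ℝ (fun x : Syn p => T' (x, d)) a)‖
        ≤ 1 / 2 := by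
    intro a d ha hd
    rw [(hpd1 a d).fderiv]
    apply opN_le1 _ (⇑(ContinuousLinearMap.id ℝ (Fin p → ℂ) - J.comp (pderiv1 T a d)))
      (fun v => rfl) _ (by norm_num) (hb1 a d ha hd)
  have hJle' : ‖J'‖ ≤ C₁ := opN_le1 J' (⇑J) (fun v => rfl) C₁ hC₁.le hbJ
  have hb2' : ∀ (a : Syn p) (d : Syn q), ‖a‖ < δ → ‖d‖ < δ →
      ‖fderiv ℝ (fun y : Syn q => T' (a, y)) d‖ ≤ C₂ := by
    intro a d ha hd
    rw [(hpd2 a d).fderiv]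
    apply opN_le2 _ (⇑(pderiv2 T a d)) (fun v => rfl) _ hC₂.le (hb2 a d ha hd)
  obtain ⟨f', hfd, hfu, hcd, hana⟩ :=
    qift_core δ C₁ C₂ ε hδ hC₁ hC₂ hε hεδ hεC T' hT' hT0' J' hJ1' hJ2' hb1' hJle' hb2'
  refine ⟨fun d => f' d, ?_, ?_, ?_, ?_⟩
  · intro d hd
    have h := hfd d hd
    exact ⟨lt_of_le_of_lt h.1 (by linarith), h.2⟩
  · intro g hg d hd
    have h1 := hg d hd
    exact hfu d (g d) hd h1.1 h1.2
  · have h1 : ContDiffOn ℝ 1 (⇑eD) {d : Fin q → ℂ | ND d < ε} := eD.contDiff.contDiffOn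
    have h2 : ContDiffOn ℝ 1 (f' ∘ ⇑eD) {d : Fin q → ℂ | ND d < ε} :=
      hcd.comp h1 (fun x hx => hx)
    exact ((eA.symm : Syn p →L[ℝ] (Fin p → ℂ)).contDiff.comp_contDiffOn h2)
  · intro hTa
    have hTa' : AnalyticOnNhd ℝ T' Set.univ := by
      exact ((eA : (Fin p → ℂ) →L[ℝ] Syn p).analyticOnNhd Set.univ).comp
        (hTa.comp (P.analyticOnNhd Set.univ) (Set.mapsTo_univ _ _)) (Set.mapsTo_univ _ _)
    have han := hana hTa'
    have h1 : AnalyticOnNhd ℝ (f' ∘ ⇑eD) {d : Fin q → ℂ | ND d < ε} :=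
      han.comp ((eD : (Fin q → ℂ) →L[ℝ] Syn q).analyticOnNhd _) (fun x hx => hx)
    exact ((eA.symm : Syn p →L[ℝ] (Fin p → ℂ)).analyticOnNhd Set.univ).comp h1
      (Set.mapsTo_univ _ _)

end Main
end

section
/- Let m ≥ 1 and let X₁, …, X_m be independent, identically distributed complex-valued random variables on a probability space with E X₁ = 0 and E|X₁|^a < ∞ for some real a with 1 < a ≤ 2. Then for every δ ∈ (0,1], P( |(1/m)·Σ_{i=1}^m X_i| ≤ (10·E|X₁|^a / (m^{a−1}·δ))^{1/a} ) ≥ 1 − δ. -/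
open MeasureTheory ProbabilityTheory

lemma markov_aux {Ω : Type*} [MeasurableSpace Ω] (μ : Measure Ω) [IsProbabilityMeasure μ]
    {f : Ω → ℝ} (hf : ∀ ω, 0 ≤ f ω) (hfi : Integrable f μ) {ε : ℝ} (hε : 0 < ε) :
    μ {ω | ε ≤ f ω} ≤ ENNReal.ofReal ((∫ ω, f ω ∂μ) / ε) := by
  have h := mul_meas_ge_le_integral_of_nonneg (ae_of_all μ hf) hfi ε
  rw [ENNReal.le_ofReal_iff_toReal_le (measure_ne_top μ _)
    (div_nonneg (integral_nonneg hf) hε.le), le_div_iff₀ hε]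
  simp only [Measure.real] at h
  linarith

lemma norm_sq_complex (z : ℂ) : ‖z‖ ^ 2 = z.re ^ 2 + z.im ^ 2 := by
  rw [Complex.sq_norm, Complex.normSq_apply]; ring

/-- Quantitative law of large numbers (Proposition B.1 of the paper): for centred
i.i.d. complex random variables `X₁, …, X_m` with finite `a`-th moment, `1 < a ≤ 2`,
the average `(1/m)·Σ Xᵢ` is bounded by `(10·E|X₁|^a/(m^{a−1}·δ))^{1/a}` with
probability at least `1 − δ`. -/
theorem quantitative_law_of_large_numbers
    (Ω : Type*) [MeasurableSpace Ω] (μ : Measure Ω) [IsProbabilityMeasure μ]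
    (m : ℕ) (hm : 0 < m) (a : ℝ) (ha1 : 1 < a) (ha2 : a ≤ 2)
    (X : Fin m → Ω → ℂ)
    (hmeas : ∀ i, Measurable (X i))
    (hindep : iIndepFun X μ)
    (hident : ∀ i, IdentDistrib (X i) (X ⟨0, hm⟩) μ μ)
    (hint : Integrable (fun ω => ‖X ⟨0, hm⟩ ω‖ ^ a) μ)
    (hmean : ∫ ω, X ⟨0, hm⟩ ω ∂μ = 0) :
    ∀ δ : ℝ, δ ∈ Set.Ioc (0 : ℝ) 1 →
      ENNReal.ofReal (1 - δ) ≤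
        μ {ω | ‖(m : ℂ)⁻¹ * ∑ i, X i ω‖ ≤
          (10 * (∫ ω, ‖X ⟨0, hm⟩ ω‖ ^ a ∂μ) / ((m : ℝ) ^ (a - 1) * δ)) ^ (1 / a)} := by
  intro δ hδ
  obtain ⟨hδ0, hδ1⟩ := hδ
  set i0 : Fin m := ⟨0, hm⟩ with hi0
  set A : ℝ := ∫ ω, ‖X i0 ω‖ ^ a ∂μ with hA
  set t : ℝ := (10 * A / ((m : ℝ) ^ (a - 1) * δ)) ^ (1 / a) with ht
  have ha0 : (0:ℝ) < a := by linarith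
  have hA0 : 0 ≤ A := integral_nonneg fun ω => Real.rpow_nonneg (norm_nonneg _) a
  -- measurability of the target set
  have hXsum : Measurable fun ω => (m : ℂ)⁻¹ * ∑ i, X i ω :=
    measurable_const.mul (Finset.measurable_sum _ fun i _ => hmeas i)
  have hSmeas : MeasurableSet {ω | ‖(m : ℂ)⁻¹ * ∑ i, X i ω‖ ≤ t} :=
    measurableSet_le hXsum.norm measurable_const
  suffices h : μ {ω | ‖(m : ℂ)⁻¹ * ∑ i, X i ω‖ ≤ t}ᶜ ≤ ENNReal.ofReal δ by
    have e1 : ENNReal.ofReal (1 - δ) + ENNReal.ofReal δ = 1 := by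
      rw [← ENNReal.ofReal_add (by linarith) hδ0.le]; norm_num
    have h2 := measure_add_measure_compl (μ := μ) hSmeas
    rw [measure_univ] at h2
    calc ENNReal.ofReal (1 - δ) = 1 - ENNReal.ofReal δ := by
          rw [← ENNReal.ofReal_one, ← ENNReal.ofReal_sub _ hδ0.le]
      _ ≤ 1 - μ {ω | ‖(m : ℂ)⁻¹ * ∑ i, X i ω‖ ≤ t}ᶜ := tsub_le_tsub_left h 1
      _ ≤ μ {ω | ‖(m : ℂ)⁻¹ * ∑ i, X i ω‖ ≤ t} := tsub_le_iff_right.mpr h2.symm.le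
  rcases eq_or_lt_of_le hA0 with hA0' | hApos
  · -- degenerate case : A = 0, all variables vanish a.e.
    have ht0 : t = 0 := by
      rw [ht, ← hA0', mul_zero, zero_div, Real.zero_rpow (by positivity)]
    have h00 : μ (X i0 ⁻¹' {0}ᶜ) = 0 := by
      have h1 : (fun ω => ‖X i0 ω‖ ^ a) =ᵐ[μ] 0 :=
        (integral_eq_zero_iff_of_nonneg
          (fun ω => Real.rpow_nonneg (norm_nonneg _) a) hint).1 hA0'.symm
      have h2 : ∀ᵐ ω ∂μ, X i0 ω = 0 := by
        filter_upwards [h1] with ω hω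
        have h3 : ‖X i0 ω‖ ^ a = 0 := by simpa using hω
        have h4 := (Real.rpow_eq_zero (norm_nonneg _) (ne_of_gt ha0)).1 h3
        simpa using h4
      have h5 := ae_iff.1 h2
      exact h5
    have hnull : μ {ω | ∃ i, X i ω ≠ 0} = 0 := by
      have : {ω | ∃ i, X i ω ≠ 0} = ⋃ i, X i ⁻¹' {0}ᶜ := by
        ext ω; simp [Set.mem_iUnion]
      rw [this]
      refine measure_iUnion_null fun i => ?_
      have := (hident i).measure_mem_eq (MeasurableSet.compl (measurableSet_singleton (0:ℂ)))
      rw [this]; exact h00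
    refine le_trans (le_of_eq (measure_mono_null ?_ hnull)) zero_le
    intro ω hω
    simp only [Set.mem_compl_iff, Set.mem_setOf_eq, not_le] at hω
    by_contra hc
    simp only [Set.mem_setOf_eq, not_exists, not_not] at hc
    rw [ht0] at hω
    have hz : (∑ i, X i ω) = 0 := Finset.sum_eq_zero fun i _ => hc i
    rw [hz, mul_zero, norm_zero] at hω
    exact lt_irrefl 0 hω
  · -- main case : 0 < A
    have hm0 : (0:ℝ) < m := Nat.cast_pos.mpr hm
    have hmapos : (0:ℝ) < (m:ℝ) ^ (a-1) := Real.rpow_pos_of_pos hm0 _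
    have hbase : 0 < 10 * A / ((m:ℝ)^(a-1) * δ) := by positivity
    have htpos : 0 < t := by rw [ht]; exact Real.rpow_pos_of_pos hbase _
    have hta : t ^ a = 10 * A / ((m:ℝ)^(a-1) * δ) := by
      rw [ht, ← Real.rpow_mul hbase.le, one_div, inv_mul_cancel₀ (ne_of_gt ha0), Real.rpow_one]
    clear_value t A
    set M : ℝ := m * t with hM
    have hMpos : 0 < M := mul_pos hm0 htpos
    have hma : (m:ℝ) ^ a = (m:ℝ)^(a-1) * m := by
      have h1 : a = (a-1) + 1 := by ring
      rw [h1, Real.rpow_add hm0, Real.rpow_one]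
      ring_nf
    have hMa : M ^ a = 10 * m * A / δ := by
      rw [hM, Real.mul_rpow hm0.le htpos.le, hta, hma]
      field_simp
    have hMapos : 0 < M ^ a := Real.rpow_pos_of_pos hMpos a
    clear_value M
    -- truncation
    set g : ℂ → ℂ := fun z => if ‖z‖ ≤ M then z else 0 with hgdef
    have hgmeas : Measurable g :=
      Measurable.ite (measurableSet_le measurable_norm measurable_const)
        measurable_id measurable_const
    set Y : Fin m → Ω → ℂ := fun i ω => g (X i ω) with hYdef
    have hYmeas : ∀ i, Measurable (Y i) := fun i => hgmeas.comp (hmeas i)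
    have hYbound : ∀ i ω, ‖Y i ω‖ ≤ M := by
      intro i ω
      simp only [hYdef, hgdef]
      split_ifs with h
      · exact h
      · simp [hMpos.le]
    have hYmem : ∀ i, MemLp (Y i) 2 μ := fun i =>
      MemLp.of_bound (hYmeas i).aestronglyMeasurable M (ae_of_all μ (hYbound i))
    have hYint : ∀ i, Integrable (Y i) μ := fun i => (hYmem i).integrable one_le_two
    have hYident : ∀ i, IdentDistrib (Y i) (Y i0) μ μ := fun i => (hident i).comp hgmeas
    -- real and imaginary parts
    set Rp : Fin m → Ω → ℝ := fun i ω => (Y i ω).re with hRpdef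
    set Ip : Fin m → Ω → ℝ := fun i ω => (Y i ω).im with hIpdef
    have hRmeas : ∀ i, Measurable (Rp i) := fun i => Complex.measurable_re.comp (hYmeas i)
    have hImeas : ∀ i, Measurable (Ip i) := fun i => Complex.measurable_im.comp (hYmeas i)
    have hRmem : ∀ i, MemLp (Rp i) 2 μ := fun i =>
      MemLp.of_bound (hRmeas i).aestronglyMeasurable M (ae_of_all μ fun ω => by
        rw [Real.norm_eq_abs]
        exact le_trans (Complex.abs_re_le_norm _)
          (hYbound i ω))
    have hImem : ∀ i, MemLp (Ip i) 2 μ := fun i =>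
      MemLp.of_bound (hImeas i).aestronglyMeasurable M (ae_of_all μ fun ω => by
        rw [Real.norm_eq_abs]
        exact le_trans (Complex.abs_im_le_norm _)
          (hYbound i ω))
    have hRident : ∀ i, IdentDistrib (Rp i) (Rp i0) μ μ := fun i =>
      (hident i).comp (Complex.measurable_re.comp hgmeas)
    have hIident : ∀ i, IdentDistrib (Ip i) (Ip i0) μ μ := fun i =>
      (hident i).comp (Complex.measurable_im.comp hgmeas)
    -- independence of the parts
    have hRindep : iIndepFun Rp μ :=
      hindep.comp (fun _ z => (g z).re) (fun _ => Complex.measurable_re.comp hgmeas)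
    have hIindep : iIndepFun Ip μ :=
      hindep.comp (fun _ z => (g z).im) (fun _ => Complex.measurable_im.comp hgmeas)
    clear_value g Y Rp Ip
    -- second moment bound for the truncated variable
    have hsqptw : ∀ ω, ‖Y i0 ω‖^2 ≤ M^(2-a) * ‖X i0 ω‖^a := by
      intro ω
      simp only [hYdef, hgdef]
      split_ifs with h
      · have hx0 : (0:ℝ) ≤ ‖X i0 ω‖ := norm_nonneg _
        have e2 : ‖X i0 ω‖^(2:ℝ) = ‖X i0 ω‖^a * ‖X i0 ω‖^(2-a) := by
          rw [← Real.rpow_add_of_nonneg hx0 ha0.le (by linarith)]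
          norm_num
        have e3 : ‖X i0 ω‖^(2-a) ≤ M^(2-a) := Real.rpow_le_rpow hx0 h (by linarith)
        calc ‖X i0 ω‖^2 = ‖X i0 ω‖^(2:ℝ) := (Real.rpow_two _).symm
          _ = ‖X i0 ω‖^a * ‖X i0 ω‖^(2-a) := e2
          _ ≤ ‖X i0 ω‖^a * M^(2-a) :=
            mul_le_mul_of_nonneg_left e3 (Real.rpow_nonneg hx0 a)
          _ = M^(2-a) * ‖X i0 ω‖^a := mul_comm _ _
      · simpa using mul_nonneg (Real.rpow_nonneg hMpos.le (2-a)) (Real.rpow_nonneg (norm_nonneg (X i0 ω)) a)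
    have hYsqint : Integrable (fun ω => ‖Y i0 ω‖^2) μ := by
      refine Integrable.mono' (integrable_const (M^2))
        ((hYmeas i0).norm.pow_const 2).aestronglyMeasurable (ae_of_all μ fun ω => ?_)
      rw [Real.norm_eq_abs, abs_of_nonneg (by positivity)]
      exact pow_le_pow_left₀ (norm_nonneg _) (hYbound i0 ω) 2
    have hB2 : ∫ ω, ‖Y i0 ω‖^2 ∂μ ≤ M^(2-a) * A := by
      rw [hA]
      have h1 := integral_mono hYsqint (hint.const_mul (M^(2-a))) hsqptw
      rwa [integral_const_mul] at h1
    -- variance bounds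
    have hvar1 : variance (Rp i0) μ + variance (Ip i0) μ ≤ M^(2-a) * A := by
      have hR2 : variance (Rp i0) μ ≤ ∫ ω, (Rp i0 ω)^2 ∂μ :=
        variance_le_expectation_sq (hRmeas i0).aestronglyMeasurable
      have hI2 : variance (Ip i0) μ ≤ ∫ ω, (Ip i0 ω)^2 ∂μ :=
        variance_le_expectation_sq (hImeas i0).aestronglyMeasurable
      have hadd : (∫ ω, (Rp i0 ω)^2 ∂μ) + (∫ ω, (Ip i0 ω)^2 ∂μ) = ∫ ω, ‖Y i0 ω‖^2 ∂μ := by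
        rw [← integral_add (hRmem i0).integrable_sq (hImem i0).integrable_sq]
        refine integral_congr_ae (ae_of_all μ fun ω => ?_)
        show Rp i0 ω ^ 2 + Ip i0 ω ^ 2 = ‖Y i0 ω‖ ^ 2
        simp only [hRpdef, hIpdef, norm_sq_complex]
      linarith
    -- the sums of the parts
    set S : Ω → ℝ := fun ω => ∑ i, Rp i ω with hSdef
    set T : Ω → ℝ := fun ω => ∑ i, Ip i ω with hTdef
    have hSfun : S = ∑ i, Rp i := by funext ω; rw [hSdef]; simp
    have hTfun : T = ∑ i, Ip i := by funext ω; rw [hTdef]; simp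
    have hSmem2 : MemLp S 2 μ := by rw [hSfun]; exact memLp_finset_sum' _ fun i _ => hRmem i
    have hTmem2 : MemLp T 2 μ := by rw [hTfun]; exact memLp_finset_sum' _ fun i _ => hImem i
    have hVarS : variance S μ = ∑ i, variance (Rp i) μ := by
      rw [hSfun]
      exact IndepFun.variance_sum (fun i _ => hRmem i)
        (fun i _ j _ hij => hRindep.indepFun hij)
    have hVarT : variance T μ = ∑ i, variance (Ip i) μ := by
      rw [hTfun]
      exact IndepFun.variance_sum (fun i _ => hImem i)
        (fun i _ j _ hij => hIindep.indepFun hij)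
    clear_value S T
    set ES : ℝ := ∫ ω, S ω ∂μ with hES
    set ET : ℝ := ∫ ω, T ω ∂μ with hET
    clear_value ES ET
    have hSsqint : Integrable (fun ω => (S ω - ES)^2) μ := by
      have h1 := (hSmem2.sub (memLp_const ES)).integrable_sq
      simpa using h1
    have hTsqint : Integrable (fun ω => (T ω - ET)^2) μ := by
      have h1 := (hTmem2.sub (memLp_const ET)).integrable_sq
      simpa using h1
    have hWint : Integrable (fun ω => (S ω - ES)^2 + (T ω - ET)^2) μ := hSsqint.add hTsqint
    have hvarS_eq : variance S μ = ∫ ω, (S ω - ES)^2 ∂μ := by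
      rw [variance_eq_integral hSmem2.1.aemeasurable, hES]
    have hvarT_eq : variance T μ = ∫ ω, (T ω - ET)^2 ∂μ := by
      rw [variance_eq_integral hTmem2.1.aemeasurable, hET]
    -- key numeric identity
    have hkey2 : (m:ℝ) * (M^(2-a) * A) = δ * M^2 / 10 := by
      rw [Real.rpow_sub hMpos, Real.rpow_two, hMa]
      field_simp [hδ0.ne']
    have hintW : ∫ ω, ((S ω - ES)^2 + (T ω - ET)^2) ∂μ ≤ δ * M^2 / 10 := by
      rw [integral_add hSsqint hTsqint, ← hvarS_eq, ← hvarT_eq, hVarS, hVarT]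
      have h1 : ∀ i : Fin m, variance (Rp i) μ = variance (Rp i0) μ :=
        fun i => (hRident i).variance_eq
      have h2 : ∀ i : Fin m, variance (Ip i) μ = variance (Ip i0) μ :=
        fun i => (hIident i).variance_eq
      rw [Finset.sum_congr rfl fun i _ => h1 i, Finset.sum_congr rfl fun i _ => h2 i,
        Finset.sum_const, Finset.sum_const, Finset.card_univ, Fintype.card_fin,
        nsmul_eq_mul, nsmul_eq_mul, ← hkey2, ← mul_add]
      exact mul_le_mul_of_nonneg_left hvar1 hm0.le
    -- Chebyshev part
    set ε2 : ℝ := ((9/10) * M)^2 with hε2def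
    have hε2pos : 0 < ε2 := by rw [hε2def]; exact pow_pos (mul_pos (by norm_num) hMpos) 2
    clear_value ε2
    have hE2 : μ {ω | ε2 ≤ (S ω - ES)^2 + (T ω - ET)^2} ≤ ENNReal.ofReal (10*δ/81) := by
      refine le_trans (markov_aux μ (fun ω => by positivity) hWint hε2pos) ?_
      refine ENNReal.ofReal_le_ofReal ?_
      rw [div_le_iff₀ hε2pos]
      refine le_trans hintW (le_of_eq ?_)
      rw [hε2def]
      ring
    -- tail part
    have hE1i : ∀ i, μ {ω | M < ‖X i ω‖} ≤ ENNReal.ofReal (A / M^a) := by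
      intro i
      have heq : μ {ω | M < ‖X i ω‖} = μ {ω | M < ‖X i0 ω‖} :=
        (hident i).measure_mem_eq (s := {z : ℂ | M < ‖z‖})
          (measurableSet_lt measurable_const measurable_norm)
      rw [heq, hA]
      refine le_trans (measure_mono ?_)
        (markov_aux μ (fun ω => Real.rpow_nonneg (norm_nonneg _) a) hint hMapos)
      intro ω hω
      exact Real.rpow_le_rpow hMpos.le (le_of_lt hω) ha0.le
    have hE1 : μ {ω | ∃ i, M < ‖X i ω‖} ≤ ENNReal.ofReal (δ/10) := by
      have hcup : {ω | ∃ i, M < ‖X i ω‖} = ⋃ i, {ω | M < ‖X i ω‖} := by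
        ext ω; simp
      rw [hcup]
      refine le_trans (measure_iUnion_le _) ?_
      rw [tsum_fintype]
      calc ∑ i : Fin m, μ {ω | M < ‖X i ω‖}
          ≤ ∑ _i : Fin m, ENNReal.ofReal (A / M^a) := Finset.sum_le_sum fun i _ => hE1i i
        _ = (m:ENNReal) * ENNReal.ofReal (A / M^a) := by
            rw [Finset.sum_const, Finset.card_univ, Fintype.card_fin, nsmul_eq_mul]
        _ = ENNReal.ofReal ((m:ℝ) * (A / M^a)) := by
            rw [ENNReal.ofReal_mul hm0.le, ENNReal.ofReal_natCast]
        _ = ENNReal.ofReal (δ/10) := by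
            congr 1
            rw [hMa]
            field_simp
    -- mean bound
    have hXint0 : Integrable (X i0) μ := by
      refine Integrable.mono' ((integrable_const (1:ℝ)).add hint)
        (hmeas i0).aestronglyMeasurable (ae_of_all μ fun ω => ?_)
      simp only [Pi.add_apply]
      rcases le_or_gt (‖X i0 ω‖) 1 with h | h
      · have := Real.rpow_nonneg (norm_nonneg (X i0 ω)) a
        linarith
      · have h2 := Real.rpow_le_rpow_of_exponent_le h.le ha1.le
        rw [Real.rpow_one] at h2
        linarith
    have hZptw : ∀ ω, ‖X i0 ω - Y i0 ω‖ ≤ M^((1:ℝ)-a) * ‖X i0 ω‖^a := by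
      intro ω
      simp only [hYdef, hgdef]
      split_ifs with h
      · simp only [sub_self, norm_zero]
        exact mul_nonneg (Real.rpow_nonneg hMpos.le _) (Real.rpow_nonneg (norm_nonneg _) _)
      · rw [sub_zero]
        push_neg at h
        have hxpos : 0 < ‖X i0 ω‖ := lt_trans hMpos h
        have h1 : ‖X i0 ω‖^((1:ℝ)-a) ≤ M^((1:ℝ)-a) :=
          Real.rpow_le_rpow_of_nonpos hMpos h.le (by linarith)
        have h2 : ‖X i0 ω‖ = ‖X i0 ω‖^a * ‖X i0 ω‖^((1:ℝ)-a) := by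
          rw [← Real.rpow_add hxpos]
          norm_num
        calc ‖X i0 ω‖ = ‖X i0 ω‖^a * ‖X i0 ω‖^((1:ℝ)-a) := h2
          _ ≤ ‖X i0 ω‖^a * M^((1:ℝ)-a) :=
            mul_le_mul_of_nonneg_left h1 (Real.rpow_nonneg (norm_nonneg _) a)
          _ = M^((1:ℝ)-a) * ‖X i0 ω‖^a := mul_comm _ _
    have hZint : Integrable (fun ω => X i0 ω - Y i0 ω) μ := hXint0.sub (hYint i0)
    set EY : ℂ := ∫ ω, Y i0 ω ∂μ with hEYdef
    clear_value EY
    have hEYb : ‖EY‖ ≤ δ * t / 10 := by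
      have h1 : EY = - ∫ ω, (X i0 ω - Y i0 ω) ∂μ := by
        rw [integral_sub hXint0 (hYint i0), hmean, hEYdef]
        ring
      rw [h1, norm_neg]
      refine le_trans (norm_integral_le_integral_norm _) ?_
      refine le_trans (integral_mono hZint.norm (hint.const_mul _) hZptw) ?_
      rw [integral_const_mul, ← hA]
      have h3 : M^((1:ℝ)-a) = M / M^a := by
        rw [Real.rpow_sub hMpos, Real.rpow_one]
      refine le_of_eq ?_
      rw [h3, hMa, hM]
      field_simp [hδ0.ne', hApos.ne', hm0.ne']
    -- the expectation of the sums
    have hintRe : ∀ i, ∫ ω, Rp i ω ∂μ = EY.re := by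
      intro i
      have h1 := integral_re (hYint i)
      have h2 : ∫ ω, Y i ω ∂μ = EY := by rw [hEYdef]; exact (hYident i).integral_eq
      rw [h2] at h1
      simpa [hRpdef] using h1
    have hintIm : ∀ i, ∫ ω, Ip i ω ∂μ = EY.im := by
      intro i
      have h1 := integral_im (hYint i)
      have h2 : ∫ ω, Y i ω ∂μ = EY := by rw [hEYdef]; exact (hYident i).integral_eq
      rw [h2] at h1
      simpa [hIpdef] using h1
    have hESval : ES = m * EY.re := by
      rw [hES, hSdef]
      rw [integral_finset_sum _ fun i _ => (hRmem i).integrable one_le_two]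
      rw [Finset.sum_congr rfl fun i _ => hintRe i, Finset.sum_const, Finset.card_univ,
        Fintype.card_fin, nsmul_eq_mul]
    have hETval : ET = m * EY.im := by
      rw [hET, hTdef]
      rw [integral_finset_sum _ fun i _ => (hImem i).integrable one_le_two]
      rw [Finset.sum_congr rfl fun i _ => hintIm i, Finset.sum_const, Finset.card_univ,
        Fintype.card_fin, nsmul_eq_mul]
    -- inclusion of the bad event
    have hincl : {ω | ‖(m:ℂ)⁻¹ * ∑ i, X i ω‖ ≤ t}ᶜ ⊆
        {ω | ∃ i, M < ‖X i ω‖} ∪ {ω | ε2 ≤ (S ω - ES)^2 + (T ω - ET)^2} := by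
      intro ω hω
      simp only [Set.mem_compl_iff, Set.mem_setOf_eq, not_le] at hω
      by_contra hc
      simp only [Set.mem_union, Set.mem_setOf_eq, not_or, not_exists, not_lt, not_le] at hc
      obtain ⟨hc1, hc2⟩ := hc
      have hYX : ∀ i, Y i ω = X i ω := by
        intro i
        simp only [hYdef, hgdef]
        rw [if_pos (hc1 i)]
      have hre : ((∑ i, Y i ω) - (m:ℂ)*EY).re = S ω - ES := by
        simp only [Complex.sub_re, Complex.re_sum, Complex.mul_re, Complex.natCast_re,
          Complex.natCast_im, hESval, hSdef, hRpdef]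
        ring
      have him : ((∑ i, Y i ω) - (m:ℂ)*EY).im = T ω - ET := by
        simp only [Complex.sub_im, Complex.im_sum, Complex.mul_im, Complex.natCast_re,
          Complex.natCast_im, hETval, hTdef, hIpdef]
        ring
      have hv : ‖(∑ i, Y i ω) - (m:ℂ)*EY‖^2 = (S ω - ES)^2 + (T ω - ET)^2 := by
        rw [norm_sq_complex, hre, him]
      have hvlt : ‖(∑ i, Y i ω) - (m:ℂ)*EY‖ < (9/10)*M := by
        refine lt_of_pow_lt_pow_left₀ 2 (mul_nonneg (by norm_num) hMpos.le) ?_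
        rw [hv, ← hε2def]
        exact hc2
      have hmEY : ‖(m:ℂ)*EY‖ ≤ (1/10)*M := by
        rw [norm_mul, Complex.norm_natCast]
        calc (m:ℝ) * ‖EY‖ ≤ m * (δ*t/10) :=
            mul_le_mul_of_nonneg_left hEYb hm0.le
          _ = (δ/10) * ((m:ℝ)*t) := by ring
          _ ≤ (1/10) * ((m:ℝ)*t) := by
              refine mul_le_mul_of_nonneg_right (by linarith) ?_
              exact (mul_pos hm0 htpos).le
          _ = (1/10)*M := by rw [hM]
      have hsum : ‖∑ i, X i ω‖ < M := by
        have hrw : (∑ i, X i ω) = ((∑ i, Y i ω) - (m:ℂ)*EY) + (m:ℂ)*EY := by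
          rw [Finset.sum_congr rfl fun i _ => (hYX i).symm]
          ring
        rw [hrw]
        calc ‖((∑ i, Y i ω) - (m:ℂ)*EY) + (m:ℂ)*EY‖
            ≤ ‖(∑ i, Y i ω) - (m:ℂ)*EY‖ + ‖(m:ℂ)*EY‖ := norm_add_le _ _
          _ < (9/10)*M + (1/10)*M := by linarith
          _ = M := by ring
      have havg : ‖(m:ℂ)⁻¹ * ∑ i, X i ω‖ < t := by
        rw [norm_mul, norm_inv, Complex.norm_natCast]
        rw [inv_mul_lt_iff₀ hm0]
        rw [hM] at hsum
        exact hsum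
      exact absurd hω (not_lt.2 havg.le)
    refine le_trans (measure_mono hincl) (le_trans (measure_union_le _ _) ?_)
    refine le_trans (add_le_add hE1 hE2) ?_
    rw [← ENNReal.ofReal_add (by linarith) (by linarith)]
    exact ENNReal.ofReal_le_ofReal (by linarith)
end

section
/- Let N ≥ 1, let H ∈ Matrix N N ℂ be Hermitian with det H ≠ 0, and let T > 0. Then for every η > 0 the matrix H − i·η·1 is invertible, and log|det H| = − ∫₀^T Im( tr( (H − i·η·1)⁻¹ ) ) dη + log|det( H − i·T·1 )|. -/
open Matrix MeasureTheory

private lemma scalar_cont (lam : ℝ) (hlam : lam ≠ 0) :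
    Continuous fun η : ℝ => η / (lam ^ 2 + η ^ 2) := by
  have hpos : ∀ η : ℝ, 0 < lam ^ 2 + η ^ 2 := fun η => by positivity
  exact continuous_id.div (by continuity) (fun η => (hpos η).ne')

private lemma scalar_integral (lam T : ℝ) (hlam : lam ≠ 0) (hT : 0 < T) :
    ∫ η in Set.Ioo (0:ℝ) T, η / (lam ^ 2 + η ^ 2)
      = (1/2) * Real.log (lam ^ 2 + T ^ 2) - Real.log |lam| := by
  have hpos : ∀ η : ℝ, 0 < lam ^ 2 + η ^ 2 := fun η => by positivity
  have hcont := scalar_cont lam hlam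
  have hderiv : ∀ η ∈ Set.uIcc (0:ℝ) T,
      HasDerivAt (fun x : ℝ => (1/2) * Real.log (lam ^ 2 + x ^ 2))
        (η / (lam ^ 2 + η ^ 2)) η := by
    intro η _
    have h1 : HasDerivAt (fun x : ℝ => lam ^ 2 + x ^ 2) (2 * η) η := by
      simpa using ((hasDerivAt_pow 2 η).const_add (lam ^ 2))
    have h2 := (Real.hasDerivAt_log (hpos η).ne').comp η h1
    have h3 : HasDerivAt (fun x : ℝ => (1/2) * Real.log (lam ^ 2 + x ^ 2))
        ((1/2) * ((lam ^ 2 + η ^ 2)⁻¹ * (2 * η))) η := by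
      simpa [Function.comp] using h2.const_mul (1/2 : ℝ)
    convert h3 using 1
    field_simp
  have key := intervalIntegral.integral_eq_sub_of_hasDerivAt hderiv
    (hcont.intervalIntegrable 0 T)
  rw [intervalIntegral.integral_of_le hT.le] at key
  rw [← MeasureTheory.integral_Ioc_eq_integral_Ioo, key]
  have h0 : lam ^ 2 + (0:ℝ) ^ 2 = |lam| ^ 2 := by rw [sq_abs]; ring
  simp only [h0, Real.log_pow]
  push_cast
  ring

/-- Identity (3.4) of the paper: for a Hermitian matrix `H` with `det H ≠ 0` and any
`T > 0`, the resolvent `(H − iη·1)⁻¹` exists for all `η > 0` and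
`log|det H| = −∫₀^T Im tr (H − iη·1)⁻¹ dη + log|det (H − iT·1)|`. -/
theorem log_det_via_resolvent
    (N : ℕ) (hN : 1 ≤ N)
    (H : Matrix (Fin N) (Fin N) ℂ) (hH : H.IsHermitian) (hdet : H.det ≠ 0)
    (T : ℝ) (hT : 0 < T) :
    (∀ η : ℝ, 0 < η →
      IsUnit (H - ((η : ℂ) * Complex.I) • (1 : Matrix (Fin N) (Fin N) ℂ)))
    ∧ Real.log ‖H.det‖
      = -(∫ η in Set.Ioo (0 : ℝ) T,
            (Matrix.trace
              ((H - ((η : ℂ) * Complex.I) • (1 : Matrix (Fin N) (Fin N) ℂ))⁻¹)).im)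
        + Real.log ‖
            ((H - ((T : ℂ) * Complex.I) • (1 : Matrix (Fin N) (Fin N) ℂ)).det)‖ := by
  set U : Matrix (Fin N) (Fin N) ℂ := (hH.eigenvectorUnitary : Matrix (Fin N) (Fin N) ℂ) with hU
  set lam : Fin N → ℝ := hH.eigenvalues with hlamdef
  have hU1 : U * star U = 1 := Matrix.mem_unitaryGroup_iff.mp hH.eigenvectorUnitary.2
  have hU2 : star U * U = 1 := Matrix.mem_unitaryGroup_iff'.mp hH.eigenvectorUnitary.2
  -- conjugation identity
  have hconj : ∀ z : ℂ,
      H - z • (1 : Matrix (Fin N) (Fin N) ℂ)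
        = U * diagonal (fun j => (lam j : ℂ) - z) * star U := by
    intro z
    have hz : U * diagonal (fun _ : Fin N => z) * star U
        = z • (1 : Matrix (Fin N) (Fin N) ℂ) := by
      have hd : diagonal (fun _ : Fin N => z) = z • (1 : Matrix (Fin N) (Fin N) ℂ) := by
        ext i k
        by_cases h : i = k <;>
          simp [Matrix.diagonal_apply, Matrix.one_apply, h]
      rw [hd, Matrix.mul_smul, Matrix.mul_one, Matrix.smul_mul, hU1]
    conv_lhs => rw [hH.spectral_theorem, Unitary.conjStarAlgAut_apply, ← hz]
    rw [← Matrix.sub_mul, ← Matrix.mul_sub, Matrix.diagonal_sub]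
    rfl
  -- determinant identity
  have hdetz : ∀ z : ℂ,
      (H - z • (1 : Matrix (Fin N) (Fin N) ℂ)).det = ∏ j, ((lam j : ℂ) - z) := by
    intro z
    have hdu : (star U).det * U.det = 1 := by
      rw [← Matrix.det_mul, hU2, Matrix.det_one]
    rw [hconj z, Matrix.det_mul, Matrix.det_mul, Matrix.det_diagonal]
    calc U.det * (∏ j, ((lam j : ℂ) - z)) * (star U).det
        = ((star U).det * U.det) * ∏ j, ((lam j : ℂ) - z) := by ring
      _ = ∏ j, ((lam j : ℂ) - z) := by rw [hdu, one_mul]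
  -- eigenvalues nonzero
  have hprod : H.det = ∏ j, (lam j : ℂ) := hH.det_eq_prod_eigenvalues
  have hlam : ∀ j, lam j ≠ 0 := by
    intro j hj
    apply hdet
    rw [hprod]
    exact Finset.prod_eq_zero (Finset.mem_univ j) (by rw [hj]; simp)
  -- nonvanishing of lam j - η i
  have hne : ∀ (η : ℝ), η ≠ 0 → ∀ j, ((lam j : ℂ) - (η : ℂ) * Complex.I) ≠ 0 := by
    intro η hη j h
    apply hη
    have := congrArg Complex.im h
    simpa using this
  -- invertibility
  have hunit : ∀ η : ℝ, η ≠ 0 →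
      IsUnit (H - ((η : ℂ) * Complex.I) • (1 : Matrix (Fin N) (Fin N) ℂ)) := by
    intro η hη
    rw [Matrix.isUnit_iff_isUnit_det, isUnit_iff_ne_zero, hdetz]
    exact Finset.prod_ne_zero_iff.mpr fun j _ => hne η hη j
  refine ⟨fun η hη => hunit η hη.ne', ?_⟩
  -- trace of resolvent
  have htrace : ∀ (η : ℝ), η ≠ 0 →
      (Matrix.trace ((H - ((η : ℂ) * Complex.I) • (1 : Matrix (Fin N) (Fin N) ℂ))⁻¹)).im
        = ∑ j, η / (lam j ^ 2 + η ^ 2) := by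
    intro η hη
    set f : Fin N → ℂ := fun j => (lam j : ℂ) - (η : ℂ) * Complex.I with hf
    have hdetD : (diagonal f).det ≠ 0 := by
      rw [Matrix.det_diagonal]
      exact Finset.prod_ne_zero_iff.mpr fun j _ => hne η hη j
    have hinv : (H - ((η : ℂ) * Complex.I) • (1 : Matrix (Fin N) (Fin N) ℂ))⁻¹
        = U * (diagonal f)⁻¹ * star U := by
      apply Matrix.inv_eq_right_inv
      rw [hconj]
      calc (U * diagonal f * star U) * (U * (diagonal f)⁻¹ * star U)
          = U * (diagonal f * ((star U * U) * ((diagonal f)⁻¹ * star U))) := by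
            simp only [mul_assoc]
        _ = U * ((diagonal f * (diagonal f)⁻¹) * star U) := by
            rw [hU2, one_mul, mul_assoc]
        _ = 1 := by rw [Matrix.mul_nonsing_inv _ (isUnit_iff_ne_zero.mpr hdetD), one_mul, hU1]
    have hdinv : (diagonal f)⁻¹ = diagonal (fun j => (f j)⁻¹) := by
      apply Matrix.inv_eq_right_inv
      rw [Matrix.diagonal_mul_diagonal]
      have : (fun j => f j * (f j)⁻¹) = fun _ : Fin N => (1 : ℂ) := by
        funext j; exact mul_inv_cancel₀ (hne η hη j)
      rw [this, Matrix.diagonal_one]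
    rw [hinv, Matrix.trace_mul_cycle, hU2, one_mul, hdinv, Matrix.trace_diagonal]
    rw [Complex.im_sum]
    refine Finset.sum_congr rfl fun j _ => ?_
    have hzre : (f j).re = lam j := by simp [hf]
    have hzim : (f j).im = -η := by simp [hf]
    have hns : Complex.normSq (f j) = lam j ^ 2 + η ^ 2 := by
      rw [Complex.normSq_apply, hzre, hzim]; ring
    rw [Complex.inv_im, hns, hzim]
    ring
  -- integral computation
  have hint : (∫ η in Set.Ioo (0 : ℝ) T,
        (Matrix.trace
          ((H - ((η : ℂ) * Complex.I) • (1 : Matrix (Fin N) (Fin N) ℂ))⁻¹)).im)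
      = ∑ j, ((1/2) * Real.log (lam j ^ 2 + T ^ 2) - Real.log |lam j|) := by
    rw [MeasureTheory.setIntegral_congr_fun measurableSet_Ioo
      (g := fun η => ∑ j, η / (lam j ^ 2 + η ^ 2))
      (fun η hη => htrace η (ne_of_gt hη.1))]
    rw [MeasureTheory.integral_finset_sum _ (fun j _ =>
      ((scalar_cont (lam j) (hlam j)).integrableOn_Icc (a := 0) (b := T)).mono_set
        Set.Ioo_subset_Icc_self)]
    exact Finset.sum_congr rfl fun j _ => scalar_integral (lam j) T (hlam j) hT
  -- abs of determinants
  have habsH : Real.log ‖H.det‖ = ∑ j, Real.log |lam j| := by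
    rw [hprod, norm_prod, Real.log_prod (fun j _ => by
      simp only [Complex.norm_real, Real.norm_eq_abs]; exact abs_ne_zero.mpr (hlam j))]
    refine Finset.sum_congr rfl fun j _ => ?_
    rw [Complex.norm_real, Real.norm_eq_abs]
  have habsT : Real.log ‖
      ((H - ((T : ℂ) * Complex.I) • (1 : Matrix (Fin N) (Fin N) ℂ)).det)‖
      = ∑ j, (1/2) * Real.log (lam j ^ 2 + T ^ 2) := by
    rw [hdetz, norm_prod, Real.log_prod (fun j _ =>
      norm_ne_zero_iff.mpr (hne T hT.ne' j))]
    refine Finset.sum_congr rfl fun j _ => ?_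
    rw [Complex.norm_def, Real.log_sqrt (Complex.normSq_nonneg _), Complex.normSq_apply]
    have h1 : ((lam j : ℂ) - (T : ℂ) * Complex.I).re = lam j := by simp
    have h2 : ((lam j : ℂ) - (T : ℂ) * Complex.I).im = -T := by simp
    rw [h1, h2]
    ring_nf
  rw [habsH, hint, habsT, ← Finset.sum_neg_distrib, ← Finset.sum_add_distrib]
  refine Finset.sum_congr rfl fun j _ => ?_
  ring
end

section
/- Let N ≥ 1, let H ∈ Matrix N N ℂ be Hermitian with (real) eigenvalues λ₁, …, λ_N counted with multiplicity, and let η > 0. Then H − i·η·1 is invertible and the number of indices i ∈ {1,…,N} with |λ_i| ≤ η satisfies #{ i : |λ_i| ≤ η } ≤ 2·η·Im( tr( (H − i·η·1)⁻¹ ) ). -/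
open Matrix

/-- The deterministic estimate in the proof of Lemma 3.8 of the paper: the number of
eigenvalues of a Hermitian matrix `H` in `[−η, η]` is at most
`2η · Im tr (H − iη·1)⁻¹`. -/
theorem count_small_eigenvalues_le_resolvent
    (N : ℕ) (hN : 1 ≤ N)
    (H : Matrix (Fin N) (Fin N) ℂ) (hH : H.IsHermitian)
    (η : ℝ) (hη : 0 < η) :
    IsUnit (H - ((η : ℂ) * Complex.I) • (1 : Matrix (Fin N) (Fin N) ℂ))
    ∧ ((Finset.univ.filter fun i => |hH.eigenvalues i| ≤ η).card : ℝ)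
      ≤ 2 * η *
        (Matrix.trace
          ((H - ((η : ℂ) * Complex.I) • (1 : Matrix (Fin N) (Fin N) ℂ))⁻¹)).im := by
  set c : ℂ := (η : ℂ) * Complex.I with hc
  set U : Matrix (Fin N) (Fin N) ℂ := (hH.eigenvectorUnitary : Matrix (Fin N) (Fin N) ℂ)
  have hU : U * star U = 1 := (Matrix.mem_unitaryGroup_iff).mp hH.eigenvectorUnitary.2
  have hU' : star U * U = 1 := (Matrix.mem_unitaryGroup_iff').mp hH.eigenvectorUnitary.2
  set d : Fin N → ℂ := fun i => (hH.eigenvalues i : ℂ) - c with hd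
  have hdne : ∀ i, d i ≠ 0 := by
    intro i h
    have : (d i).im = 0 := by rw [h]; simp
    simp [hd, hc] at this
    exact absurd this (ne_of_gt hη)
  have hdecomp : H - c • (1 : Matrix (Fin N) (Fin N) ℂ) = U * diagonal d * star U := by
    have h1 : c • (1 : Matrix (Fin N) (Fin N) ℂ) = U * (c • 1) * star U := by
      rw [Matrix.mul_smul, Matrix.smul_mul, mul_one, hU]
    calc H - c • (1 : Matrix (Fin N) (Fin N) ℂ)
        = U * diagonal (RCLike.ofReal ∘ hH.eigenvalues) * star U - U * (c • 1) * star U := by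
          rw [← h1]; congr 1; exact hH.spectral_theorem
      _ = U * (diagonal (RCLike.ofReal ∘ hH.eigenvalues) - c • 1) * star U := by
          rw [Matrix.mul_sub, Matrix.sub_mul]
      _ = U * diagonal d * star U := by
          congr 1
          congr 1
          ext i j
          rcases eq_or_ne i j with h|h
          · subst h
            simp [hd, Matrix.sub_apply, Matrix.smul_apply, Matrix.one_apply,
              Matrix.diagonal_apply_eq]
          · simp [Matrix.sub_apply, Matrix.smul_apply, Matrix.one_apply_ne h,
              Matrix.diagonal_apply_ne _ h]
  have hinvmul : (U * diagonal d * star U) * (U * diagonal (fun i => (d i)⁻¹) * star U) = 1 := by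
    calc (U * diagonal d * star U) * (U * diagonal (fun i => (d i)⁻¹) * star U)
        = U * (diagonal d * (star U * U) * diagonal (fun i => (d i)⁻¹)) * star U := by
          ring_nf
          noncomm_ring
      _ = 1 := by
          rw [hU', mul_one, diagonal_mul_diagonal]
          have : (fun i => d i * (d i)⁻¹) = fun _ => (1 : ℂ) := by
            funext i; exact mul_inv_cancel₀ (hdne i)
          rw [this, diagonal_one, mul_one, hU]
  have hunit : IsUnit (H - c • (1 : Matrix (Fin N) (Fin N) ℂ)) := by
    rw [hdecomp]
    exact (Matrix.isUnit_iff_isUnit_det _).mpr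
      (IsUnit.of_mul_eq_one _ (by rw [← Matrix.det_mul, hinvmul, Matrix.det_one]))
  refine ⟨hunit, ?_⟩
  have hinv : (H - c • (1 : Matrix (Fin N) (Fin N) ℂ))⁻¹
      = U * diagonal (fun i => (d i)⁻¹) * star U := by
    rw [hdecomp]
    exact Matrix.inv_eq_right_inv hinvmul
  have htr : Matrix.trace ((H - c • (1 : Matrix (Fin N) (Fin N) ℂ))⁻¹)
      = ∑ i, (d i)⁻¹ := by
    rw [hinv, Matrix.trace_mul_cycle, hU', one_mul, Matrix.trace_diagonal]
  rw [htr]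
  have him : ∀ i, ((d i)⁻¹).im = η / ((hH.eigenvalues i)^2 + η^2) := by
    intro i
    rw [Complex.inv_im]
    have h1 : (d i).im = -η := by simp [hd, hc]
    have h2 : (d i).re = hH.eigenvalues i := by simp [hd, hc]
    rw [Complex.normSq_apply, h1, h2]
    ring
  rw [Complex.im_sum]
  simp only [him]
  have hle : ((Finset.univ.filter fun i => |hH.eigenvalues i| ≤ η).card : ℝ)
      ≤ ∑ i ∈ Finset.univ.filter fun i => |hH.eigenvalues i| ≤ η,
          2 * η * (η / ((hH.eigenvalues i)^2 + η^2)) := by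
    rw [Finset.card_eq_sum_ones, Nat.cast_sum]
    apply Finset.sum_le_sum
    intro i hi
    simp only [Finset.mem_filter] at hi
    have habs : (hH.eigenvalues i)^2 ≤ η^2 := by
      have := sq_abs (hH.eigenvalues i)
      nlinarith [hi.2, abs_nonneg (hH.eigenvalues i)]
    have hpos : 0 < (hH.eigenvalues i)^2 + η^2 := by positivity
    rw [Nat.cast_one]
    have heq : 2 * η * (η / ((hH.eigenvalues i)^2 + η^2))
        = (2 * η^2) / ((hH.eigenvalues i)^2 + η^2) := by
      field_simp
    rw [heq, le_div_iff₀ hpos]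
    nlinarith
  calc ((Finset.univ.filter fun i => |hH.eigenvalues i| ≤ η).card : ℝ)
      ≤ ∑ i ∈ Finset.univ.filter fun i => |hH.eigenvalues i| ≤ η,
          2 * η * (η / ((hH.eigenvalues i)^2 + η^2)) := hle
    _ ≤ ∑ i, 2 * η * (η / ((hH.eigenvalues i)^2 + η^2)) := by
        apply Finset.sum_le_sum_of_subset_of_nonneg (Finset.filter_subset _ _)
        intro i _ _
        positivity
    _ = 2 * η * ∑ i, η / ((hH.eigenvalues i)^2 + η^2) := by rw [Finset.mul_sum]
end

section
/- Let N ≥ 1, let H ∈ Matrix N N ℂ be Hermitian, let u ∈ ℂ^N with u ≠ 0 and H·u = 0, and let η > 0. Then H − i·η·1 is invertible and for every v ∈ ℂ^N, Im( ⟪v, (H − i·η·1)⁻¹·v⟫ ) ≥ |⟪v, u⟫|² / (η·‖u‖²). -/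
open Matrix

lemma herm_dot_im_zero (N : ℕ) (H : Matrix (Fin N) (Fin N) ℂ) (hH : H.IsHermitian)
    (w : Fin N → ℂ) : (star w ⬝ᵥ H.mulVec w).im = 0 := by
  have h : star (star w ⬝ᵥ H.mulVec w) = star w ⬝ᵥ H.mulVec w := by
    conv_rhs => rw [star_dotProduct, star_mulVec, hH.eq, ← dotProduct_mulVec]
  exact Complex.conj_eq_iff_im.mp h

lemma star_dot_self (N : ℕ) (w : Fin N → ℂ) :
    (star w ⬝ᵥ w) = ((∑ i, ‖w i‖ ^ 2 : ℝ) : ℂ) := by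
  push_cast
  simp [dotProduct, Complex.conj_mul', Complex.sq_norm]

lemma cauchy_schwarz_dot (N : ℕ) (w u : Fin N → ℂ) :
    ‖star w ⬝ᵥ u‖ ^ 2 ≤ (∑ i, ‖w i‖ ^ 2) * (∑ i, ‖u i‖ ^ 2) := by
  set x : EuclideanSpace ℂ (Fin N) := (WithLp.equiv 2 _).symm w
  set y : EuclideanSpace ℂ (Fin N) := (WithLp.equiv 2 _).symm u
  have h1 : ‖(inner ℂ x y : ℂ)‖ ≤ ‖x‖ * ‖y‖ := norm_inner_le_norm x y
  have hx : ‖x‖ ^ 2 = ∑ i, ‖w i‖ ^ 2 := by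
    rw [EuclideanSpace.norm_eq, Real.sq_sqrt (by positivity)]
    rfl
  have hy : ‖y‖ ^ 2 = ∑ i, ‖u i‖ ^ 2 := by
    rw [EuclideanSpace.norm_eq, Real.sq_sqrt (by positivity)]
    rfl
  have hxy : (inner ℂ x y : ℂ) = star w ⬝ᵥ u := by rw [dotProduct_comm]; rfl
  rw [← hxy, ← hx, ← hy]
  calc ‖(inner ℂ x y : ℂ)‖ ^ 2 ≤ (‖x‖ * ‖y‖) ^ 2 := by
        apply pow_le_pow_left₀ (norm_nonneg _) h1
    _ = ‖x‖ ^ 2 * ‖y‖ ^ 2 := by ring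

/-- The spectral-decomposition estimate (5.3) in the proof of Corollary 2.7 of the
paper: if `H` is Hermitian with `H·u = 0`, `u ≠ 0`, then for every `v`,
`Im ⟪v, (H − iη·1)⁻¹·v⟫ ≥ |⟪v,u⟫|²/(η·‖u‖²)`.  Here `⟪x,y⟫ = Σ_k conj(x_k)·y_k`. -/
theorem resolvent_delocalization_bound
    (N : ℕ) (hN : 1 ≤ N)
    (H : Matrix (Fin N) (Fin N) ℂ) (hH : H.IsHermitian)
    (u : Fin N → ℂ) (hu : u ≠ 0) (hHu : H.mulVec u = 0)
    (η : ℝ) (hη : 0 < η) :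
    IsUnit (H - ((η : ℂ) * Complex.I) • (1 : Matrix (Fin N) (Fin N) ℂ))
    ∧ ∀ v : Fin N → ℂ,
        ‖star v ⬝ᵥ u‖ ^ 2 / (η * ∑ i, ‖u i‖ ^ 2)
          ≤ (star v ⬝ᵥ
              (H - ((η : ℂ) * Complex.I) • (1 : Matrix (Fin N) (Fin N) ℂ))⁻¹.mulVec v).im := by
  set A : Matrix (Fin N) (Fin N) ℂ := H - ((η : ℂ) * Complex.I) • 1 with hA
  -- A *ᵥ w formula
  have hAv : ∀ w : Fin N → ℂ, A.mulVec w = H.mulVec w - ((η : ℂ) * Complex.I) • w := by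
    intro w
    rw [hA, sub_mulVec, smul_mulVec, one_mulVec]
  -- Aᴴ formula
  have hAconj : Aᴴ = H + ((η : ℂ) * Complex.I) • 1 := by
    rw [hA, conjTranspose_sub, hH.eq, conjTranspose_smul, conjTranspose_one]
    have : star ((η : ℂ) * Complex.I) = -((η : ℂ) * Complex.I) := by
      simp [Complex.ext_iff]
    rw [this, neg_smul, sub_neg_eq_add]
  have hAHv : ∀ w : Fin N → ℂ, Aᴴ.mulVec w = H.mulVec w + ((η : ℂ) * Complex.I) • w := by
    intro w
    rw [hAconj, add_mulVec, smul_mulVec, one_mulVec]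
  -- determinant nonzero
  have hdet : A.det ≠ 0 := by
    intro h0
    obtain ⟨w, hw0, hAw⟩ := Matrix.exists_mulVec_eq_zero_iff.mpr h0
    have him : (star w ⬝ᵥ A.mulVec w).im = 0 := by rw [hAw, dotProduct_zero]; rfl
    rw [hAv, dotProduct_sub, dotProduct_smul, smul_eq_mul, star_dot_self] at him
    have hHim := herm_dot_im_zero N H hH w
    have hsum : (∑ i, ‖w i‖ ^ 2 : ℝ) = 0 := by
      simp only [Complex.sub_im, hHim, Complex.mul_im, Complex.ofReal_re, Complex.ofReal_im,
        Complex.mul_re, Complex.I_re, Complex.I_im] at him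
      nlinarith [him]
    apply hw0
    funext i
    have hi : ‖w i‖ ^ 2 = 0 := by
      have := Finset.sum_eq_zero_iff_of_nonneg (fun j _ => by positivity :
        ∀ j ∈ Finset.univ, (0:ℝ) ≤ ‖w j‖ ^ 2) |>.mp hsum i (Finset.mem_univ i)
      exact this
    simpa using pow_eq_zero_iff (n := 2) (by norm_num) |>.mp hi
  have hunit : IsUnit A := (Matrix.isUnit_iff_isUnit_det A).mpr (isUnit_iff_ne_zero.mpr hdet)
  refine ⟨hunit, fun v => ?_⟩
  set w : Fin N → ℂ := A⁻¹.mulVec v with hw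
  have hv : A.mulVec w = v := by
    rw [hw, mulVec_mulVec, Matrix.mul_nonsing_inv A (isUnit_iff_ne_zero.mpr hdet), one_mulVec]
  -- ⟪v, w⟫ = ⟪w, Aᴴ w⟫
  have hdot : star v ⬝ᵥ w = star w ⬝ᵥ Aᴴ.mulVec w := by
    rw [← hv, star_mulVec, ← dotProduct_mulVec]
  set sw : ℝ := ∑ i, ‖w i‖ ^ 2 with hsw
  set su : ℝ := ∑ i, ‖u i‖ ^ 2 with hsu
  -- Im ⟪v, w⟫ = η·sw
  have him : (star v ⬝ᵥ w).im = η * sw := by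
    rw [hdot, hAHv, dotProduct_add, dotProduct_smul, smul_eq_mul, star_dot_self, ← hsw]
    simp [Complex.add_im, herm_dot_im_zero N H hH w, Complex.mul_im, Complex.mul_re]
  -- ⟪v, u⟫ = iη ⟪w, u⟫
  have hvu : star v ⬝ᵥ u = ((η : ℂ) * Complex.I) * (star w ⬝ᵥ u) := by
    rw [← hv, star_mulVec, ← dotProduct_mulVec, hAHv, hHu, zero_add, dotProduct_smul,
      smul_eq_mul]
  have hnvu : ‖star v ⬝ᵥ u‖ = η * ‖star w ⬝ᵥ u‖ := by
    rw [hvu, norm_mul, norm_mul, Complex.norm_I, Complex.norm_real, Real.norm_eq_abs,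
      abs_of_pos hη, mul_one]
  -- positivity of su
  have hsu_pos : 0 < su := by
    rcases (Function.ne_iff).mp hu with ⟨i, hi⟩
    have h1 : 0 < ‖u i‖ := norm_pos_iff.mpr hi
    have h2 : 0 < ‖u i‖ ^ 2 := by positivity
    rw [hsu]
    exact lt_of_lt_of_le h2 (Finset.single_le_sum
      (f := fun j => ‖u j‖ ^ 2) (fun j _ => by positivity) (Finset.mem_univ i))
  have hcs : ‖star w ⬝ᵥ u‖ ^ 2 ≤ sw * su := by
    rw [hsw, hsu]; exact cauchy_schwarz_dot N w u
  set c : ℝ := ‖star w ⬝ᵥ u‖ with hc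
  have hc_nn : 0 ≤ c := norm_nonneg _
  clear_value c
  clear_value w
  clear_value sw su
  rw [him, hnvu, div_le_iff₀ (mul_pos hη hsu_pos)]
  calc (η * c) ^ 2 = η ^ 2 * c ^ 2 := by ring
    _ ≤ η ^ 2 * (sw * su) := mul_le_mul_of_nonneg_left hcs (by positivity)
    _ = η * sw * (η * su) := by ring
end
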